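/- arXiv:0706.1570 — 12 statements merged into one kernel-verified Lean document; each statement's English description precedes it below -/
import Mathlib

section
/- Let g ≥ 1 be an integer and let F₁,…,F_g and G₁,…,G_g be lifts of orientation-preserving circle homeomorphisms. Suppose the product of commutators [F₁,G₁] ∘ [F₂,G₂] ∘ … ∘ [F_g,G_g] equals the integer translation T₋ₑ : x ↦ x − e for some integer e. Then |e| ≤ 2g − 1. (The Milnor–Wood inequality for flat circle bundles over a closed orientable surface of genus g, as proved in Section 2.) -/
open scoped commutatorElement

open CircleDeg1Lift

local notation "τ" => CircleDeg1Lift.translationNumber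

private lemma mw_unit_continuous (f : CircleDeg1Liftˣ) : Continuous (f : CircleDeg1Lift) :=
  (CircleDeg1Lift.continuous_iff_surjective _).mpr
    (CircleDeg1Lift.isUnit_iff_bijective.mp f.isUnit).surjective

private lemma mw_tau_mul_le (h₁ : CircleDeg1Lift) (h₂ : CircleDeg1Liftˣ) (m : ℤ)
    (hm : τ h₁ + τ (h₂ : CircleDeg1Lift) ≤ (m : ℝ)) :
    τ (h₁ * (h₂ : CircleDeg1Lift)) ≤ (m : ℝ) + 1 := by
  obtain ⟨x, hx⟩ := (h₂ : CircleDeg1Lift).exists_eq_add_translationNumber (mw_unit_continuous h₂)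
  have h1 := h₁.map_lt_add_translationNumber_add_one ((h₂ : CircleDeg1Lift) x)
  have hle : (h₁ * (h₂ : CircleDeg1Lift)) x ≤ x + ((m + 1 : ℤ) : ℝ) := by
    rw [CircleDeg1Lift.mul_apply, hx]
    rw [hx] at h1
    push_cast
    linarith
  have := (h₁ * (h₂ : CircleDeg1Lift)).translationNumber_le_of_le_add_int hle
  push_cast at this
  linarith

private lemma mw_tau_comm_le (f g : CircleDeg1Liftˣ) :
    τ ((⁅f, g⁆ : CircleDeg1Liftˣ) : CircleDeg1Lift) ≤ 1 := by
  have hconj : τ ((f : CircleDeg1Lift) * g * ↑f⁻¹) = τ (g : CircleDeg1Lift) :=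
    CircleDeg1Lift.translationNumber_conj_eq f g
  have hinv : τ ((g⁻¹ : CircleDeg1Liftˣ) : CircleDeg1Lift) = - τ (g : CircleDeg1Lift) :=
    CircleDeg1Lift.translationNumber_units_inv g
  have h0 : τ ((f : CircleDeg1Lift) * g * ↑f⁻¹) + τ ((g⁻¹ : CircleDeg1Liftˣ) : CircleDeg1Lift)
      ≤ ((0 : ℤ) : ℝ) := by rw [hconj, hinv]; simp
  have hmain : τ (((f : CircleDeg1Lift) * g * ↑f⁻¹) * ((g⁻¹ : CircleDeg1Liftˣ) : CircleDeg1Lift))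
      ≤ ((0 : ℤ) : ℝ) + 1 := mw_tau_mul_le _ g⁻¹ 0 h0
  have hc : ((⁅f, g⁆ : CircleDeg1Liftˣ) : CircleDeg1Lift)
      = ((f : CircleDeg1Lift) * g * ↑f⁻¹) * ((g⁻¹ : CircleDeg1Liftˣ) : CircleDeg1Lift) := by
    rw [commutatorElement_def, Units.val_mul, Units.val_mul, Units.val_mul]
  rw [hc]
  simpa using hmain

private lemma mw_tau_prod_le (l : List CircleDeg1Liftˣ) (hne : l ≠ [])
    (hl : ∀ c ∈ l, τ (c : CircleDeg1Lift) ≤ 1) :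
    τ ((l.prod : CircleDeg1Liftˣ) : CircleDeg1Lift) ≤ 2 * (l.length : ℝ) - 1 := by
  induction l with
  | nil => exact absurd rfl hne
  | cons a t ih =>
    rcases eq_or_ne t [] with rfl | ht
    · simp only [List.prod_cons, List.prod_nil, mul_one, List.length_cons, List.length_nil]
      have := hl a List.mem_cons_self
      push_cast
      linarith
    · have htau := ih ht (fun c hc => hl c (List.mem_cons_of_mem _ hc))
      have ha := hl a List.mem_cons_self
      have hsum : τ (a : CircleDeg1Lift) + τ ((t.prod : CircleDeg1Liftˣ) : CircleDeg1Lift)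
          ≤ ((2 * t.length : ℤ) : ℝ) := by push_cast; linarith
      have hmain : τ ((a : CircleDeg1Lift) * ((t.prod : CircleDeg1Liftˣ) : CircleDeg1Lift))
          ≤ ((2 * t.length : ℤ) : ℝ) + 1 := mw_tau_mul_le _ t.prod (2 * t.length) hsum
      rw [List.prod_cons, Units.val_mul]
      simp only [List.length_cons]
      push_cast at hmain ⊢
      linarith


/-- **Milnor–Wood inequality** (Section 2). If `F₁,…,F_g` and `G₁,…,G_g` are lifts of
orientation-preserving circle homeomorphisms (units of `CircleDeg1Lift`) whose product of
commutators `[F₁,G₁] ∘ ⋯ ∘ [F_g,G_g]` is the translation `x ↦ x - e` by an integer `e`,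
then `|e| ≤ 2 * g - 1`. -/
theorem milnor_wood (g : ℕ) (hg : 1 ≤ g) (F G : Fin g → CircleDeg1Liftˣ) (e : ℤ)
    (h : (List.ofFn (fun i : Fin g => ⁅F i, G i⁆)).prod
        = CircleDeg1Lift.translate (Multiplicative.ofAdd (-(e : ℝ)))) :
    |e| ≤ 2 * (g : ℤ) - 1 := by
  set l : List CircleDeg1Liftˣ := List.ofFn (fun i : Fin g => ⁅F i, G i⁆) with hldef
  have hlen : l.length = g := List.length_ofFn
  have hne : l ≠ [] := by
    intro h0
    rw [h0] at hlen
    simp at hlen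
    omega
  have hbound : ∀ c ∈ l, τ (c : CircleDeg1Lift) ≤ 1 := by
    intro c hc
    rw [hldef, List.mem_ofFn] at hc
    obtain ⟨i, rfl⟩ := hc
    exact mw_tau_comm_le _ _
  have htau1 : τ ((l.prod : CircleDeg1Liftˣ) : CircleDeg1Lift) = -(e : ℝ) := by
    rw [h]
    exact CircleDeg1Lift.translationNumber_translate _
  have h1 : -(e : ℝ) ≤ 2 * (g : ℝ) - 1 := by
    have := mw_tau_prod_le l hne hbound
    rw [htau1, hlen] at this
    exact this
  -- inverse direction
  set l2 : List CircleDeg1Liftˣ := (l.map fun x => x⁻¹).reverse with hl2def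
  have hl2prod : l2.prod = l.prod⁻¹ := (List.prod_inv_reverse l).symm
  have hl2len : l2.length = g := by simp [hl2def, hlen]
  have hl2ne : l2 ≠ [] := by
    intro h0
    rw [h0] at hl2len
    simp at hl2len
    omega
  have hbound2 : ∀ c ∈ l2, τ (c : CircleDeg1Lift) ≤ 1 := by
    intro c hc
    rw [hl2def, List.mem_reverse, List.mem_map] at hc
    obtain ⟨d, hd, rfl⟩ := hc
    rw [hldef, List.mem_ofFn] at hd
    obtain ⟨i, rfl⟩ := hd
    rw [commutatorElement_inv]
    exact mw_tau_comm_le _ _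
  have htau2 : τ ((l2.prod : CircleDeg1Liftˣ) : CircleDeg1Lift) = (e : ℝ) := by
    rw [hl2prod]
    rw [CircleDeg1Lift.translationNumber_units_inv, htau1, neg_neg]
  have h2 : (e : ℝ) ≤ 2 * (g : ℝ) - 1 := by
    have := mw_tau_prod_le l2 hl2ne hbound2
    rw [htau2, hl2len] at this
    exact this
  rw [abs_le]
  constructor
  · have : -(2 * (g : ℝ) - 1) ≤ (e : ℝ) := by linarith
    exact_mod_cast this
  · exact_mod_cast h2
end

section
/- Let F and G be lifts of orientation-preserving circle homeomorphisms such that the commutator [F,G] = F ∘ G ∘ F⁻¹ ∘ G⁻¹ equals the integer translation T₋ₑ : x ↦ x − e for some integer e. Then e = 0. (A flat circle bundle over the torus has Euler number 0, the genus-one case of the Milnor–Wood inequality obtained by passing to finite covers.) -/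
open scoped commutatorElement

open CircleDeg1Lift

/-- Genus-one case of the Milnor–Wood inequality (Section 2): if the commutator
`[F,G] = F ∘ G ∘ F⁻¹ ∘ G⁻¹` of two lifts of orientation-preserving circle homeomorphisms
equals the integer translation `x ↦ x - e`, then `e = 0` (a flat circle bundle over the
torus has Euler number `0`). -/
theorem euler_number_torus_zero (F G : CircleDeg1Liftˣ) (e : ℤ)
    (h : ⁅F, G⁆ = CircleDeg1Lift.translate (Multiplicative.ofAdd (-(e : ℝ)))) :
    e = 0 := by
  set T : CircleDeg1Liftˣ := CircleDeg1Lift.translate (Multiplicative.ofAdd (-(e : ℝ)))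
  have h1 : F * G * F⁻¹ = T * G := by
    have := h
    rw [commutatorElement_def] at this
    calc F * G * F⁻¹ = (F * G * F⁻¹ * G⁻¹) * G := by group
    _ = T * G := by rw [this]
  have hcomm : Commute (T : CircleDeg1Lift) (G : CircleDeg1Lift) := by
    rw [CircleDeg1Lift.commute_iff_commute]
    intro x
    have := (G : CircleDeg1Lift).commute_int_add (-e) x
    simpa [T, CircleDeg1Lift.translate_apply, CircleDeg1Lift.translate_inv_apply] using this.symm
  have hτ : translationNumber ((F * G * F⁻¹ : CircleDeg1Liftˣ) : CircleDeg1Lift)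
      = translationNumber (G : CircleDeg1Lift) := by
    have := CircleDeg1Lift.translationNumber_conj_eq F (G : CircleDeg1Lift)
    simp only [Units.val_mul] at this ⊢; exact this
  rw [h1] at hτ
  have h2 : translationNumber ((T * G : CircleDeg1Liftˣ) : CircleDeg1Lift)
      = -(e : ℝ) + translationNumber (G : CircleDeg1Lift) := by
    rw [Units.val_mul, CircleDeg1Lift.translationNumber_mul_of_commute hcomm]
    simp [T, CircleDeg1Lift.translationNumber_translate]
  rw [h2] at hτ
  have : (e : ℝ) = 0 := by linarith
  exact_mod_cast this
end

section
/- Let F be a lift of an orientation-preserving circle homeomorphism, i.e. a strictly increasing bijection F : ℝ → ℝ with F(x + 1) = F(x) + 1, inducing the orientation-preserving homeomorphism of the real projective line that sends the line spanned by u(θ) = (cos πθ, sin πθ) to the line spanned by u(F(θ)). Then there exists a 2×2 real matrix M with det M > 0 such that u(θ)ᵀ · M · u(F(θ)) ≠ 0 for all θ ∈ ℝ. (Lemma 5: in the projective model of anti-de Sitter space, there is a spacelike plane of ℝP³ disjoint from the graph, on the quadric AD = BC, of an orientation-preserving homeomorphism between the two rulings.) -/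
open Real

/-- The parametrization of the real projective line: `u θ` spans the line with angle `π θ`. -/
noncomputable def uRP1 (θ : ℝ) : Fin 2 → ℝ := ![Real.cos (Real.pi * θ), Real.sin (Real.pi * θ)]

/-- **Lemma 5.** For every lift `F` of an orientation-preserving circle homeomorphism there is a
`2 × 2` real matrix `M` with `det M > 0` (a spacelike plane of `ℝP³` in the projective model of
anti-de Sitter space) such that `u(θ)ᵀ M u(F θ) ≠ 0` for all `θ`, i.e. the plane is disjoint
from the graph of the induced homeomorphism on the quadric `AD = BC`. -/
theorem spacelike_plane_disjoint_from_graph (F : CircleDeg1Liftˣ) :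
    ∃ M : Matrix (Fin 2) (Fin 2) ℝ, 0 < M.det ∧
      ∀ θ : ℝ, dotProduct (uRP1 θ) (M.mulVec (uRP1 ((F : CircleDeg1Lift) θ))) ≠ 0 := by
  set f : ℝ → ℝ := ⇑(F : CircleDeg1Lift) with hf
  have hsm : StrictMono f := (CircleDeg1Lift.toOrderIso F).strictMono
  have hcont : Continuous f := (CircleDeg1Lift.toOrderIso F).continuous
  have hadd : ∀ x : ℝ, f (x + 1) = f x + 1 := (F : CircleDeg1Lift).map_add_one
  have hDcont : Continuous (fun θ => f θ - θ) := hcont.sub continuous_id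
  have hDper : Function.Periodic (fun θ => f θ - θ) 1 := fun x => by simp [hadd x]
  -- oscillation on [0,1] is < 1
  have key : ∀ x ∈ Set.Icc (0:ℝ) 1, ∀ y ∈ Set.Icc (0:ℝ) 1,
      (f x - x) - (f y - y) < 1 := by
    intro x hx y hy
    rcases le_or_gt y x with h | h
    · rcases lt_or_eq_of_le (show x ≤ y + 1 by linarith [hx.2, hy.1]) with h1 | h1
      · have : f x < f (y + 1) := hsm h1
        rw [hadd y] at this
        linarith
      · have : f x = f y + 1 := by rw [h1, hadd y]
        linarith
    · rcases lt_or_eq_of_le (show (-1:ℝ) ≤ x - y by linarith [hx.1, hy.2]) with h1 | h1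
      · have : f x < f y := hsm h
        linarith
      · have hy1 : y = x + 1 := by linarith
        have : f y = f x + 1 := by rw [hy1, hadd x]
        linarith
  obtain ⟨a, ha, hmax⟩ := isCompact_Icc.exists_isMaxOn (Set.nonempty_Icc.2 zero_le_one)
    hDcont.continuousOn
  obtain ⟨b, hb, hmin⟩ := isCompact_Icc.exists_isMinOn (Set.nonempty_Icc.2 zero_le_one)
    hDcont.continuousOn
  have hosc : (f a - a) - (f b - b) < 1 := key a ha b hb
  obtain ⟨c, hbound⟩ : ∃ c : ℝ, ∀ θ : ℝ, |f θ - θ - c| < 1 / 2 := by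
    refine ⟨((f a - a) + (f b - b)) / 2, fun θ => ?_⟩
    have hfract : f (Int.fract θ) - Int.fract θ = f θ - θ := by
      have h := hDper.sub_int_mul_eq (x := θ) ⌊θ⌋
      rw [mul_one] at h
      rw [Int.fract]
      exact h
    have hmem : Int.fract θ ∈ Set.Icc (0:ℝ) 1 :=
      ⟨Int.fract_nonneg θ, (Int.fract_lt_one θ).le⟩
    have h1 : f θ - θ ≤ f a - a := hfract ▸ hmax hmem
    have h2 : f b - b ≤ f θ - θ := hfract ▸ hmin hmem
    rw [abs_lt]
    constructor <;> linarith
  -- the rotation matrix by angle π c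
  refine ⟨!![Real.cos (Real.pi * c), Real.sin (Real.pi * c);
           -Real.sin (Real.pi * c), Real.cos (Real.pi * c)], ?_, ?_⟩
  · rw [Matrix.det_fin_two_of]
    nlinarith [Real.sin_sq_add_cos_sq (Real.pi * c)]
  · intro θ
    have hval : dotProduct (uRP1 θ)
        ((!![Real.cos (Real.pi * c), Real.sin (Real.pi * c);
           -Real.sin (Real.pi * c), Real.cos (Real.pi * c)] : Matrix (Fin 2) (Fin 2) ℝ).mulVec
          (uRP1 (f θ))) = Real.cos (Real.pi * (f θ - θ - c)) := by
      simp only [uRP1, dotProduct, Matrix.mulVec, Fin.sum_univ_two, Matrix.of_apply,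
        Matrix.cons_val', Matrix.cons_val_zero, Matrix.cons_val_one, Matrix.head_cons,
        Matrix.empty_val', Matrix.cons_val_fin_one, Matrix.head_fin_const]
      have : Real.pi * (f θ - θ - c) = (Real.pi * f θ - Real.pi * c) - Real.pi * θ := by ring
      rw [this, Real.cos_sub, Real.cos_sub, Real.sin_sub]
      ring
    rw [hf] at hval
    rw [hval]
    have habs : |Real.pi * (f θ - θ - c)| < Real.pi / 2 := by
      rw [abs_mul, abs_of_pos Real.pi_pos]
      have := hbound θ
      nlinarith [Real.pi_pos]
    have hpos : 0 < Real.cos (Real.pi * (f θ - θ - c)) := by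
      apply Real.cos_pos_of_mem_Ioo
      rw [abs_lt] at habs
      constructor <;> linarith [habs.1, habs.2]
    exact ne_of_gt hpos
end

section
/- Let S be a strictly spacelike entire graph in 3-dimensional Minkowski space. Then the domain of dependence D(S) is convex; moreover, for every q ∉ D(S) there exist a future-directed null vector n and c ∈ ℝ such that B(x, n) < c for all x ∈ D(S) while B(q, n) ≥ c. In particular D(S) is an intersection of open half-spaces whose boundaries are null planes. (Proposition 11(a) and its proof.) -/
noncomputable section

/-- The Minkowski bilinear form `B(v,w) = v₁w₁ + v₂w₂ − v₃w₃` on `ℝ³`. -/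
def mB (v w : Fin 3 → ℝ) : ℝ := v 0 * w 0 + v 1 * w 1 - v 2 * w 2

/-- The Minkowski quadratic form `Q(v) = B(v,v)`. -/
def mQ (v : Fin 3 → ℝ) : ℝ := mB v v

/-- `v` is future-directed timelike: `Q v < 0` and `v₃ > 0`. -/
def FutureTimelike (v : Fin 3 → ℝ) : Prop := mQ v < 0 ∧ 0 < v 2

/-- `v` is future-directed causal: `Q v ≤ 0` and `v₃ > 0`. -/
def FutureCausal (v : Fin 3 → ℝ) : Prop := mQ v ≤ 0 ∧ 0 < v 2

/-- `v` is future-directed null: `Q v = 0` and `v₃ > 0`. -/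
def FutureNull (v : Fin 3 → ℝ) : Prop := mQ v = 0 ∧ 0 < v 2

/-- `S ⊆ ℝ³` is a strictly spacelike entire graph: the graph of a function
`h : ℝ² → ℝ` with `|h p − h q| < ‖p − q‖` (Euclidean distance) for `p ≠ q`. -/
def IsStrictlySpacelikeGraph (S : Set (Fin 3 → ℝ)) : Prop :=
  ∃ h : EuclideanSpace ℝ (Fin 2) → ℝ,
    (∀ p q : EuclideanSpace ℝ (Fin 2), p ≠ q → |h p - h q| < dist p q) ∧
    S = Set.range fun p : EuclideanSpace ℝ (Fin 2) => ![p 0, p 1, h p]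

/-- The future `I⁺(S)` of a set `S` in Minkowski space. -/
def IPlus (S : Set (Fin 3 → ℝ)) : Set (Fin 3 → ℝ) :=
  {x | ∃ s ∈ S, FutureTimelike (x - s)}

/-- The domain of dependence
`D(S) = S ∪ I⁺(S) ∪ {x : every future-directed causal ray from x meets S}`. -/
def DOD (S : Set (Fin 3 → ℝ)) : Set (Fin 3 → ℝ) :=
  S ∪ IPlus S ∪
    {x | ∀ v : Fin 3 → ℝ, FutureCausal v → ∃ t : ℝ, 0 ≤ t ∧ x + t • v ∈ S}

/-- The affine plane through `p` with (Minkowski) normal `n` supports `D` at `p`: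
`D` lies in one of the two closed half-spaces bounded by `{x : B (x − p) n = 0}`. -/
def SupportingAt (D : Set (Fin 3 → ℝ)) (p n : Fin 3 → ℝ) : Prop :=
  (∀ x ∈ D, mB (x - p) n ≤ 0) ∨ (∀ x ∈ D, 0 ≤ mB (x - p) n)

end

noncomputable section

namespace DODAux

abbrev E2 := EuclideanSpace ℝ (Fin 2)

def mk2 (a b : ℝ) : E2 := WithLp.toLp 2 ![a, b]

@[simp] lemma mk2_zero (a b : ℝ) : mk2 a b 0 = a := rfl
@[simp] lemma mk2_one (a b : ℝ) : mk2 a b 1 = b := rfl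

lemma dist_eq (p q : E2) : dist p q = Real.sqrt ((p 0 - q 0)^2 + (p 1 - q 1)^2) := by
  rw [EuclideanSpace.dist_eq]
  simp [Fin.sum_univ_two, Real.dist_eq, sq_abs]

variable {h : E2 → ℝ}

/-- non-strict Lipschitz bound. -/
lemma lip (hh : ∀ p q : E2, p ≠ q → |h p - h q| < dist p q) (p q : E2) :
    |h p - h q| ≤ dist p q := by
  rcases eq_or_ne p q with rfl | hne
  · simp
  · exact (hh p q hne).le

lemma hcont (hh : ∀ p q : E2, p ≠ q → |h p - h q| < dist p q) : Continuous h := by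
  have : LipschitzWith 1 h := by
    apply LipschitzWith.of_dist_le_mul
    intro p q
    rw [Real.dist_eq]
    simpa using lip hh p q
  exact this.continuous

/-- the graph set -/
def Sg (h : E2 → ℝ) : Set (Fin 3 → ℝ) :=
  Set.range fun p : E2 => ![p 0, p 1, h p]

/-- On the graph, the null linear functional value can always be beaten. -/
lemma beat (hh : ∀ p q : E2, p ≠ q → |h p - h q| < dist p q)
    {a b : ℝ} (hab : a^2 + b^2 = 1) (q : E2) :
    ∃ p : E2, q 0 * a + q 1 * b - h q < p 0 * a + p 1 * b - h p := by
  refine ⟨mk2 (q 0 + a) (q 1 + b), ?_⟩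
  have hne : mk2 (q 0 + a) (q 1 + b) ≠ q := by
    intro he
    have h0 : q 0 + a = q 0 := congrArg (fun z : E2 => z 0) he
    have h1 : q 1 + b = q 1 := congrArg (fun z : E2 => z 1) he
    have ha : a = 0 := by linarith
    have hb : b = 0 := by linarith
    rw [ha, hb] at hab; norm_num at hab
  have hd : dist (mk2 (q 0 + a) (q 1 + b)) q = 1 := by
    rw [dist_eq]
    simp only [mk2_zero, mk2_one]
    rw [show q 0 + a - q 0 = a by ring, show q 1 + b - q 1 = b by ring, hab]
    exact Real.sqrt_one
  have := hh _ q hne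
  rw [hd] at this
  have h2 : h (mk2 (q 0 + a) (q 1 + b)) - h q < 1 := (abs_lt.mp this).2
  simp only [mk2_zero, mk2_one]
  nlinarith [hab, h2]

/-- Every point of the domain of dependence lies strictly inside each null half-space. -/
lemma lemA (hh : ∀ p q : E2, p ≠ q → |h p - h q| < dist p q)
    {x : Fin 3 → ℝ} (hx : x ∈ DOD (Sg h)) {a b : ℝ} (hab : a^2 + b^2 = 1) :
    ∃ p : E2, x 0 * a + x 1 * b - x 2 < p 0 * a + p 1 * b - h p := by
  rcases hx with (hx | hx) | hx
  · obtain ⟨q, rfl⟩ := hx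
    simpa using beat hh hab q
  · obtain ⟨s, hs, hQ, hpos⟩ := hx
    obtain ⟨q, rfl⟩ := hs
    simp only [mQ, mB, Pi.sub_apply] at hQ hpos
    simp only [Matrix.cons_val_zero, Matrix.cons_val_one, Matrix.head_cons,
      Matrix.cons_val_two, Matrix.tail_cons] at hQ hpos
    refine ⟨q, ?_⟩
    nlinarith [sq_nonneg ((x 0 - q 0) * b - (x 1 - q 1) * a), hQ, hpos,
      sq_nonneg ((x 0 - q 0) * a + (x 1 - q 1) * b - (x 2 - h q))]
  · obtain ⟨t, ht, hmem⟩ := hx ![a, b, 1] ⟨by simp [mQ, mB]; nlinarith [hab], (by show (0:ℝ) < 1; norm_num)⟩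
    obtain ⟨q, hq⟩ := hmem
    have e0 : q 0 = x 0 + t * a := by
      have := congrFun hq 0; simpa using this
    have e1 : q 1 = x 1 + t * b := by
      have := congrFun hq 1; simpa using this
    have e2 : h q = x 2 + t := by
      have := congrFun hq 2; simpa using this
    obtain ⟨p, hp⟩ := beat hh hab q
    refine ⟨p, ?_⟩
    have key : x 0 * a + x 1 * b - x 2 = q 0 * a + q 1 * b - h q := by
      rw [e0, e1, e2]; nlinarith [hab]
    linarith [hp, key.ge, key.le]

set_option maxHeartbeats 1000000 in
/-- Conversely, a point inside all the null half-spaces lies in the domain of dependence. -/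
lemma lemB (hh : ∀ p q : E2, p ≠ q → |h p - h q| < dist p q)
    {x : Fin 3 → ℝ}
    (hgood : ∀ a b : ℝ, a^2 + b^2 = 1 →
      ∃ p : E2, x 0 * a + x 1 * b - x 2 < p 0 * a + p 1 * b - h p) :
    x ∈ DOD (Sg h) := by
  set xb : E2 := mk2 (x 0) (x 1) with hxb
  rcases lt_trichotomy (x 2) (h xb) with hlt | heq | hgt
  · -- below the graph: every future causal ray meets the graph
    right
    intro v hv
    obtain ⟨hQ, hv2⟩ := hv
    simp only [mQ, mB] at hQ
    set vb : E2 := mk2 (v 0) (v 1) with hvb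
    set g : ℝ → ℝ := fun t => x 2 + t * v 2 - h (xb + t • vb) with hg
    have hgc : Continuous g := by
      apply Continuous.sub
      · exact continuous_const.add (continuous_id.mul continuous_const)
      · exact (hcont hh).comp (continuous_const.add (continuous_id.smul continuous_const))
    have hg0 : g 0 < 0 := by
      simp only [hg, zero_smul, add_zero, zero_mul]
      linarith
    have key : ∃ T : ℝ, 0 ≤ T ∧ 0 ≤ g T := by
      have hvbnorm : ‖vb‖ = Real.sqrt (v 0 ^ 2 + v 1 ^ 2) := by
        rw [EuclideanSpace.norm_eq]
        norm_num [Fin.sum_univ_two, sq_abs, hvb]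
      set m : ℝ := Real.sqrt (v 0 ^ 2 + v 1 ^ 2) with hm
      have hm0 : 0 ≤ m := Real.sqrt_nonneg _
      have hmle : m ≤ v 2 := by
        rw [hm]
        have : v 0 ^ 2 + v 1 ^ 2 ≤ v 2 ^ 2 := by nlinarith [hQ]
        calc Real.sqrt (v 0 ^ 2 + v 1 ^ 2) ≤ Real.sqrt (v 2 ^ 2) := Real.sqrt_le_sqrt this
          _ = v 2 := by rw [Real.sqrt_sq hv2.le]
      rcases eq_or_lt_of_le hmle with hmeq | hmlt
      · -- null direction: use the half-space hypothesis
        set a : ℝ := v 0 / v 2 with ha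
        set b : ℝ := v 1 / v 2 with hb
        have hv2ne : v 2 ≠ 0 := ne_of_gt hv2
        have hmsq : m ^ 2 = v 0 ^ 2 + v 1 ^ 2 := Real.sq_sqrt (by positivity)
        have hab : a ^ 2 + b ^ 2 = 1 := by
          rw [ha, hb]
          field_simp
          nlinarith [hmsq, hmeq]
        obtain ⟨p, hp⟩ := hgood a b hab
        by_contra hcon
        push_neg at hcon
        -- hcon : ∀ T, 0 ≤ T → g T < 0
        have hge : x 2 + ((p 0 - x 0) * a + (p 1 - x 1) * b) ≤ h p := by
          apply le_of_forall_pos_le_add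
          intro ε hε
          set A : ℝ := (p 0 - x 0) * a + (p 1 - x 1) * b with hA
          set W : ℝ := (p 0 - x 0) ^ 2 + (p 1 - x 1) ^ 2 with hW
          set τ : ℝ := max (max A 0) (W / (2 * ε)) with hτ
          have hτA : A ≤ τ := le_trans (le_max_left _ _) (le_max_left _ _)
          have hτ0 : 0 ≤ τ := le_trans (le_max_right _ _) (le_max_left _ _)
          have hτW : W ≤ 2 * ε * τ := by
            have h1 : W / (2 * ε) ≤ τ := le_max_right _ _
            have h2 : 0 < 2 * ε := by linarith
            calc W = (W / (2 * ε)) * (2 * ε) := by field_simp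
              _ ≤ τ * (2 * ε) := by apply mul_le_mul_of_nonneg_right h1 h2.le
              _ = 2 * ε * τ := by ring
          set t : ℝ := τ / v 2 with hT
          have ht0 : 0 ≤ t := div_nonneg hτ0 hv2.le
          have hgt := hcon t ht0
          simp only [hg] at hgt
          have htv2 : t * v 2 = τ := by rw [hT]; field_simp
          have hy0 : (xb + t • vb) 0 = x 0 + τ * a := by
            show x 0 + t * v 0 = x 0 + τ * a
            rw [hT, ha]; field_simp
          have hy1 : (xb + t • vb) 1 = x 1 + τ * b := by
            show x 1 + t * v 1 = x 1 + τ * b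
            rw [hT, hb]; field_simp
          have hyval : x 2 + τ < h (xb + t • vb) := by
            rw [htv2] at hgt; linarith
          have hdist : dist p (xb + t • vb) ≤ τ - A + ε := by
            rw [dist_eq, hy0, hy1]
            have hRnn : 0 ≤ τ - A + ε := by linarith
            have hsq : (p 0 - (x 0 + τ * a)) ^ 2 + (p 1 - (x 1 + τ * b)) ^ 2
                ≤ (τ - A + ε) ^ 2 := by
              have hτW' := hτW
              rw [hW] at hτW'
              rw [hA]
              nlinarith [sq_nonneg ((p 0 - x 0) * a + (p 1 - x 1) * b - ε),
                sq_nonneg τ, hab, hτW']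
            calc Real.sqrt ((p 0 - (x 0 + τ * a)) ^ 2 + (p 1 - (x 1 + τ * b)) ^ 2)
                ≤ Real.sqrt ((τ - A + ε) ^ 2) := Real.sqrt_le_sqrt hsq
              _ = τ - A + ε := Real.sqrt_sq hRnn
          have hlipp := lip hh p (xb + t • vb)
          have h6 := (abs_le.mp hlipp).1
          linarith [hyval, hdist, h6]
        nlinarith [hge, hp]
      · -- timelike direction: explicit time of impact
        set T : ℝ := (h xb - x 2) / (v 2 - m) with hTdef
        have hden : 0 < v 2 - m := by linarith
        have hT0 : 0 ≤ T := div_nonneg (by linarith) hden.le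
        refine ⟨T, hT0, ?_⟩
        have hlipT := lip hh (xb + T • vb) xb
        have hd : dist (xb + T • vb) xb = T * m := by
          have : (xb + T • vb) - xb = T • vb := by abel
          rw [dist_eq_norm, this, norm_smul, hvbnorm]
          simp [abs_of_nonneg hT0, hm]
        rw [hd] at hlipT
        have h1 : h (xb + T • vb) - h xb ≤ T * m := (abs_le.mp hlipT).2
        have hTm : T * (v 2 - m) = h xb - x 2 := by
          rw [hTdef]; field_simp
        show 0 ≤ x 2 + T * v 2 - h (xb + T • vb)
        nlinarith [h1, hTm]
    obtain ⟨T, hT0, hgT⟩ := key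
    have h0mem : (0:ℝ) ∈ Set.Icc (g 0) (g T) := ⟨hg0.le, hgT⟩
    obtain ⟨t, ht, hgt⟩ := intermediate_value_Icc hT0 hgc.continuousOn h0mem
    refine ⟨t, ht.1, ⟨xb + t • vb, ?_⟩⟩
    funext i
    fin_cases i
    · show (xb + t • vb) 0 = x 0 + t * v 0
      rfl
    · show (xb + t • vb) 1 = x 1 + t * v 1
      rfl
    · show h (xb + t • vb) = x 2 + t * v 2
      simp only [hg] at hgt
      linarith [hgt.le, hgt.ge]
  · -- on the graph
    left; left
    refine ⟨xb, ?_⟩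
    funext i
    fin_cases i
    · rfl
    · rfl
    · show h xb = x 2; exact heq.symm
  · -- above the graph
    left; right
    refine ⟨![xb 0, xb 1, h xb], ⟨xb, rfl⟩, ?_, ?_⟩
    · simp only [mQ, mB, Pi.sub_apply]
      simp only [Matrix.cons_val_zero, Matrix.cons_val_one, Matrix.head_cons,
        Matrix.cons_val_two, Matrix.tail_cons, mk2_zero, mk2_one]
      simp only [show xb 0 = x 0 from rfl, show xb 1 = x 1 from rfl, sub_self,
        mul_zero, zero_mul, add_zero, zero_add, zero_sub]
      nlinarith [hgt]
    · simp only [Pi.sub_apply]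
      simp only [Matrix.cons_val_two, Matrix.tail_cons, Matrix.head_cons]
      linarith

end DODAux

end

/-- **Proposition 11(a).** The domain of dependence of a strictly spacelike entire graph is
convex; moreover every point outside it is separated from it by an open half-space whose
boundary is a null plane: for `q ∉ D(S)` there are a future-directed null vector `n` and
`c ∈ ℝ` with `B(x,n) < c` on `D(S)` and `B(q,n) ≥ c`. -/
theorem domain_of_dependence_convex (S : Set (Fin 3 → ℝ))
    (hS : IsStrictlySpacelikeGraph S) :
    Convex ℝ (DOD S) ∧
      ∀ q : Fin 3 → ℝ, q ∉ DOD S →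
        ∃ n : Fin 3 → ℝ, ∃ c : ℝ, FutureNull n ∧
          (∀ x ∈ DOD S, mB x n < c) ∧ c ≤ mB q n := by
  obtain ⟨h, hh, rfl⟩ := hS
  have hSg : (Set.range fun p : EuclideanSpace ℝ (Fin 2) => ![p 0, p 1, h p]) = DODAux.Sg h := rfl
  rw [hSg]
  constructor
  · -- convexity
    intro x hx y hy α β hα hβ hαβ
    rcases eq_or_lt_of_le hα with hα0 | hα'
    · have hβ1 : β = 1 := by linarith
      rw [← hα0, hβ1]; simpa using hy
    rcases eq_or_lt_of_le hβ with hβ0 | hβ'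
    · have hα1 : α = 1 := by linarith
      rw [← hβ0, hα1]; simpa using hx
    apply DODAux.lemB hh
    intro a b hab
    obtain ⟨px, hpx⟩ := DODAux.lemA hh hx hab
    obtain ⟨py, hpy⟩ := DODAux.lemA hh hy hab
    set rx : ℝ := px 0 * a + px 1 * b - h px with hrx
    set ry : ℝ := py 0 * a + py 1 * b - h py with hry
    have e0 : (α • x + β • y) 0 = α * x 0 + β * y 0 := rfl
    have e1 : (α • x + β • y) 1 = α * x 1 + β * y 1 := rfl
    have e2 : (α • x + β • y) 2 = α * x 2 + β * y 2 := rfl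
    rcases le_total rx ry with hc | hc
    · refine ⟨py, ?_⟩
      rw [e0, e1, e2, ← hry]
      have h1 : α * (x 0 * a + x 1 * b - x 2) < α * ry :=
        mul_lt_mul_of_pos_left (hpx.trans_le hc) hα'
      have h2 : β * (y 0 * a + y 1 * b - y 2) < β * ry :=
        mul_lt_mul_of_pos_left hpy hβ'
      have h3 : α * ry + β * ry = ry := by rw [← add_mul, hαβ, one_mul]
      nlinarith [h1, h2, h3]
    · refine ⟨px, ?_⟩
      rw [e0, e1, e2, ← hrx]
      have h1 : α * (x 0 * a + x 1 * b - x 2) < α * rx :=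
        mul_lt_mul_of_pos_left hpx hα'
      have h2 : β * (y 0 * a + y 1 * b - y 2) < β * rx :=
        mul_lt_mul_of_pos_left (hpy.trans_le hc) hβ'
      have h3 : α * rx + β * rx = rx := by rw [← add_mul, hαβ, one_mul]
      nlinarith [h1, h2, h3]
  · -- separation
    intro q hq
    have hng : ¬ ∀ a b : ℝ, a^2 + b^2 = 1 →
        ∃ p : DODAux.E2, q 0 * a + q 1 * b - q 2 < p 0 * a + p 1 * b - h p :=
      fun hgood => hq (DODAux.lemB hh hgood)
    push_neg at hng
    obtain ⟨a, b, hab, hall⟩ := hng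
    refine ⟨![a, b, 1], mB q ![a, b, 1], ⟨?_, ?_⟩, ?_, le_refl _⟩
    · simp [mQ, mB]; nlinarith [hab]
    · show (0:ℝ) < 1; norm_num
    · intro x hx
      obtain ⟨p, hp⟩ := DODAux.lemA hh hx hab
      have := hall p
      simp only [mB, Matrix.cons_val_zero, Matrix.cons_val_one, Matrix.head_cons,
        Matrix.cons_val_two, Matrix.tail_cons, mul_one]
      linarith [hp, this]
end

section
/- Let S be a strictly spacelike entire graph in 3-dimensional Minkowski space with D(S) ≠ ℝ³, and let p be a point of the frontier of D(S). Then: (i) there exists at least one null supporting plane of D(S) at p; and (ii) every supporting plane of D(S) at p is null or spacelike, i.e. if n ≠ 0 and the plane {x : B(x − p, n) = 0} is a supporting plane of D(S) at p, then Q(n) ≤ 0. (Proposition 11(c),(d).) -/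
noncomputable section
namespace P11

abbrev E2 : Type := EuclideanSpace ℝ (Fin 2)

def px (x : Fin 3 → ℝ) : E2 := WithLp.toLp 2 (fun i : Fin 2 => x i.castSucc)

@[simp] lemma px_zero (x : Fin 3 → ℝ) : px x 0 = x 0 := rfl
@[simp] lemma px_one (x : Fin 3 → ℝ) : px x 1 = x 1 := rfl

def Sgr (h : E2 → ℝ) : Set (Fin 3 → ℝ) := Set.range fun p : E2 => ![p 0, p 1, h p]

lemma norm_sq_E2 (v : E2) : ‖v‖ ^ 2 = v 0 ^ 2 + v 1 ^ 2 := by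
  rw [EuclideanSpace.norm_eq, Real.sq_sqrt (by positivity)]
  simp [Fin.sum_univ_two, sq_abs]

lemma inner_E2 (v w : E2) : (inner ℝ v w : ℝ) = v 0 * w 0 + v 1 * w 1 := by
  simp [PiLp.inner_apply, RCLike.inner_apply, Fin.sum_univ_two, mul_comm]

lemma dist_sq_E2 (p q : E2) : dist p q ^ 2 = (p 0 - q 0)^2 + (p 1 - q 1)^2 := by
  rw [EuclideanSpace.dist_eq, Real.sq_sqrt (by positivity)]
  simp [Fin.sum_univ_two, Real.dist_eq, sq_abs]

variable {h : E2 → ℝ}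

lemma mem_Sgr {x : Fin 3 → ℝ} : x ∈ Sgr h ↔ x 2 = h (px x) := by
  constructor
  · rintro ⟨q, rfl⟩
    have : px ![q 0, q 1, h q] = q := by
      ext i; fin_cases i <;> rfl
    simp [this]
  · intro hx
    refine ⟨px x, ?_⟩
    funext i; fin_cases i <;> simp [hx.symm] <;> rfl

lemma hlip (hst : ∀ p q : E2, p ≠ q → |h p - h q| < dist p q) :
    ∀ p q : E2, |h p - h q| ≤ dist p q := by
  intro p q
  rcases eq_or_ne p q with rfl | hne
  · simp
  · exact (hst p q hne).le

lemma hcont (hl : ∀ p q : E2, |h p - h q| ≤ dist p q) : Continuous h := by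
  have : LipschitzWith 1 h := by
    apply LipschitzWith.of_dist_le_mul
    intro p q
    simp only [NNReal.coe_one, one_mul, Real.dist_eq]
    exact hl p q
  exact this.continuous

/-- membership in `IPlus` of the graph forces being strictly above the graph. -/
lemma iplus_above (hl : ∀ p q : E2, |h p - h q| ≤ dist p q) {x : Fin 3 → ℝ}
    (hx : x ∈ IPlus (Sgr h)) : h (px x) < x 2 := by
  obtain ⟨s, hs, hts⟩ := hx
  obtain ⟨q, rfl⟩ := hs
  obtain ⟨hQ, hpos⟩ := hts
  have e0 : (x - ![q 0, q 1, h q]) 0 = x 0 - q 0 := rfl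
  have e1 : (x - ![q 0, q 1, h q]) 1 = x 1 - q 1 := rfl
  have e2 : (x - ![q 0, q 1, h q]) 2 = x 2 - h q := rfl
  rw [e2] at hpos
  have hQ' : (x 0 - q 0)^2 + (x 1 - q 1)^2 < (x 2 - h q)^2 := by
    simp only [mQ, mB, e0, e1, e2] at hQ; nlinarith
  have hd : (h (px x) - h q)^2 ≤ (x 0 - q 0)^2 + (x 1 - q 1)^2 := by
    have := hl (px x) q
    have h2 : (h (px x) - h q)^2 ≤ dist (px x) q ^ 2 := by
      rw [← sq_abs]
      exact pow_le_pow_left₀ (abs_nonneg _) this 2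
    rwa [dist_sq_E2, px_zero, px_one] at h2
  nlinarith

/-- being strictly above the graph puts you in `IPlus`. -/
lemma above_iplus {x : Fin 3 → ℝ} (hx : h (px x) < x 2) : x ∈ IPlus (Sgr h) := by
  refine ⟨![px x 0, px x 1, h (px x)], ⟨px x, rfl⟩, ?_, ?_⟩
  · have e0 : (x - ![px x 0, px x 1, h (px x)]) 0 = 0 := by simp [px]
    have e1 : (x - ![px x 0, px x 1, h (px x)]) 1 = 0 := by simp [px]
    have e2 : (x - ![px x 0, px x 1, h (px x)]) 2 = x 2 - h (px x) := rfl
    simp only [mQ, mB, e0, e1, e2]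
    nlinarith
  · have e2 : (x - ![px x 0, px x 1, h (px x)]) 2 = x 2 - h (px x) := rfl
    rw [e2]; linarith

lemma px_add_smul (x v : Fin 3 → ℝ) (t : ℝ) : px (x + t • v) = px x + t • px v := by
  ext i; fin_cases i <;> rfl

/-- every point of the domain of dependence has, for each unit `w`, a point on the
`w`-null ray above the graph. -/
lemma D_ray (hl : ∀ p q : E2, |h p - h q| ≤ dist p q) {x : Fin 3 → ℝ}
    (hx : x ∈ DOD (Sgr h)) (w : E2) (hw : ‖w‖ = 1) :
    ∃ t : ℝ, 0 ≤ t ∧ h (px x + t • w) ≤ x 2 + t := by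
  rcases hx with (hx | hx) | hx
  · exact ⟨0, le_refl 0, by simp [(mem_Sgr.mp hx).symm]⟩
  · exact ⟨0, le_refl 0, by simpa using (iplus_above hl hx).le⟩
  · set v : Fin 3 → ℝ := ![w 0, w 1, 1] with hv
    have hfc : FutureCausal v := by
      constructor
      · have e0 : v 0 = w 0 := rfl
        have e1 : v 1 = w 1 := rfl
        have e2 : v 2 = 1 := rfl
        have : mQ v = ‖w‖^2 - 1 := by
          simp only [mQ, mB, e0, e1, e2]
          rw [norm_sq_E2]; ring
        rw [this, hw]; norm_num
      · exact zero_lt_one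
    obtain ⟨t, ht0, hts⟩ := hx v hfc
    refine ⟨t, ht0, ?_⟩
    have h2 : (x + t • v) 2 = x 2 + t := by simp [hv]
    have hpx : px (x + t • v) = px x + t • w := by
      rw [px_add_smul]
      congr 1
      ext i; fin_cases i <;> rfl
    have := mem_Sgr.mp hts
    rw [h2, hpx] at this
    exact this.ge

/-- a null ray weakly below the graph spans a null plane weakly below the graph. -/
lemma ray_to_plane (hl : ∀ p q : E2, |h p - h q| ≤ dist p q)
    {w : E2} (hw : ‖w‖ = 1) {q₀ : E2} {z₀ : ℝ}
    (hray : ∀ t : ℝ, 0 ≤ t → z₀ + t ≤ h (q₀ + t • w)) (q : E2) :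
    z₀ + (inner ℝ (q - q₀) w : ℝ) ≤ h q := by
  set d : E2 := q - q₀ with hd
  set c : ℝ := inner ℝ d w with hc
  by_contra hcon
  push_neg at hcon
  set ε : ℝ := (z₀ + c - h q) / 2 with hε
  have hεpos : 0 < ε := by simp only [hε]; linarith
  set ρ2 : ℝ := ‖d‖^2 - c^2 with hρ2
  have hρ2nn : 0 ≤ ρ2 := by
    have := abs_real_inner_le_norm d w
    rw [hw, mul_one] at this
    have : c^2 ≤ ‖d‖^2 := by
      rw [← sq_abs c]
      exact pow_le_pow_left₀ (abs_nonneg _) this 2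
    simp only [hρ2]; linarith
  set a : ℝ := ρ2 / (2*ε) + |c| with ha
  have hann : 0 ≤ a := by positivity
  set t : ℝ := c + a with htdef
  have ht0 : 0 ≤ t := by
    have h1 := neg_abs_le c
    have h2 : 0 ≤ ρ2 / (2*ε) := div_nonneg hρ2nn (by linarith)
    simp only [htdef, ha]
    linarith
  have hray' := hray t ht0
  have hnorm : ‖d - t • w‖ ≤ a + ε := by
    have hsq : ‖d - t • w‖^2 = ρ2 + a^2 := by
      rw [norm_sub_sq_real, real_inner_smul_right, norm_smul, hw]
      simp only [Real.norm_eq_abs, mul_one]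
      rw [sq_abs]
      simp only [hρ2, htdef, ← hc]
      ring
    have h2a : ρ2 ≤ 2 * a * ε := by
      have : ρ2 / (2*ε) ≤ a := by simp only [ha]; nlinarith [abs_nonneg c]
      calc ρ2 = (ρ2 / (2*ε)) * (2*ε) := by field_simp
        _ ≤ a * (2*ε) := by nlinarith
        _ = 2 * a * ε := by ring
    have hB : ‖d - t • w‖^2 ≤ (a + ε)^2 := by rw [hsq]; nlinarith
    nlinarith [norm_nonneg (d - t • w), sq_nonneg (‖d - t • w‖ - (a + ε)), sq_nonneg (‖d - t • w‖ + (a + ε))]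
  have hlq : h (q₀ + t • w) - dist q (q₀ + t • w) ≤ h q := by
    have := hl q (q₀ + t • w)
    have := abs_le.mp this
    linarith [this.1]
  have hdist : dist q (q₀ + t • w) = ‖d - t • w‖ := by
    rw [dist_eq_norm]
    congr 1
    simp only [hd]; abel
  rw [hdist] at hlq
  have : z₀ + t - (a + ε) ≤ h q := by
    have h1 : z₀ + t - ‖d - t • w‖ ≤ h q := by linarith
    linarith [hnorm]
  simp only [htdef] at this
  have : z₀ + c - ε ≤ h q := by linarith
  simp only [hε] at this
  linarith


lemma not_D_ray (hl : ∀ p q : E2, |h p - h q| ≤ dist p q) {x : Fin 3 → ℝ}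
    (hx : x ∉ DOD (Sgr h)) :
    ∃ w : E2, ‖w‖ = 1 ∧ ∀ t : ℝ, 0 ≤ t → x 2 + t < h (px x + t • w) := by
  have hcont' : Continuous h := hcont hl
  simp only [DOD, Set.mem_union, Set.mem_setOf_eq, not_or, not_forall] at hx
  obtain ⟨⟨hxS, hxI⟩, v, hv⟩ := hx
  push_neg at hv
  obtain ⟨hfc, hmiss⟩ := hv
  -- x is strictly below the graph
  have hbelow : x 2 < h (px x) := by
    have h1 : ¬ h (px x) < x 2 := fun hc => hxI (above_iplus hc)
    have h2 : x 2 ≠ h (px x) := fun hc => hxS (mem_Sgr.mpr hc)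
    cases lt_or_eq_of_le (not_lt.mp h1) with
    | inl hlt => exact hlt
    | inr heq => exact absurd heq h2
  obtain ⟨hQ, hs⟩ := hfc
  set s : ℝ := v 2 with hsdef
  set u : E2 := px v with hudef
  have hus : ‖u‖ ≤ s := by
    have hQ' : u 0 ^2 + u 1 ^2 ≤ s^2 := by
      simp only [mQ, mB] at hQ
      have e0 : u 0 = v 0 := rfl
      have e1 : u 1 = v 1 := rfl
      rw [e0, e1]; nlinarith
    have := norm_sq_E2 u
    nlinarith [norm_nonneg u]
  -- strictness along the ray
  have hstrict : ∀ t : ℝ, 0 ≤ t → x 2 + t * s < h (px x + t • u) := by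
    intro t1 ht1
    by_contra hcon
    push_neg at hcon
    set φ : ℝ → ℝ := fun t => h (px x + t • u) - (x 2 + t * s) with hφ
    have hφc : Continuous φ := by
      apply Continuous.sub
      · exact hcont'.comp (by continuity)
      · continuity
    have hφ0 : 0 < φ 0 := by simp [hφ]; linarith
    have hφ1 : φ t1 ≤ 0 := by simp only [hφ]; linarith
    have : (0:ℝ) ∈ Set.Icc (φ t1) (φ 0) := ⟨hφ1, hφ0.le⟩
    have hsub := intermediate_value_Icc' ht1 hφc.continuousOn
    obtain ⟨t2, ht2mem, ht2⟩ := hsub this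
    have hmem : x + t2 • v ∈ Sgr h := by
      apply mem_Sgr.mpr
      have h2 : (x + t2 • v) 2 = x 2 + t2 * s := by simp [hsdef]
      have hpx : px (x + t2 • v) = px x + t2 • u := px_add_smul x v t2
      rw [h2, hpx]
      simp only [hφ] at ht2
      linarith
    exact hmiss t2 ht2mem.1 hmem
  -- the spatial speed must be exactly s
  have huseq : ‖u‖ = s := by
    by_contra hne
    have hlt : ‖u‖ < s := lt_of_le_of_ne hus hne
    set T : ℝ := max 0 ((h (px x) - x 2) / (s - ‖u‖)) + 1 with hT
    have hT0 : 0 ≤ T := by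
      have := le_max_left (0:ℝ) ((h (px x) - x 2) / (s - ‖u‖))
      simp only [hT]; linarith
    have hb := hstrict T hT0
    have hlipT : h (px x + T • u) ≤ h (px x) + T * ‖u‖ := by
      have := hl (px x + T • u) (px x)
      have habs := (abs_le.mp this).2
      have hdist : dist (px x + T • u) (px x) = T * ‖u‖ := by
        rw [dist_eq_norm]
        have : px x + T • u - px x = T • u := by abel
        rw [this, norm_smul, Real.norm_eq_abs, abs_of_nonneg hT0]
      linarith [habs, hdist ▸ habs]
    have hTbig : (h (px x) - x 2) / (s - ‖u‖) < T := by
      have := le_max_right (0:ℝ) ((h (px x) - x 2) / (s - ‖u‖))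
      simp only [hT]; linarith
    have hspos : 0 < s - ‖u‖ := by linarith
    have : (h (px x) - x 2) < T * (s - ‖u‖) := by
      rw [div_lt_iff₀ hspos] at hTbig; linarith
    nlinarith
  have hspos : 0 < s := hs
  refine ⟨s⁻¹ • u, ?_, ?_⟩
  · rw [norm_smul, Real.norm_eq_abs, abs_of_pos (inv_pos.mpr hspos), huseq]
    field_simp
  · intro t ht
    have h1 := hstrict (t / s) (div_nonneg ht hspos.le)
    have h2 : t / s * s = t := by field_simp
    have h3 : (t / s) • u = t • (s⁻¹ • u) := by
      rw [smul_smul, div_eq_mul_inv]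
    rw [h2, h3] at h1
    exact h1

lemma frontier_ray (hl : ∀ p q : E2, |h p - h q| ≤ dist p q) {p : Fin 3 → ℝ}
    (hp : p ∈ closure ((DOD (Sgr h))ᶜ)) :
    ∃ w : E2, ‖w‖ = 1 ∧ ∀ t : ℝ, 0 ≤ t → p 2 + t ≤ h (px p + t • w) := by
  obtain ⟨x, hxn, hxt⟩ := mem_closure_iff_seq_limit.mp hp
  have key : ∀ n : ℕ, ∃ w : E2, ‖w‖ = 1 ∧ ∀ t : ℝ, 0 ≤ t →
      x n 2 + t < h (px (x n) + t • w) := fun n => not_D_ray hl (hxn n)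
  choose ws hws1 hws2 using key
  have hsphere : ∀ n, ws n ∈ Metric.sphere (0 : E2) 1 := by
    intro n; rw [mem_sphere_zero_iff_norm]; exact hws1 n
  obtain ⟨w, hwmem, φ, hφmono, hφtend⟩ :=
    (isCompact_sphere (0 : E2) 1).tendsto_subseq hsphere
  refine ⟨w, mem_sphere_zero_iff_norm.mp hwmem, ?_⟩
  intro t ht
  have hxφ : Filter.Tendsto (fun n => x (φ n)) Filter.atTop (nhds p) :=
    hxt.comp hφmono.tendsto_atTop
  have hL : Filter.Tendsto (fun n => x (φ n) 2 + t) Filter.atTop (nhds (p 2 + t)) := by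
    exact (((continuous_apply (2 : Fin 3)).tendsto p).comp hxφ).add tendsto_const_nhds
  have hpxcont : Continuous px := by
    apply (PiLp.continuous_toLp 2 _).comp
    apply continuous_pi
    intro i
    exact continuous_apply _
  have hR : Filter.Tendsto (fun n => h (px (x (φ n)) + t • ws (φ n))) Filter.atTop
      (nhds (h (px p + t • w))) := by
    apply ((hcont hl).tendsto _).comp
    exact ((hpxcont.tendsto p).comp hxφ).add (hφtend.const_smul t)
  exact le_of_tendsto_of_tendsto hL hR
    (Filter.Eventually.of_forall fun n => (hws2 (φ n) t ht).le)

end P11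
end


/-- **Proposition 11(c),(d).** -/
theorem boundary_supporting_planes (S : Set (Fin 3 → ℝ))
    (hS : IsStrictlySpacelikeGraph S) (hne : DOD S ≠ Set.univ)
    (p : Fin 3 → ℝ) (hp : p ∈ frontier (DOD S)) :
    (∃ n : Fin 3 → ℝ, n ≠ 0 ∧ mQ n = 0 ∧ SupportingAt (DOD S) p n) ∧
      (∀ n : Fin 3 → ℝ, n ≠ 0 → SupportingAt (DOD S) p n → mQ n ≤ 0) := by
  obtain ⟨h, hst, hSeq⟩ := hS
  have hSg : S = P11.Sgr h := hSeq
  subst hSg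
  have hl := P11.hlip hst
  constructor
  · -- existence of a null supporting plane
    rw [frontier_eq_closure_inter_closure] at hp
    obtain ⟨w, hw, hray⟩ := P11.frontier_ray hl hp.2
    refine ⟨![w 0, w 1, 1], ?_, ?_, ?_⟩
    · intro h0
      have := congrFun h0 2
      simp at this
    · have e0 : (![w 0, w 1, 1] : Fin 3 → ℝ) 0 = w 0 := rfl
      have e1 : (![w 0, w 1, 1] : Fin 3 → ℝ) 1 = w 1 := rfl
      have e2 : (![w 0, w 1, 1] : Fin 3 → ℝ) 2 = 1 := rfl
      simp only [mQ, mB, e0, e1, e2]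
      have := P11.norm_sq_E2 w
      rw [hw] at this
      nlinarith
    · left
      intro x hx
      obtain ⟨t, ht, hle⟩ := P11.D_ray hl hx w hw
      have hplane := P11.ray_to_plane hl hw hray (P11.px x + t • w)
      have hsplit : P11.px x + t • w - P11.px p = (P11.px x - P11.px p) + t • w := by
        abel
      rw [hsplit, inner_add_left, real_inner_smul_left, real_inner_self_eq_norm_sq, hw] at hplane
      have hinner : (inner ℝ (P11.px x - P11.px p) w : ℝ)
          = (x 0 - p 0) * w 0 + (x 1 - p 1) * w 1 := by
        rw [P11.inner_E2]
        rfl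
      rw [hinner] at hplane
      have e0 : (x - p) 0 = x 0 - p 0 := rfl
      have e1 : (x - p) 1 = x 1 - p 1 := rfl
      have e2 : (x - p) 2 = x 2 - p 2 := rfl
      have f0 : (![w 0, w 1, 1] : Fin 3 → ℝ) 0 = w 0 := rfl
      have f1 : (![w 0, w 1, 1] : Fin 3 → ℝ) 1 = w 1 := rfl
      have f2 : (![w 0, w 1, 1] : Fin 3 → ℝ) 2 = 1 := rfl
      simp only [mB, e0, e1, e2, f0, f1, f2]
      nlinarith [hle, hplane]
  · -- every supporting plane is null or spacelike
    intro n hn0 hsup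
    by_contra hq
    push_neg at hq
    set ν : P11.E2 := P11.px n with hν
    have hν0 : ν 0 = n 0 := rfl
    have hν1 : ν 1 = n 1 := rfl
    have hR2 : ‖ν‖^2 = n 0^2 + n 1^2 := by rw [P11.norm_sq_E2, hν0, hν1]
    have hQpos : n 2^2 < ‖ν‖^2 := by
      simp only [mQ, mB] at hq
      rw [hR2]; nlinarith
    have hRpos : |n 2| < ‖ν‖ := by
      nlinarith [norm_nonneg ν, abs_nonneg (n 2), sq_abs (n 2)]
    set C : ℝ := p 0 * n 0 + p 1 * n 1 - p 2 * n 2 with hC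
    -- graph points over the line t • ν
    have hmem : ∀ t : ℝ, (![(t • ν) 0, (t • ν) 1, h (t • ν)] : Fin 3 → ℝ) ∈ DOD (P11.Sgr h) := by
      intro t
      exact Set.mem_union_left _ (Set.mem_union_left _ ⟨t • ν, rfl⟩)
    have hval : ∀ t : ℝ, mB (![(t • ν) 0, (t • ν) 1, h (t • ν)] - p) n
        = t * ‖ν‖^2 - h (t • ν) * n 2 - C := by
      intro t
      have e0 : (![(t • ν) 0, (t • ν) 1, h (t • ν)] - p) 0 = t * n 0 - p 0 := rfl
      have e1 : (![(t • ν) 0, (t • ν) 1, h (t • ν)] - p) 1 = t * n 1 - p 1 := rfl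
      have e2 : (![(t • ν) 0, (t • ν) 1, h (t • ν)] - p) 2 = h (t • ν) - p 2 := rfl
      simp only [mB, e0, e1, e2, hR2, hC]
      ring
    have hbnd : ∀ t : ℝ, |h (t • ν) * n 2| ≤ (|h 0| + |t| * ‖ν‖) * |n 2| := by
      intro t
      rw [abs_mul]
      apply mul_le_mul_of_nonneg_right _ (abs_nonneg (n 2))
      have h1 : |h (t • ν) - h 0| ≤ dist (t • ν) (0 : P11.E2) := hl _ _
      rw [dist_zero_right, norm_smul, Real.norm_eq_abs] at h1
      calc |h (t • ν)| ≤ |h (t • ν) - h 0| + |h 0| := by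
            have := abs_sub_abs_le_abs_sub (h (t • ν)) (h 0)
            linarith [abs_nonneg (h 0), abs_abs (h 0)]
        _ ≤ |h 0| + |t| * ‖ν‖ := by linarith
    set den : ℝ := ‖ν‖ * (‖ν‖ - |n 2|) with hden
    have hdenpos : 0 < den := by
      have : 0 ≤ |n 2| := abs_nonneg _
      have hν' : 0 < ‖ν‖ := lt_of_le_of_lt (abs_nonneg _) hRpos
      simp only [hden]
      nlinarith
    set A : ℝ := |h 0| * |n 2| + |C| + 1 with hA
    have hApos : 0 < A := by positivity
    set T : ℝ := A / den with hT
    have hTpos : 0 < T := div_pos hApos hdenpos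
    have hTden : T * den = A := by
      rw [hT, div_mul_cancel₀ _ (ne_of_gt hdenpos)]
    rcases hsup with hsup | hsup
    · have h1 := hsup _ (hmem T)
      rw [hval T] at h1
      have h2 := (abs_le.mp (hbnd T)).2
      rw [abs_of_pos hTpos] at h2
      have h3 := (neg_abs_le C)
      simp only [hden] at hTden
      nlinarith [le_abs_self C]
    · have h1 := hsup _ (hmem (-T))
      rw [hval (-T)] at h1
      have h2 := (abs_le.mp (hbnd (-T))).1
      rw [abs_neg, abs_of_pos hTpos] at h2
      simp only [hden] at hTden
      nlinarith [neg_abs_le C, le_abs_self C]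
end

section
/- Let S be a strictly spacelike entire graph in 3-dimensional Minkowski space with D(S) ≠ ℝ³, let X be the frontier of D(S), let p ∈ X, and let v be a future-directed null vector. Then the null ray {p + t v : t ≥ 0} is contained in X if and only if the null plane {x : B(x − p, v) = 0} is a supporting plane of D(S) at p. (Proposition 11(e): null rays contained in the boundary through p correspond one-to-one to null supporting planes at p.) -/
noncomputable section NullRaysAux

def pr (x : Fin 3 → ℝ) : EuclideanSpace ℝ (Fin 2) := WithLp.toLp 2 ![x 0, x 1]

lemma pr_add (x w : Fin 3 → ℝ) : pr (x + w) = pr x + pr w := by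
  ext i; fin_cases i <;> rfl

lemma pr_add_smul (x z : Fin 3 → ℝ) (t : ℝ) : pr (x + t • z) = pr x + t • pr z := by
  ext i; fin_cases i <;> rfl

variable {S : Set (Fin 3 → ℝ)} {h : EuclideanSpace ℝ (Fin 2) → ℝ}

/-- non-strict Lipschitz bound -/
lemma hlip_of_strict (hst : ∀ p q : EuclideanSpace ℝ (Fin 2), p ≠ q → |h p - h q| < dist p q) :
    ∀ p q : EuclideanSpace ℝ (Fin 2), h p ≤ h q + ‖p - q‖ := by
  intro p q
  by_cases hpq : p = q
  · simp [hpq]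
  · have := (hst p q hpq).le
    rw [dist_eq_norm] at this
    have := (abs_le.mp this).2
    linarith

lemma hcont (hst : ∀ p q : EuclideanSpace ℝ (Fin 2), p ≠ q → |h p - h q| < dist p q) :
    Continuous h := by
  have : LipschitzWith 1 h := by
    apply LipschitzWith.of_dist_le_mul
    intro p q
    rw [Real.dist_eq, dist_eq_norm]
    have h1 := hlip_of_strict hst p q
    have h2 := hlip_of_strict hst q p
    rw [← norm_sub_rev] at h2
    rw [abs_le, NNReal.coe_one, one_mul]
    constructor <;> linarith
  exact this.continuous

lemma mem_S_iff (hSeq : S = Set.range fun p : EuclideanSpace ℝ (Fin 2) => ![p 0, p 1, h p])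
    (x : Fin 3 → ℝ) : x ∈ S ↔ x 2 = h (pr x) := by
  subst hSeq
  constructor
  · rintro ⟨q, rfl⟩
    have hq : pr ![q 0, q 1, h q] = q := by ext i; fin_cases i <;> rfl
    rw [hq]; rfl
  · intro hx
    refine ⟨pr x, ?_⟩
    funext i; fin_cases i
    · rfl
    · rfl
    · exact hx.symm

lemma norm_pr_le (w : Fin 3 → ℝ) (hw : FutureCausal w) : ‖pr w‖ ≤ w 2 := by
  have h1 : ‖pr w‖ = Real.sqrt (w 0 ^ 2 + w 1 ^ 2) := by
    rw [EuclideanSpace.norm_eq]; simp [Fin.sum_univ_two, pr, sq_abs]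
  rw [h1]
  have h2 : w 0 ^ 2 + w 1 ^ 2 ≤ w 2 ^ 2 := by
    have := hw.1; simp only [mQ, mB] at this; nlinarith
  calc Real.sqrt (w 0 ^ 2 + w 1 ^ 2) ≤ Real.sqrt (w 2 ^ 2) := Real.sqrt_le_sqrt h2
    _ = w 2 := by rw [Real.sqrt_sq hw.2.le]

lemma memA (hSeq : S = Set.range fun p : EuclideanSpace ℝ (Fin 2) => ![p 0, p 1, h p])
    (x : Fin 3 → ℝ) (hx : h (pr x) ≤ x 2) : x ∈ DOD S := by
  rcases eq_or_lt_of_le hx with heq | hlt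
  · exact Or.inl (Or.inl ((mem_S_iff hSeq x).mpr heq.symm))
  · refine Or.inl (Or.inr ⟨![x 0, x 1, h (pr x)], ?_, ?_, ?_⟩)
    · rw [mem_S_iff hSeq]
      have : pr ![x 0, x 1, h (pr x)] = pr x := by ext i; fin_cases i <;> rfl
      rw [this]; rfl
    · show mQ _ < 0
      simp only [mQ, mB, Pi.sub_apply]
      have e0 : (![x 0, x 1, h (pr x)] : Fin 3 → ℝ) 0 = x 0 := rfl
      have e1 : (![x 0, x 1, h (pr x)] : Fin 3 → ℝ) 1 = x 1 := rfl
      have e2 : (![x 0, x 1, h (pr x)] : Fin 3 → ℝ) 2 = h (pr x) := rfl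
      rw [e0, e1, e2]; nlinarith
    · show 0 < (x - ![x 0, x 1, h (pr x)]) 2
      have e2 : (![x 0, x 1, h (pr x)] : Fin 3 → ℝ) 2 = h (pr x) := rfl
      simp only [Pi.sub_apply, e2]; linarith

lemma A_of_SI (hSeq : S = Set.range fun p : EuclideanSpace ℝ (Fin 2) => ![p 0, p 1, h p])
    (hst : ∀ p q : EuclideanSpace ℝ (Fin 2), p ≠ q → |h p - h q| < dist p q)
    (x : Fin 3 → ℝ) (hx : x ∈ S ∪ IPlus S) : h (pr x) ≤ x 2 := by
  rcases hx with hx | ⟨s, hs, hts⟩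
  · exact ((mem_S_iff hSeq x).mp hx).ge
  · have hs2 : s 2 = h (pr s) := (mem_S_iff hSeq s).mp hs
    have hlip := hlip_of_strict hst (pr x) (pr s)
    have hn : ‖pr x - pr s‖ ≤ x 2 - s 2 := by
      have heq : pr x - pr s = pr (x - s) := by ext i; fin_cases i <;> rfl
      rw [heq]
      have : FutureCausal (x - s) := ⟨hts.1.le, hts.2⟩
      have := norm_pr_le _ this
      simpa [Pi.sub_apply] using this
    linarith [hlip, hn, hs2 ▸ hlip]

lemma dod_add_causal (hSeq : S = Set.range fun p : EuclideanSpace ℝ (Fin 2) => ![p 0, p 1, h p])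
    (hst : ∀ p q : EuclideanSpace ℝ (Fin 2), p ≠ q → |h p - h q| < dist p q)
    (x w : Fin 3 → ℝ) (hx : x ∈ DOD S) (hw : FutureCausal w) : x + w ∈ DOD S := by
  have hlip := hlip_of_strict hst
  rcases hx with hx | hxT
  · -- x ∈ S ∪ IPlus S, i.e. h (pr x) ≤ x 2
    have hA := A_of_SI hSeq hst x hx
    apply memA hSeq
    have : h (pr (x + w)) ≤ h (pr x) + ‖pr w‖ := by
      have := hlip (pr (x + w)) (pr x)
      have heq : pr (x + w) - pr x = pr w := by rw [pr_add]; abel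
      rwa [heq] at this
    have hnw := norm_pr_le w hw
    have : (x + w) 2 = x 2 + w 2 := rfl
    rw [this]; linarith [norm_pr_le w hw]
  · -- x in the third set
    by_cases hc : h (pr (x + w)) ≤ (x + w) 2
    · exact memA hSeq _ hc
    · push_neg at hc
      refine Or.inr ?_
      intro z hz
      obtain ⟨t₁, ht₁, hS₁⟩ := hxT z hz
      have hP₁ : x 2 + t₁ * z 2 = h (pr x + t₁ • pr z) := by
        have := (mem_S_iff hSeq _).mp hS₁
        rw [pr_add_smul] at this
        simpa [Pi.add_apply, Pi.smul_apply, smul_eq_mul] using this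
      set G : ℝ → ℝ := fun t => (x 2 + w 2 + t * z 2) - h (pr x + pr w + t • pr z) with hG
      have hGcont : Continuous G := by
        apply Continuous.sub
        · continuity
        · exact (hcont hst).comp (by continuity)
      have hG0 : G 0 < 0 := by
        have : pr x + pr w + (0:ℝ) • pr z = pr (x + w) := by rw [pr_add]; simp
        simp only [hG, this, zero_mul, add_zero]
        have : (x + w) 2 = x 2 + w 2 := rfl
        rw [this] at hc; linarith
      have hGt₁ : 0 ≤ G t₁ := by
        have hb : h (pr x + pr w + t₁ • pr z) ≤ h (pr x + t₁ • pr z) + ‖pr w‖ := by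
          have := hlip (pr x + pr w + t₁ • pr z) (pr x + t₁ • pr z)
          have heq : pr x + pr w + t₁ • pr z - (pr x + t₁ • pr z) = pr w := by abel
          rwa [heq] at this
        have hnw := norm_pr_le w hw
        simp only [hG]
        linarith [hP₁]
      obtain ⟨t, htmem, hGt⟩ := intermediate_value_Icc ht₁ hGcont.continuousOn
        (show (0:ℝ) ∈ Set.Icc (G 0) (G t₁) from ⟨hG0.le, hGt₁⟩)
      refine ⟨t, htmem.1, ?_⟩
      rw [mem_S_iff hSeq]
      have h1 : (x + w + t • z) 2 = x 2 + w 2 + t * z 2 := rfl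
      have h2 : pr (x + w + t • z) = pr x + pr w + t • pr z := by
        rw [pr_add_smul, pr_add]
      rw [h1, h2]
      simp only [hG] at hGt
      linarith

lemma mem_interior_dod (hSeq : S = Set.range fun p : EuclideanSpace ℝ (Fin 2) => ![p 0, p 1, h p])
    (hst : ∀ p q : EuclideanSpace ℝ (Fin 2), p ≠ q → |h p - h q| < dist p q)
    (z q : Fin 3 → ℝ) (hz : z ∈ DOD S) (hq : FutureTimelike (q - z)) :
    q ∈ interior (DOD S) := by
  set U : Set (Fin 3 → ℝ) := {y | mQ (y - z) < 0 ∧ 0 < (y - z) 2} with hU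
  have hopen : IsOpen U := by
    have h1 : Continuous fun y : Fin 3 → ℝ => mQ (y - z) := by
      simp only [mQ, mB, Pi.sub_apply]; fun_prop
    have h2 : Continuous fun y : Fin 3 → ℝ => (y - z) 2 := by
      simp only [Pi.sub_apply]; fun_prop
    exact (isOpen_lt h1 continuous_const).inter (isOpen_lt continuous_const h2)
  have hsub : U ⊆ DOD S := by
    intro y hy
    have := dod_add_causal hSeq hst z (y - z) hz ⟨hy.1.le, hy.2⟩
    have heq : z + (y - z) = y := by abel
    rwa [heq] at this
  exact interior_maximal hsub hopen hq

end NullRaysAux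

/-- **Proposition 11(e).** For `p` on the frontier `X` of the domain of dependence of a strictly
spacelike entire graph (with `D(S) ≠ ℝ³`) and `v` a future-directed null vector, the null ray
`{p + t v : t ≥ 0}` is contained in `X` if and only if the null plane
`{x : B(x − p, v) = 0}` is a supporting plane of `D(S)` at `p`. -/
theorem null_rays_correspond_to_null_supporting_planes (S : Set (Fin 3 → ℝ))
    (hS : IsStrictlySpacelikeGraph S) (hne : DOD S ≠ Set.univ)
    (p : Fin 3 → ℝ) (hp : p ∈ frontier (DOD S))
    (v : Fin 3 → ℝ) (hv : FutureNull v) :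
    (∀ t : ℝ, 0 ≤ t → p + t • v ∈ frontier (DOD S)) ↔ SupportingAt (DOD S) p v := by
  obtain ⟨h, hst, hSeq⟩ := hS
  have hv2 : 0 < v 2 := hv.2
  have hnull : v 0 * v 0 + v 1 * v 1 - v 2 * v 2 = 0 := hv.1
  constructor
  · intro hray
    left
    intro z hz
    by_contra hK'
    push_neg at hK'
    have hK : 0 < (z 0 - p 0) * v 0 + (z 1 - p 1) * v 1 - (z 2 - p 2) * v 2 := by
      simpa [mB, Pi.sub_apply] using hK'
    set s : ℝ := 1 + |(z 2 - p 2)/v 2| +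
      |((z 0 - p 0)^2 + (z 1 - p 1)^2 - (z 2 - p 2)^2) /
        (2*((z 0 - p 0) * v 0 + (z 1 - p 1) * v 1 - (z 2 - p 2) * v 2))| with hsdef
    have hs0 : 0 ≤ s := by positivity
    have hs1 : (z 2 - p 2)/v 2 < s := by
      have a1 := le_abs_self ((z 2 - p 2)/v 2)
      have a2 := abs_nonneg (((z 0 - p 0)^2 + (z 1 - p 1)^2 - (z 2 - p 2)^2) /
        (2*((z 0 - p 0) * v 0 + (z 1 - p 1) * v 1 - (z 2 - p 2) * v 2)))
      rw [hsdef]; linarith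
    have hs2 : ((z 0 - p 0)^2 + (z 1 - p 1)^2 - (z 2 - p 2)^2) /
        (2*((z 0 - p 0) * v 0 + (z 1 - p 1) * v 1 - (z 2 - p 2) * v 2)) < s := by
      have a1 := le_abs_self (((z 0 - p 0)^2 + (z 1 - p 1)^2 - (z 2 - p 2)^2) /
        (2*((z 0 - p 0) * v 0 + (z 1 - p 1) * v 1 - (z 2 - p 2) * v 2)))
      have a2 := abs_nonneg ((z 2 - p 2)/v 2)
      rw [hsdef]; linarith
    have hfr := hray s hs0
    have hnotint : p + s • v ∉ interior (DOD S) := fun hin => hfr.2 hin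
    apply hnotint
    apply mem_interior_dod hSeq hst z _ hz
    constructor
    · show mQ (p + s • v - z) < 0
      simp only [mQ, mB, Pi.add_apply, Pi.sub_apply, Pi.smul_apply, smul_eq_mul]
      have hCK : (z 0 - p 0)^2 + (z 1 - p 1)^2 - (z 2 - p 2)^2 <
          2*s*((z 0 - p 0) * v 0 + (z 1 - p 1) * v 1 - (z 2 - p 2) * v 2) := by
        rw [div_lt_iff₀ (by positivity)] at hs2; linarith
      have key : (p 0 + s * v 0 - z 0) * (p 0 + s * v 0 - z 0) +
          (p 1 + s * v 1 - z 1) * (p 1 + s * v 1 - z 1) -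
          (p 2 + s * v 2 - z 2) * (p 2 + s * v 2 - z 2) =
          ((z 0 - p 0)^2 + (z 1 - p 1)^2 - (z 2 - p 2)^2) -
          2*s*((z 0 - p 0) * v 0 + (z 1 - p 1) * v 1 - (z 2 - p 2) * v 2) +
          s*s*(v 0 * v 0 + v 1 * v 1 - v 2 * v 2) := by ring
      rw [key, hnull]
      linarith
    · show 0 < (p + s • v - z) 2
      simp only [Pi.add_apply, Pi.sub_apply, Pi.smul_apply, smul_eq_mul]
      rw [div_lt_iff₀ hv2] at hs1; linarith
  · intro hsupp t ht
    rcases hsupp with hle | hge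
    · constructor
      · -- closure
        rcases eq_or_lt_of_le ht with rfl | htpos
        · simpa using frontier_subset_closure hp
        · have hcaus : FutureCausal (t • v) := by
            refine ⟨?_, ?_⟩
            · show mQ (t • v) ≤ 0
              apply le_of_eq
              simp only [mQ, mB, Pi.smul_apply, smul_eq_mul]
              linear_combination (t*t) * hnull
            · show 0 < (t • v) 2
              simpa [Pi.smul_apply, smul_eq_mul] using mul_pos htpos hv2
          have hmaps : (fun y => y + t • v) '' DOD S ⊆ DOD S := by
            rintro _ ⟨y, hy, rfl⟩
            exact dod_add_causal hSeq hst y _ hy hcaus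
          have hpc : p ∈ closure (DOD S) := frontier_subset_closure hp
          have hcf : Continuous fun y : Fin 3 → ℝ => y + t • v :=
            continuous_id.add continuous_const
          have := image_closure_subset_closure_image hcf ⟨p, hpc, rfl⟩
          exact closure_mono hmaps this
      · intro hint
        have hcf : Continuous fun s : ℝ => p + t • v - s • (![0,0,1] : Fin 3 → ℝ) := by
          exact continuous_const.sub (continuous_id.smul continuous_const)
        have h0 : p + t • v - (0:ℝ) • (![0,0,1] : Fin 3 → ℝ) = p + t • v := by simp
        have hev : ∀ᶠ s in nhds (0:ℝ),
            p + t • v - s • (![0,0,1] : Fin 3 → ℝ) ∈ interior (DOD S) := by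
          apply hcf.continuousAt.eventually_mem
          rw [h0]
          exact isOpen_interior.mem_nhds hint
        obtain ⟨s, hsmem, hspos⟩ :=
          ((hev.filter_mono nhdsWithin_le_nhds).and
            (eventually_mem_nhdsWithin (a := (0:ℝ)) (s := Set.Ioi 0))).exists
        have hzD : p + t • v - s • (![0,0,1] : Fin 3 → ℝ) ∈ DOD S := interior_subset hsmem
        have := hle _ hzD
        simp only [mB, Pi.sub_apply, Pi.add_apply, Pi.smul_apply, smul_eq_mul,
          Matrix.cons_val_zero, Matrix.cons_val_one, Matrix.head_cons, Matrix.cons_val_two,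
          Matrix.tail_cons] at this
        have hspos' : (0:ℝ) < s := hspos
        nlinarith [hnull, mul_pos hspos' hv2]
    · exfalso
      set w₀ : Fin 3 → ℝ := ![p 0, p 1, max (p 2) (h (pr p)) + 1] with hw₀
      have hprw : pr w₀ = pr p := by ext i; fin_cases i <;> rfl
      have hw2 : w₀ 2 = max (p 2) (h (pr p)) + 1 := rfl
      have hzD : w₀ ∈ DOD S := by
        apply memA hSeq
        rw [hprw, hw2]
        have := le_max_right (p 2) (h (pr p))
        linarith
      have hge' := hge w₀ hzD
      have e0 : w₀ 0 = p 0 := rfl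
      have e1 : w₀ 1 = p 1 := rfl
      simp only [mB, Pi.sub_apply, e0, e1, hw2] at hge'
      have := le_max_left (p 2) (h (pr p))
      nlinarith [hv2]
end

section
/- Let X be a nonempty complete metric space and f : X → ℝ² a local homeomorphism such that dist(x, y) ≤ dist(f(x), f(y)) for all x, y ∈ X. Then f is a covering map; in particular, if X is connected then f is a homeomorphism onto ℝ². (The engine of Lemma 1: the distance-increasing projection of a complete spacelike surface to the plane is a covering, hence the surface is a graph.) -/
open Set

/-- A homeomorphism gives a (global) trivialization with fiber `PUnit`. -/
noncomputable def homeomorphTrivialization {X Y : Type*} [TopologicalSpace X]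
    [TopologicalSpace Y] (e : X ≃ₜ Y) : Bundle.Trivialization PUnit.{1} (⇑e) where
  toFun x := (e x, PUnit.unit)
  invFun p := e.symm p.1
  source := univ
  target := univ ×ˢ univ
  map_source' := fun _ _ => ⟨trivial, trivial⟩
  map_target' := fun _ _ => trivial
  left_inv' := fun x _ => e.symm_apply_apply x
  right_inv' := fun p _ => Prod.ext (e.apply_symm_apply p.1) rfl
  open_source := isOpen_univ
  open_target := isOpen_univ.prod isOpen_univ
  continuousOn_toFun := (e.continuous.prodMk continuous_const).continuousOn
  continuousOn_invFun := (e.symm.continuous.comp continuous_fst).continuousOn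
  baseSet := univ
  open_baseSet := isOpen_univ
  source_eq := by simp
  target_eq := rfl
  proj_toFun := fun _ _ => rfl

/-- A homeomorphism is a covering map. -/
theorem Homeomorph.isCoveringMap {X Y : Type*} [TopologicalSpace X] [TopologicalSpace Y]
    (e : X ≃ₜ Y) : IsCoveringMap ⇑e :=
  IsFiberBundle.isCoveringMap fun _ => ⟨homeomorphTrivialization e, trivial⟩

/-- The engine of **Lemma 1**: a distance-increasing local homeomorphism from a nonempty complete
metric space to the Euclidean plane is a covering map; in particular, if the source is connected
it is a homeomorphism onto `ℝ²`. -/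
theorem distance_increasing_is_covering (X : Type) [MetricSpace X] [CompleteSpace X]
    [Nonempty X] (f : X → EuclideanSpace ℝ (Fin 2))
    (hloc : IsLocalHomeomorph f)
    (hdist : ∀ x y : X, dist x y ≤ dist (f x) (f y)) :
    IsCoveringMap f ∧
      (ConnectedSpace X → ∃ e : X ≃ₜ EuclideanSpace ℝ (Fin 2), ⇑e = f) := by
  have hcont : Continuous f := hloc.continuous
  have hinj : Function.Injective f := by
    intro x y h
    have := hdist x y
    rw [h, dist_self] at this
    exact dist_le_zero.mp this
  -- the range of `f` is closed
  have hclosed : IsClosed (Set.range f) := by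
    apply IsSeqClosed.isClosed
    intro u y hu hconv
    choose v hv using hu
    have hfv : Filter.Tendsto (fun n => f (v n)) Filter.atTop (nhds y) := by
      simpa [hv] using hconv
    have hcau : CauchySeq fun n => f (v n) := hfv.cauchySeq
    have hcauv : CauchySeq v := by
      rw [Metric.cauchySeq_iff] at hcau ⊢
      intro ε hε
      obtain ⟨N, hN⟩ := hcau ε hε
      exact ⟨N, fun m hm n hn => lt_of_le_of_lt (hdist _ _) (hN m hm n hn)⟩
    obtain ⟨x, hx⟩ := cauchySeq_tendsto_of_complete hcauv
    have : Filter.Tendsto (fun n => f (v n)) Filter.atTop (nhds (f x)) :=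
      (hcont.tendsto x).comp hx
    exact ⟨x, tendsto_nhds_unique this hfv⟩
  -- the range of `f` is open, hence all of the plane
  have hopen : IsOpen (Set.range f) := hloc.isOpenMap.isOpen_range
  have hsurj : Function.Surjective f := by
    have hne : (Set.range f).Nonempty := Set.range_nonempty f
    have : Set.range f = Set.univ :=
      IsClopen.eq_univ ⟨hclosed, hopen⟩ hne
    exact Set.range_eq_univ.mp this
  have hhom : IsHomeomorph f := ⟨hcont, hloc.isOpenMap, hinj, hsurj⟩
  obtain ⟨e, he⟩ := isHomeomorph_iff_exists_homeomorph.mp hhom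
  refine ⟨?_, fun _ => ⟨e, he⟩⟩
  rw [← he]
  exact e.isCoveringMap
end

section
/- Let S ⊆ ℝ³ be a strictly spacelike entire graph and let f(x) = Ax + b be an affine isometry of 3-dimensional Minkowski space whose linear part A fixes the vector (0,0,1) and restricts to a rotation (an element of SO(2)) of the plane spanned by the first two coordinates. If f(S) = S and f has no fixed point in S, then A is the identity. (The elliptic case of Proposition 7: a spacelike torus with linear holonomy in SO(2) has trivial linear holonomy.) -/
/-- The elliptic case of **Proposition 7**: if an affine isometry `f` of Minkowski space whose
linear part fixes `(0,0,1)` and acts as a rotation of the spacelike coordinate plane preserves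
a strictly spacelike entire graph `S` and has no fixed point on `S`, then its linear part is
the identity. -/
theorem elliptic_linear_holonomy_trivial (S : Set (Fin 3 → ℝ))
    (hS : IsStrictlySpacelikeGraph S)
    (f : (Fin 3 → ℝ) ≃ᵃ[ℝ] (Fin 3 → ℝ))
    (hiso : ∀ x y : Fin 3 → ℝ, mQ (f x - f y) = mQ (x - y))
    (hfix : f.linear ![0, 0, 1] = ![0, 0, 1])
    (hrot : ∃ θ : ℝ,
      f.linear ![1, 0, 0] = ![Real.cos θ, Real.sin θ, 0] ∧
      f.linear ![0, 1, 0] = ![-Real.sin θ, Real.cos θ, 0])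
    (hinv : ⇑f '' S = S)
    (hnofix : ∀ x ∈ S, f x ≠ x) :
    ∀ v : Fin 3 → ℝ, f.linear v = v := by
  classical
  obtain ⟨h, _hlip, hSeq⟩ := hS
  obtain ⟨θ, h1, h2⟩ := hrot
  set c : ℝ := Real.cos θ with hc
  set s : ℝ := Real.sin θ with hs
  -- decomposition of any vector
  have hlin : ∀ x : Fin 3 → ℝ,
      f.linear x = ![x 0 * c - x 1 * s, x 0 * s + x 1 * c, x 2] := by
    intro x
    have hx : x = x 0 • ![(1:ℝ),0,0] + x 1 • ![0,1,0] + x 2 • ![0,0,1] := by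
      funext i; fin_cases i <;> simp
    calc f.linear x
        = f.linear (x 0 • ![(1:ℝ),0,0] + x 1 • ![0,1,0] + x 2 • ![0,0,1]) := by rw [← hx]
      _ = x 0 • f.linear ![1,0,0] + x 1 • f.linear ![0,1,0] + x 2 • f.linear ![0,0,1] := by
          simp only [map_add, map_smul]
      _ = _ := by
          rw [h1, h2, hfix]
          funext i; fin_cases i <;> simp <;> ring
  have hf : ∀ x : Fin 3 → ℝ, f x = f.linear x + f 0 := by
    intro x
    simpa using f.map_vadd 0 x
  -- main claim: c = 1
  have hc1 : c = 1 := by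
    by_contra hne
    set b : Fin 3 → ℝ := f 0 with hb
    set d : ℝ := (1 - c)^2 + s^2 with hd
    have hdpos : 0 < d := by
      have h1c : (1:ℝ) - c ≠ 0 := sub_ne_zero.mpr (Ne.symm hne)
      have h1 : 0 < (1 - c)^2 := pow_two_pos_of_ne_zero h1c
      nlinarith [sq_nonneg s]
    set p0 : ℝ := ((1 - c) * b 0 - s * b 1) / d with hp0
    set p1 : ℝ := (s * b 0 + (1 - c) * b 1) / d with hp1
    have hfp0 : p0 * c - p1 * s + b 0 = p0 := by
      rw [hp0, hp1]; field_simp; ring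
    have hfp1 : p0 * s + p1 * c + b 1 = p1 := by
      rw [hp0, hp1]; field_simp; ring
    set P : EuclideanSpace ℝ (Fin 2) := !₂[p0, p1] with hP
    set x : Fin 3 → ℝ := ![p0, p1, h P] with hx
    have hxS : x ∈ S := by
      rw [hSeq]
      exact ⟨P, by funext i; fin_cases i <;> rfl⟩
    have hfxS : f x ∈ S := by
      rw [← hinv]; exact ⟨x, hxS, rfl⟩
    have hfx : f x = ![p0, p1, h P + b 2] := by
      rw [hf, hlin]
      funext i; fin_cases i
      · simpa [hx] using hfp0
      · simpa [hx] using hfp1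
      · simp [hx]
    rw [hSeq] at hfxS
    obtain ⟨q, hq⟩ := hfxS
    have hq0 : q 0 = p0 := by
      have := congrFun hq 0; rw [hfx] at this; simpa using this
    have hq1 : q 1 = p1 := by
      have := congrFun hq 1; rw [hfx] at this; simpa using this
    have hqP : q = P := by
      ext i; fin_cases i
      · exact hq0
      · exact hq1
    have hq2 : h q = h P + b 2 := by
      have := congrFun hq 2; rw [hfx] at this; simpa using this
    rw [hqP] at hq2
    have hb2 : b 2 = 0 := by linarith
    have : f x = x := by
      rw [hfx, hx, hb2]; simp
    exact hnofix x hxS this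
  have hs0 : s = 0 := by
    have := Real.sin_sq_add_cos_sq θ
    rw [← hs, ← hc, hc1] at this
    nlinarith
  intro v
  rw [hlin, hc1, hs0]
  funext i; fin_cases i <;> simp
end

section
/- For λ, e ∈ ℝ let T(λ, e) be the affine isometry of 3-dimensional Minkowski space given by (x, y, t) ↦ (x cosh λ + t sinh λ, y + e, x sinh λ + t cosh λ). Let (λ, e) and (μ, f) be linearly independent vectors in ℝ² with (λ, μ) ≠ (0, 0), let Γ be the group generated by A = T(λ, e) and B = T(μ, f), and let S be a strictly spacelike entire graph such that γ(S) = S for all γ ∈ Γ and the action of Γ on S is cocompact (there is a compact K ⊆ S with Γ·K = S). Then t² − x² > 0 at every point (x, y, t) of S, and t has constant sign on S. (The core of Proposition 8: a spacelike torus with hyperbolic linear holonomy develops into a standard region {t² > x², t > 0} up to time reversal.) -/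
/-- The affine isometry `T(λ, e) : (x, y, t) ↦ (x cosh λ + t sinh λ, y + e, x sinh λ + t cosh λ)`
of Minkowski space, as a map. -/
noncomputable def TM (l e : ℝ) : (Fin 3 → ℝ) → (Fin 3 → ℝ) := fun v =>
  ![v 0 * Real.cosh l + v 2 * Real.sinh l, v 1 + e, v 0 * Real.sinh l + v 2 * Real.cosh l]

/-- `T(λ, e)` as a bijection of `ℝ³` (with inverse `T(−λ, −e)`). -/
noncomputable def TE (l e : ℝ) : Equiv.Perm (Fin 3 → ℝ) where
  toFun := TM l e
  invFun := TM (-l) (-e)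
  left_inv := by
    intro v
    have h := Real.cosh_sq_sub_sinh_sq l
    funext i
    fin_cases i
    · simp [TM]; linear_combination (v 0) * h
    · simp [TM]
    · simp [TM]; linear_combination (v 2) * h
  right_inv := by
    intro v
    have h := Real.cosh_sq_sub_sinh_sq l
    funext i
    fin_cases i
    · simp [TM]; linear_combination (v 0) * h
    · simp [TM]
    · simp [TM]; linear_combination (v 2) * h


section AuxProof

private lemma TM_comp (a b c d : ℝ) (v : Fin 3 → ℝ) :
    TM a b (TM c d v) = TM (a + c) (b + d) v := by
  funext i
  fin_cases i <;>
    simp [TM, Real.cosh_add, Real.sinh_add] <;> ring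

private lemma TM_zero (v : Fin 3 → ℝ) : TM 0 0 v = v := by
  funext i
  fin_cases i <;> simp [TM]

private lemma cosh_quartic (x : ℝ) : x ^ 4 / 512 ≤ Real.cosh x := by
  have h0 : (0:ℝ) ≤ |x| := abs_nonneg x
  have h1 : |x| / 4 + 1 ≤ Real.exp (|x| / 4) := by
    linarith [Real.add_one_le_exp (|x| / 4)]
  have h2 : (|x| / 4 + 1) ^ 4 ≤ Real.exp (|x| / 4) ^ 4 :=
    pow_le_pow_left₀ (by positivity) h1 4
  have h3 : Real.exp (|x| / 4) ^ 4 = Real.exp |x| := by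
    rw [← Real.exp_nat_mul]
    congr 1
    push_cast
    ring
  have h4 : Real.exp |x| ≤ 2 * Real.cosh |x| := by
    rw [Real.cosh_eq]
    have := (Real.exp_pos (-|x|)).le
    linarith
  have h5 : x ^ 4 = |x| ^ 4 := by
    rw [pow_abs, abs_of_nonneg (by positivity)]
  rw [← Real.cosh_abs]
  nlinarith [h3 ▸ h2, h4, h5, sq_nonneg (|x|/4), h0]

/-- A strictly 1-Lipschitz function on `ℝ` cannot satisfy `g x ^ 2 ≥ x ^ 2` everywhere
with equality at some point. -/
private lemma strict_aux (g : ℝ → ℝ)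
    (hlip : ∀ x y : ℝ, x ≠ y → |g x - g y| < |x - y|)
    (hge : ∀ x : ℝ, x ^ 2 ≤ g x ^ 2) (x0 : ℝ) (heq : g x0 ^ 2 = x0 ^ 2) : False := by
  set x1 : ℝ := if 0 ≤ x0 then x0 + 1 else x0 - 1 with hx1def
  have habs0 : |g x0| = |x0| := by
    have := sq_abs (g x0)
    have := sq_abs x0
    nlinarith [abs_nonneg (g x0), abs_nonneg x0]
  have hx1abs : |x1| = |x0| + 1 := by
    rw [hx1def]
    split_ifs with hc
    · rw [abs_of_nonneg hc, abs_of_nonneg (by linarith)]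
    · push_neg at hc
      rw [abs_of_neg hc, abs_of_neg (by linarith)]
      ring
  have hne : x1 ≠ x0 := by
    rw [hx1def]; split_ifs <;> intro hh <;> linarith [hh]
  have hd : |x1 - x0| = 1 := by
    rw [hx1def]; split_ifs <;> simp
  have hlt : |g x1 - g x0| < 1 := by
    have := hlip x1 x0 hne
    rwa [hd] at this
  have h1 : |g x1| ≤ |g x0| + |g x1 - g x0| := by
    calc |g x1| = |g x0 + (g x1 - g x0)| := by ring_nf
      _ ≤ |g x0| + |g x1 - g x0| := abs_add_le _ _
  have h2 : |x1| ≤ |g x1| := by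
    have := hge x1
    nlinarith [abs_nonneg (g x1), sq_abs x1, sq_abs (g x1)]
  rw [hx1abs] at h2
  rw [habs0] at h1
  linarith

set_option maxHeartbeats 1000000 in
/-- Key step: if `S` is a strictly spacelike entire graph invariant under `TM l e`
with `l ≠ 0`, then `x² ≤ t²` on `S`. -/
private lemma unsigned (l e : ℝ) (hl : l ≠ 0) (S : Set (Fin 3 → ℝ))
    (hS : IsStrictlySpacelikeGraph S)
    (hstep : ∀ q ∈ S, TM l e q ∈ S) :
    ∀ p ∈ S, (p 0) ^ 2 ≤ (p 2) ^ 2 := by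
  obtain ⟨h, hlip, hSeq⟩ := hS
  intro p hp
  by_contra hcon
  push_neg at hcon
  obtain ⟨δ, hδdef⟩ : ∃ δ : ℝ, δ = (p 0) ^ 2 - (p 2) ^ 2 := ⟨_, rfl⟩
  have hδ : 0 < δ := by rw [hδdef]; linarith
  have horb : ∀ n : ℕ, TM ((n : ℝ) * l) ((n : ℝ) * e) p ∈ S := by
    intro n
    induction n with
    | zero => simpa [TM_zero] using hp
    | succ k ih =>
        have hmem := hstep _ ih
        rw [TM_comp] at hmem
        have h1 : l + (k : ℝ) * l = ((k + 1 : ℕ) : ℝ) * l := by push_cast; ring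
        have h2 : e + (k : ℝ) * e = ((k + 1 : ℕ) : ℝ) * e := by push_cast; ring
        rwa [h1, h2] at hmem
  have key : ∀ n : ℕ, 1 ≤ n →
      δ * (2 * Real.cosh ((n : ℝ) * l) - 2) < ((n : ℝ) * e) ^ 2 := by
    intro n hn
    set c : ℝ := Real.cosh ((n : ℝ) * l) with hcdef
    set s : ℝ := Real.sinh ((n : ℝ) * l) with hsdef
    have hnl : (n : ℝ) * l ≠ 0 :=
      mul_ne_zero (Nat.cast_ne_zero.mpr (by omega)) hl
    have hc1 : 1 < c := Real.one_lt_cosh.mpr hnl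
    have hcs : c ^ 2 - s ^ 2 = 1 := Real.cosh_sq_sub_sinh_sq _
    have hqS : TM ((n : ℝ) * l) ((n : ℝ) * e) p ∈ S := horb n
    set q : Fin 3 → ℝ := TM ((n : ℝ) * l) ((n : ℝ) * e) p with hqdef
    have hq0 : q 0 = p 0 * c + p 2 * s := by simp [hqdef, TM, hcdef, hsdef]
    have hq1 : q 1 = p 1 + (n : ℝ) * e := by simp [hqdef, TM]
    have hq2 : q 2 = p 0 * s + p 2 * c := by simp [hqdef, TM, hcdef, hsdef]
    rw [hSeq] at hp hqS
    obtain ⟨P, hP⟩ := hp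
    obtain ⟨Q, hQ⟩ := hqS
    have hp0 : P 0 = p 0 := by rw [← hP]; rfl
    have hp1 : P 1 = p 1 := by rw [← hP]; rfl
    have hp2 : h P = p 2 := by rw [← hP]; rfl
    have hq0' : Q 0 = q 0 := by rw [← hQ]; rfl
    have hq1' : Q 1 = q 1 := by rw [← hQ]; rfl
    have hq2' : h Q = q 2 := by rw [← hQ]; rfl
    by_cases hPQ : P = Q
    · exfalso
      have hpq : p = q := by rw [← hP, ← hQ, hPQ]
      have e1 : p 0 * c + p 2 * s = p 0 := by rw [← hq0, ← hpq]
      have e2 : p 0 * s + p 2 * c = p 2 := by rw [← hq2, ← hpq]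
      have hz : p 0 * ((c - 1) ^ 2 - s ^ 2) = 0 := by
        linear_combination (c - 1) * e1 - s * e2
      have hz2 : (c - 1) ^ 2 - s ^ 2 = 2 - 2 * c := by linarith [hcs, sq_nonneg c]
      have h0 : p 0 = 0 := by
        rcases mul_eq_zero.mp hz with h | h
        · exact h
        · exfalso; rw [hz2] at h; linarith
      rw [h0] at hcon
      nlinarith [sq_nonneg (p 2)]
    · have hlt := hlip P Q hPQ
      have hdsq : (dist P Q) ^ 2 = (P 0 - Q 0) ^ 2 + (P 1 - Q 1) ^ 2 := by
        rw [EuclideanSpace.dist_eq, Real.sq_sqrt (by positivity)]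
        rw [Fin.sum_univ_two]
        simp [Real.dist_eq, sq_abs]
      have hsq : (h P - h Q) ^ 2 < (P 0 - Q 0) ^ 2 + (P 1 - Q 1) ^ 2 := by
        have h2 : |h P - h Q| ^ 2 < (dist P Q) ^ 2 := by
          have hd0 : (0:ℝ) ≤ |h P - h Q| := abs_nonneg _
          nlinarith [hlt, hd0]
        rw [sq_abs] at h2
        rwa [hdsq] at h2
      rw [hp0, hp1, hp2, hq0', hq1', hq2', hq0, hq1, hq2] at hsq
      have hid : (p 2 - (p 0 * s + p 2 * c)) ^ 2 - (p 0 - (p 0 * c + p 2 * s)) ^ 2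
          = δ * (2 * c - 2) := by
        rw [hδdef]
        linear_combination ((p 2) ^ 2 - (p 0) ^ 2) * hcs
      have e3 : (p 1 - (p 1 + (n : ℝ) * e)) ^ 2 = ((n : ℝ) * e) ^ 2 := by ring
      rw [e3] at hsq
      linarith [hsq, hid]
  -- now derive a contradiction from exponential growth
  have hl4 : (0:ℝ) < l ^ 4 := by positivity
  have hdl : (0:ℝ) < δ * l ^ 4 := by positivity
  obtain ⟨N, hN⟩ := exists_nat_gt (max 1 (256 * (e ^ 2 + 2 * δ) / (δ * l ^ 4)))
  have h1N : (1:ℝ) ≤ (N : ℝ) := le_of_lt (lt_of_le_of_lt (le_max_left _ _) hN)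
  have hNn : 1 ≤ N := by exact_mod_cast Nat.one_le_cast.mpr (by exact_mod_cast h1N)
  have hbN : 256 * (e ^ 2 + 2 * δ) < (N : ℝ) * (δ * l ^ 4) := by
    have := lt_of_le_of_lt (le_max_right 1 (256 * (e ^ 2 + 2 * δ) / (δ * l ^ 4))) hN
    rwa [div_lt_iff₀ hdl] at this
  have hkey := key N hNn
  have hcq := cosh_quartic ((N : ℝ) * l)
  have hX1 : (1:ℝ) ≤ (N : ℝ) ^ 2 := by nlinarith
  have hXN : (N : ℝ) ≤ (N : ℝ) ^ 2 := by nlinarith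
  have hNl4 : ((N : ℝ) * l) ^ 4 = ((N:ℝ)^2)^2 * l ^ 4 := by ring
  have hX2pos : (0:ℝ) < (N:ℝ)^2 := by positivity
  have hc2 : δ * (((N:ℝ)*l)^4/512) ≤ δ * Real.cosh ((N:ℝ)*l) :=
    mul_le_mul_of_nonneg_left hcq hδ.le
  have hNe : (((N:ℝ))*e)^2 = (N:ℝ)^2*e^2 := by ring
  have hA : δ * (((N:ℝ)^2)^2 * l^4) / 256 < (N:ℝ)^2 * e^2 + 2*δ := by
    linarith [hkey, hc2]
  have hB : 256*(e^2+2*δ) < (N:ℝ)^2 * (δ * l^4) := by nlinarith [hbN, hXN, hdl]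
  have hBX := mul_lt_mul_of_pos_left hB hX2pos
  have hfin : (0:ℝ) ≤ δ * ((N:ℝ)^2 - 1) := mul_nonneg hδ.le (by linarith)
  linarith [hA, hBX, hfin]

end AuxProof

/-- The core of **Proposition 8**: if `(λ,e)` and `(μ,f)` are linearly independent in `ℝ²`
with `(λ,μ) ≠ (0,0)`, and the group `Γ` generated by `A = T(λ,e)` and `B = T(μ,f)` preserves
a strictly spacelike entire graph `S` and acts cocompactly on it, then `t² − x² > 0` at every
point of `S` and `t` has constant sign on `S`. -/
theorem hyperbolic_holonomy_standard_region (l e m f : ℝ)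
    (hli : LinearIndependent ℝ ![![l, e], ![m, f]])
    (hlm : (l, m) ≠ ((0 : ℝ), (0 : ℝ)))
    (S : Set (Fin 3 → ℝ)) (hS : IsStrictlySpacelikeGraph S)
    (hinv : ∀ γ ∈ Subgroup.closure {TE l e, TE m f}, ⇑γ '' S = S)
    (K : Set (Fin 3 → ℝ)) (hK : IsCompact K) (hKS : K ⊆ S)
    (hcocompact : ∀ x ∈ S, ∃ γ ∈ Subgroup.closure {TE l e, TE m f}, ∃ k ∈ K, γ k = x) :
    (∀ p ∈ S, 0 < (p 2) ^ 2 - (p 0) ^ 2) ∧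
      ((∀ p ∈ S, 0 < p 2) ∨ (∀ p ∈ S, p 2 < 0)) := by
  classical
  obtain ⟨h, hlip, hSeq⟩ := hS
  -- membership of generators in the closure
  have hAmem : TE l e ∈ Subgroup.closure {TE l e, TE m f} :=
    Subgroup.subset_closure (Set.mem_insert _ _)
  have hBmem : TE m f ∈ Subgroup.closure {TE l e, TE m f} :=
    Subgroup.subset_closure (Set.mem_insert_of_mem _ rfl)
  have hstepA : ∀ q ∈ S, TM l e q ∈ S := by
    intro q hq
    have := hinv _ hAmem
    rw [← this]
    exact Set.mem_image_of_mem _ hq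
  have hstepB : ∀ q ∈ S, TM m f q ∈ S := by
    intro q hq
    have := hinv _ hBmem
    rw [← this]
    exact Set.mem_image_of_mem _ hq
  -- x² ≤ t² on S
  have hS' : IsStrictlySpacelikeGraph S := ⟨h, hlip, hSeq⟩
  have hle : ∀ p ∈ S, (p 0) ^ 2 ≤ (p 2) ^ 2 := by
    by_cases hl : l ≠ 0
    · exact unsigned l e hl S hS' hstepA
    · push_neg at hl
      have hm : m ≠ 0 := by
        intro hm
        exact hlm (by rw [hl, hm])
      exact unsigned m f hm S hS' hstepB
  -- transfer to the graph function
  have hmemS : ∀ P : EuclideanSpace ℝ (Fin 2), (![P 0, P 1, h P] : Fin 3 → ℝ) ∈ S := by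
    intro P
    rw [hSeq]
    exact ⟨P, rfl⟩
  have hgle : ∀ P : EuclideanSpace ℝ (Fin 2), (P 0) ^ 2 ≤ (h P) ^ 2 := by
    intro P
    have := hle _ (hmemS P)
    simpa using this
  -- strict inequality
  have hglt : ∀ P : EuclideanSpace ℝ (Fin 2), (P 0) ^ 2 < (h P) ^ 2 := by
    intro P
    rcases lt_or_eq_of_le (hgle P) with hlt | heq
    · exact hlt
    · exfalso
      -- build the 1-variable function along the line y = P 1
      set E : ℝ → EuclideanSpace ℝ (Fin 2) := fun x => !₂[x, P 1] with hEdef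
      have hE0 : ∀ x, (E x) 0 = x := fun x => rfl
      have hE1 : ∀ x, (E x) 1 = P 1 := fun x => rfl
      have hEP : E (P 0) = P := by
        ext i
        fin_cases i <;> rfl
      have hEdist : ∀ x y : ℝ, dist (E x) (E y) = |x - y| := by
        intro x y
        rw [EuclideanSpace.dist_eq, Fin.sum_univ_two, hE0, hE0, hE1, hE1]
        simp [Real.dist_eq, sq_abs, Real.sqrt_sq_eq_abs]
      set g : ℝ → ℝ := fun x => h (E x) with hgdef
      have hglip : ∀ x y : ℝ, x ≠ y → |g x - g y| < |x - y| := by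
        intro x y hxy
        have hEne : E x ≠ E y := by
          intro hE
          apply hxy
          have := congrArg (fun v : EuclideanSpace ℝ (Fin 2) => v 0) hE
          simpa [hE0] using this
        have := hlip (E x) (E y) hEne
        rwa [hEdist] at this
      have hgge : ∀ x : ℝ, x ^ 2 ≤ g x ^ 2 := by
        intro x
        have := hgle (E x)
        simpa [hgdef, hE0] using this
      have hgeq : g (P 0) ^ 2 = (P 0) ^ 2 := by
        simp only [hgdef, hEP]
        exact heq.symm
      exact strict_aux g hglip hgge (P 0) hgeq
  constructor
  · intro p hp
    rw [hSeq] at hp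
    obtain ⟨P, hP⟩ := hp
    have h0 : p 0 = P 0 := by rw [← hP]; rfl
    have h2 : p 2 = h P := by rw [← hP]; rfl
    rw [h0, h2]
    linarith [hglt P]
  · -- h never vanishes, h is continuous, domain is connected
    have hne0 : ∀ P : EuclideanSpace ℝ (Fin 2), h P ≠ 0 := by
      intro P hP0
      have hlt2 := hglt P
      rw [hP0] at hlt2
      nlinarith [sq_nonneg (P 0)]
    have hcont : Continuous h := by
      have : LipschitzWith 1 h := by
        apply LipschitzWith.of_dist_le_mul
        intro P Q
        by_cases hPQ : P = Q
        · simp [hPQ]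
        · have hlt := hlip P Q hPQ
          have hd : (0:ℝ) ≤ dist P Q := dist_nonneg
          rw [Real.dist_eq, NNReal.coe_one, one_mul]
          linarith
      exact this.continuous
    have hsign : (∀ P, 0 < h P) ∨ (∀ P, h P < 0) := by
      by_cases hpos : 0 < h 0
      · left
        intro P
        by_contra hng
        push_neg at hng
        have hPn : h P < 0 := lt_of_le_of_ne hng (hne0 P)
        have := intermediate_value_univ P 0 hcont
        have h0mem : (0:ℝ) ∈ Set.Icc (h P) (h 0) := ⟨le_of_lt hPn, le_of_lt hpos⟩
        obtain ⟨R, hR⟩ := this h0mem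
        exact hne0 R hR
      · right
        push_neg at hpos
        have hneg : h 0 < 0 := lt_of_le_of_ne hpos (hne0 0)
        intro P
        by_contra hng
        push_neg at hng
        have hPp : 0 < h P := lt_of_le_of_ne hng (Ne.symm (hne0 P))
        have := intermediate_value_univ 0 P hcont
        have h0mem : (0:ℝ) ∈ Set.Icc (h 0) (h P) := ⟨le_of_lt hneg, le_of_lt hPp⟩
        obtain ⟨R, hR⟩ := this h0mem
        exact hne0 R hR
    rcases hsign with hs | hs
    · left
      intro p hp
      rw [hSeq] at hp
      obtain ⟨P, hP⟩ := hp
      have h2 : p 2 = h P := by rw [← hP]; rfl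
      rw [h2]; exact hs P
    · right
      intro p hp
      rw [hSeq] at hp
      obtain ⟨P, hP⟩ := hp
      have h2 : p 2 = h P := by rw [← hP]; rfl
      rw [h2]; exact hs P
end

section
/- Let T be a linear automorphism of the space of 2×2 real matrices such that det(T(X)) = det(X) for all X. Then there exist A, B ∈ GL₂(ℝ) with det(A)·det(B) = 1 such that either T(X) = A X B for all X, or T(X) = A Xᵀ B for all X. (The structure of the automorphism group of the quadric AD − BC = 0 asserted in Section 7: the determinant-preserving linear maps form the group generated by left/right multiplications and transposition.) -/
namespace DetPresAux

open Matrix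

abbrev Mat := Matrix (Fin 2) (Fin 2) ℝ

def Ee : Mat := !![0,1;0,0]
def Ff : Mat := !![0,0;1,0]
def Hh : Mat := !![1,0;0,-1]
def ww : Mat := !![0,1;1,0]

/-- `X ↦ A * X * B` as a linear map. -/
def conjL (A B : Mat) : Mat →ₗ[ℝ] Mat where
  toFun X := A * X * B
  map_add' X Y := by rw [Matrix.mul_add, Matrix.add_mul]
  map_smul' c X := by rw [Matrix.mul_smul, Matrix.smul_mul]; rfl

/-- `X ↦ A * Xᵀ * B` as a linear map. -/
def conjT (A B : Mat) : Mat →ₗ[ℝ] Mat where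
  toFun X := A * Xᵀ * B
  map_add' X Y := by rw [Matrix.transpose_add, Matrix.mul_add, Matrix.add_mul]
  map_smul' c X := by
    rw [Matrix.transpose_smul, Matrix.mul_smul, Matrix.smul_mul]; rfl

lemma sandwich {P P' : Mat} (h : P' * P = 1) (Y : Mat) : P' * (P * Y * P') * P = Y := by
  calc P' * (P * Y * P') * P = (P' * P) * Y * (P' * P) := by simp only [Matrix.mul_assoc]
    _ = Y := by rw [h, Matrix.one_mul, Matrix.mul_one]

lemma decomp (X : Mat) :
    X = ((X 0 0 + X 1 1)/2) • (1 : Mat) + X 0 1 • Ee + X 1 0 • Ff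
      + ((X 0 0 - X 1 1)/2) • Hh := by
  ext i j
  fin_cases i <;> fin_cases j <;>
    simp [Ee, Ff, Hh, Matrix.one_apply] <;> ring

lemma basis_eq (S₁ S₂ : Mat →ₗ[ℝ] Mat) (h1 : S₁ 1 = S₂ 1) (hE : S₁ Ee = S₂ Ee)
    (hF : S₁ Ff = S₂ Ff) (hH : S₁ Hh = S₂ Hh) (X : Mat) : S₁ X = S₂ X := by
  conv_lhs => rw [decomp X]
  conv_rhs => rw [decomp X]
  simp only [map_add, LinearMap.map_smul, h1, hE, hF, hH]

lemma tr_pres (S : Mat →ₗ[ℝ] Mat) (hdet : ∀ X, (S X).det = X.det) (h1 : S 1 = 1) (X : Mat) :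
    (S X).trace = X.trace := by
  have h := hdet (X + 1)
  rw [map_add, h1] at h
  have h0 := hdet X
  rw [Matrix.det_fin_two, Matrix.det_fin_two] at h h0
  rw [Matrix.trace_fin_two, Matrix.trace_fin_two]
  simp only [Matrix.add_apply, Matrix.one_apply] at h
  norm_num at h
  linear_combination h - h0

lemma core2 (S : Mat →ₗ[ℝ] Mat) (hdet : ∀ X, (S X).det = X.det) (h1 : S 1 = 1)
    (hE : S Ee = Ee) (hF : S Ff = Ff) :
    (∀ X, S X = X) ∨ (∀ X, S X = ww * Xᵀ * ww) := by
  obtain ⟨a, b, c, d, hM⟩ : ∃ a b c d : ℝ, S Hh = !![a,b;c,d] :=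
    ⟨_, _, _, _, Matrix.eta_fin_two _⟩
  have htr := tr_pres S hdet h1 Hh
  have hd := hdet Hh
  have hdE := hdet (Hh + Ee)
  have hdF := hdet (Hh + Ff)
  rw [map_add, hE] at hdE
  rw [map_add, hF] at hdF
  rw [hM] at htr hd hdE hdF
  rw [Matrix.trace_fin_two, Matrix.trace_fin_two] at htr
  rw [Matrix.det_fin_two, Matrix.det_fin_two] at hd hdE hdF
  simp only [Matrix.add_apply] at hdE hdF
  norm_num [Hh, Ee, Ff] at htr hd hdE hdF
  -- htr : a + d = 0, hd : a*d - b*c = -1 (up to normalization)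
  have hc0 : c = 0 := by linear_combination hd - hdE
  have hb0 : b = 0 := by linear_combination hd - hdF
  have hda : d = -a := by linarith
  have hsq : (a - 1) * (a + 1) = 0 := by linear_combination -hd + a * htr - b * hc0
  rcases mul_eq_zero.mp hsq with h | h
  · left
    have haa : a = 1 := by linarith
    have hH : S Hh = Hh := by
      rw [hM, hb0, hc0, hda, haa]; norm_num [Hh]
    intro X
    have := basis_eq S (LinearMap.id (R := ℝ) (M := Mat)) (by simpa using h1)
      (by simpa using hE) (by simpa using hF) (by simpa using hH) X
    simpa using this
  · right
    have haa : a = -1 := by linarith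
    have hH : S Hh = -Hh := by
      rw [hM, hb0, hc0, hda, haa]
      ext i j; fin_cases i <;> fin_cases j <;> simp [Hh]
    have htE : Eeᵀ = Ff := by
      ext i j; rw [Matrix.transpose_apply]; fin_cases i <;> fin_cases j <;> simp [Ee, Ff]
    have htF : Ffᵀ = Ee := by
      ext i j; rw [Matrix.transpose_apply]; fin_cases i <;> fin_cases j <;> simp [Ee, Ff]
    have htH : Hhᵀ = Hh := by
      ext i j; rw [Matrix.transpose_apply]; fin_cases i <;> fin_cases j <;> simp [Hh]
    intro X
    have key := basis_eq S (conjT ww ww) ?_ ?_ ?_ ?_ X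
    · simpa [conjT] using key
    · show S 1 = ww * (1 : Mat)ᵀ * ww
      rw [h1, Matrix.transpose_one]
      ext i j; fin_cases i <;> fin_cases j <;>
        simp [ww, Matrix.mul_apply, Fin.sum_univ_two, Matrix.one_apply]
    · show S Ee = ww * Eeᵀ * ww
      rw [hE, htE]
      ext i j; fin_cases i <;> fin_cases j <;>
        simp [ww, Ee, Ff, Matrix.mul_apply, Fin.sum_univ_two]
    · show S Ff = ww * Ffᵀ * ww
      rw [hF, htF]
      ext i j; fin_cases i <;> fin_cases j <;>
        simp [ww, Ee, Ff, Matrix.mul_apply, Fin.sum_univ_two]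
    · show S Hh = ww * Hhᵀ * ww
      rw [hH, htH]
      ext i j; fin_cases i <;> fin_cases j <;>
        simp [ww, Hh, Matrix.mul_apply, Fin.sum_univ_two]

lemma core (S : Mat →ₗ[ℝ] Mat) (hdet : ∀ X, (S X).det = X.det) (h1 : S 1 = 1) :
    ∃ R R' : Mat, R * R' = 1 ∧ R' * R = 1 ∧
      ((∀ X, S X = R * X * R') ∨ (∀ X, S X = R * Xᵀ * R')) := by
  -- Step 1: normalize the image of Ee
  obtain ⟨P, P', hPP', hP'P, hSE⟩ :
      ∃ P P' : Mat, P * P' = 1 ∧ P' * P = 1 ∧ S Ee = P * Ee * P' := by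
    obtain ⟨a, b, c, d, hN⟩ : ∃ a b c d : ℝ, S Ee = !![a,b;c,d] :=
      ⟨_, _, _, _, Matrix.eta_fin_two _⟩
    have htr := tr_pres S hdet h1 Ee
    have hd := hdet Ee
    rw [hN] at htr hd
    rw [Matrix.trace_fin_two, Matrix.trace_fin_two] at htr
    rw [Matrix.det_fin_two, Matrix.det_fin_two] at hd
    norm_num [Ee] at htr hd
    -- htr : a + d = 0, hd : a * d = b * c
    have hda : d = -a := by linarith
    by_cases hc : c = 0
    · have haz : a = 0 := by
        have : a * a = 0 := by linear_combination -hd + a * htr - b * hc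
        exact mul_self_eq_zero.mp this
      have hdz : d = 0 := by linarith
      have hbz : b ≠ 0 := by
        intro hb0
        have hz : S Ee = 0 := by
          rw [hN, haz, hb0, hc, hdz]
          ext i j; fin_cases i <;> fin_cases j <;> simp
        have h2 := hdet (Ee + Ff)
        rw [map_add, hz, zero_add, hdet Ff] at h2
        rw [Matrix.det_fin_two, Matrix.det_fin_two] at h2
        simp only [Matrix.add_apply] at h2
        norm_num [Ee, Ff] at h2
      refine ⟨!![b,0;0,1], !![b⁻¹,0;0,1], ?_, ?_, ?_⟩
      · ext i j; fin_cases i <;> fin_cases j <;>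
          simp [Matrix.mul_apply, Fin.sum_univ_two, Matrix.one_apply, hbz]
      · ext i j; fin_cases i <;> fin_cases j <;>
          simp [Matrix.mul_apply, Fin.sum_univ_two, Matrix.one_apply, hbz]
      · rw [hN, haz, hc, hdz]
        ext i j; fin_cases i <;> fin_cases j <;>
          simp [Ee, Matrix.mul_apply, Fin.sum_univ_two]
    · have hb : b = -(a*a)/c := by
        field_simp
        linear_combination -hd + a*htr
      refine ⟨!![a,1;c,0], !![0,c⁻¹;1,-(a/c)], ?_, ?_, ?_⟩
      · ext i j; fin_cases i <;> fin_cases j <;>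
          (simp [Matrix.mul_apply, Fin.sum_univ_two, Matrix.one_apply, hc]; try field_simp; try ring)
      · ext i j; fin_cases i <;> fin_cases j <;>
          (simp [Matrix.mul_apply, Fin.sum_univ_two, Matrix.one_apply, hc]; try field_simp)
      · rw [hN, hda, hb]
        ext i j; fin_cases i <;> fin_cases j <;>
          (simp [Ee, Matrix.mul_apply, Fin.sum_univ_two]; try field_simp)
  have hdetP' : P'.det * P.det = 1 := by
    rw [← Matrix.det_mul, hP'P, Matrix.det_one]
  set S₂ : Mat →ₗ[ℝ] Mat := (conjL P' P).comp S with hS₂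
  have hS₂X : ∀ X, S₂ X = P' * S X * P := fun X => rfl
  have hdet2 : ∀ X, (S₂ X).det = X.det := by
    intro X
    rw [hS₂X, Matrix.det_mul, Matrix.det_mul, hdet X]
    linear_combination X.det * hdetP'
  have h1₂ : S₂ 1 = 1 := by rw [hS₂X, h1, Matrix.mul_one, hP'P]
  have hE₂ : S₂ Ee = Ee := by rw [hS₂X, hSE]; exact sandwich hP'P Ee
  -- Step 2: normalize the image of Ff
  obtain ⟨Q, Q', hQQ', hQ'Q, hSF, hQE⟩ :
      ∃ Q Q' : Mat, Q * Q' = 1 ∧ Q' * Q = 1 ∧ S₂ Ff = Q * Ff * Q' ∧ Q' * Ee * Q = Ee := by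
    obtain ⟨x, y, z, u, hN⟩ : ∃ x y z u : ℝ, S₂ Ff = !![x,y;z,u] :=
      ⟨_, _, _, _, Matrix.eta_fin_two _⟩
    have htr := tr_pres S₂ hdet2 h1₂ Ff
    have hd := hdet2 Ff
    have hEF := hdet2 (Ee + Ff)
    rw [map_add, hE₂] at hEF
    rw [hN] at htr hd hEF
    rw [Matrix.trace_fin_two, Matrix.trace_fin_two] at htr
    rw [Matrix.det_fin_two, Matrix.det_fin_two] at hd hEF
    simp only [Matrix.add_apply] at hEF
    norm_num [Ee, Ff] at htr hd hEF
    -- htr : x + u = 0, hd : x * u = y * z, hEF : x * u - (y+1) * z = -1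
    have hz1 : z = 1 := by linear_combination hd - hEF
    have hux : u = -x := by linarith
    have hyx : y = -(x*x) := by linear_combination -hd + x * htr - y * hz1
    refine ⟨!![1,x;0,1], !![1,-x;0,1], ?_, ?_, ?_, ?_⟩
    · ext i j; fin_cases i <;> fin_cases j <;>
        simp [Matrix.mul_apply, Fin.sum_univ_two, Matrix.one_apply]
    · ext i j; fin_cases i <;> fin_cases j <;>
        simp [Matrix.mul_apply, Fin.sum_univ_two, Matrix.one_apply]
    · rw [hN, hz1, hux, hyx]
      ext i j; fin_cases i <;> fin_cases j <;>
        (simp [Ff, Matrix.mul_apply, Fin.sum_univ_two]; try ring)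
    · ext i j; fin_cases i <;> fin_cases j <;>
        simp [Ee, Matrix.mul_apply, Fin.sum_univ_two]
  have hdetQ' : Q'.det * Q.det = 1 := by
    rw [← Matrix.det_mul, hQ'Q, Matrix.det_one]
  set S₃ : Mat →ₗ[ℝ] Mat := (conjL Q' Q).comp S₂ with hS₃
  have hS₃X : ∀ X, S₃ X = Q' * S₂ X * Q := fun X => rfl
  have hdet3 : ∀ X, (S₃ X).det = X.det := by
    intro X
    rw [hS₃X, Matrix.det_mul, Matrix.det_mul, hdet2 X]
    linear_combination X.det * hdetQ'
  have h1₃ : S₃ 1 = 1 := by rw [hS₃X, h1₂, Matrix.mul_one, hQ'Q]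
  have hE₃ : S₃ Ee = Ee := by rw [hS₃X, hE₂, hQE]
  have hF₃ : S₃ Ff = Ff := by rw [hS₃X, hSF]; exact sandwich hQ'Q Ff
  -- recover S from S₃
  have hrec : ∀ X, S X = (P * Q) * S₃ X * (Q' * P') := by
    intro X
    have e2 : S X = P * S₂ X * P' := (sandwich hPP' (S X)).symm
    have e3 : S₂ X = Q * S₃ X * Q' := (sandwich hQQ' (S₂ X)).symm
    rw [e2, e3]
    simp only [Matrix.mul_assoc]
  have hww : ww * ww = 1 := by
    ext i j; fin_cases i <;> fin_cases j <;>
      simp [ww, Matrix.mul_apply, Fin.sum_univ_two, Matrix.one_apply]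
  rcases core2 S₃ hdet3 h1₃ hE₃ hF₃ with hid | htw
  · refine ⟨P * Q, Q' * P', ?_, ?_, Or.inl ?_⟩
    · calc P * Q * (Q' * P') = P * (Q * Q') * P' := by simp only [Matrix.mul_assoc]
        _ = 1 := by rw [hQQ', Matrix.mul_one, hPP']
    · calc Q' * P' * (P * Q) = Q' * (P' * P) * Q := by simp only [Matrix.mul_assoc]
        _ = 1 := by rw [hP'P, Matrix.mul_one, hQ'Q]
    · intro X
      rw [hrec X, hid X]
  · refine ⟨P * Q * ww, ww * (Q' * P'), ?_, ?_, Or.inr ?_⟩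
    · calc P * Q * ww * (ww * (Q' * P')) = P * (Q * ((ww * ww) * (Q' * P'))) := by
            simp only [Matrix.mul_assoc]
        _ = P * (Q * (Q' * P')) := by rw [hww, Matrix.one_mul]
        _ = P * (Q * Q') * P' := by simp only [Matrix.mul_assoc]
        _ = 1 := by rw [hQQ', Matrix.mul_one, hPP']
    · calc ww * (Q' * P') * (P * Q * ww) = ww * (Q' * ((P' * P) * (Q * ww))) := by
            simp only [Matrix.mul_assoc]
        _ = ww * (Q' * (Q * ww)) := by rw [hP'P, Matrix.one_mul]
        _ = ww * ww := by rw [← Matrix.mul_assoc Q' Q ww, hQ'Q, Matrix.one_mul]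
        _ = 1 := hww
    · intro X
      rw [hrec X, htw X]
      simp only [Matrix.mul_assoc]

end DetPresAux

open Matrix DetPresAux in
/-- The structure of the automorphism group of the quadric `AD − BC = 0` (Section 7): every
linear automorphism `T` of `M₂(ℝ)` preserving the determinant is of the form `X ↦ A X B` or
`X ↦ A Xᵀ B` for invertible matrices `A, B` with `det A · det B = 1`. -/
theorem det_preserving_linear_map_structure
    (T : Matrix (Fin 2) (Fin 2) ℝ ≃ₗ[ℝ] Matrix (Fin 2) (Fin 2) ℝ)
    (hdet : ∀ X : Matrix (Fin 2) (Fin 2) ℝ, (T X).det = X.det) :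
    ∃ A B : Matrix (Fin 2) (Fin 2) ℝ, IsUnit A ∧ IsUnit B ∧ A.det * B.det = 1 ∧
      ((∀ X, T X = A * X * B) ∨ (∀ X, T X = A * X.transpose * B)) := by
  classical
  set M : Mat := T 1 with hM
  have hdM : M.det = 1 := by rw [hM, hdet, Matrix.det_one]
  set M' : Mat := M.adjugate with hM'
  have hMM' : M * M' = 1 := by
    rw [hM', Matrix.mul_adjugate, hdM, one_smul]
  have hM'M : M' * M = 1 := by
    rw [hM', Matrix.adjugate_mul, hdM, one_smul]
  have hdM' : M'.det = 1 := by
    have := Matrix.det_mul M M'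
    rw [hMM', Matrix.det_one, hdM, one_mul] at this
    exact this.symm
  set S : Mat →ₗ[ℝ] Mat := (conjL M' 1).comp T.toLinearMap with hS
  have hSX : ∀ X, S X = M' * T X := by
    intro X
    show M' * T X * 1 = M' * T X
    rw [Matrix.mul_one]
  have hdetS : ∀ X, (S X).det = X.det := by
    intro X
    rw [hSX, Matrix.det_mul, hdM', one_mul, hdet]
  have h1S : S 1 = 1 := by rw [hSX, ← hM, hM'M]
  obtain ⟨R, R', hRR', hR'R, hcase⟩ := core S hdetS h1S
  have hTX : ∀ X, T X = M * S X := by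
    intro X
    rw [hSX, ← Matrix.mul_assoc, hMM', Matrix.one_mul]
  have hdetRR' : R.det * R'.det = 1 := by
    rw [← Matrix.det_mul, hRR', Matrix.det_one]
  rcases hcase with hid | htw
  · refine ⟨M * R, R', ?_, ?_, ?_, Or.inl ?_⟩
    · rw [Matrix.isUnit_iff_isUnit_det]
      exact IsUnit.of_mul_eq_one R'.det (by rw [Matrix.det_mul, hdM, one_mul, hdetRR'])
    · rw [Matrix.isUnit_iff_isUnit_det]
      exact IsUnit.of_mul_eq_one R.det (by rw [mul_comm, ← Matrix.det_mul, hRR', Matrix.det_one])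
    · rw [Matrix.det_mul, hdM, one_mul, hdetRR']
    · intro X
      rw [hTX X, hid X]
      simp only [Matrix.mul_assoc]
  · refine ⟨M * R, R', ?_, ?_, ?_, Or.inr ?_⟩
    · rw [Matrix.isUnit_iff_isUnit_det]
      exact IsUnit.of_mul_eq_one R'.det (by rw [Matrix.det_mul, hdM, one_mul, hdetRR'])
    · rw [Matrix.isUnit_iff_isUnit_det]
      exact IsUnit.of_mul_eq_one R.det (by rw [mul_comm, ← Matrix.det_mul, hRR', Matrix.det_one])
    · rw [Matrix.det_mul, hdM, one_mul, hdetRR']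
    · intro X
      rw [hTX X, htw X]
      simp only [Matrix.mul_assoc]
end

section
/- Let S be a strictly spacelike entire graph in 3-dimensional Minkowski space with D(S) ≠ ℝ³ and let X be the frontier of D(S). Suppose X contains two null rays r₁ + ℝ≥₀·v and r₂ + ℝ≥₀·v with the same future-directed null direction v, whose basepoints r₁ ≠ r₂ do not lie on a common line of direction v. Then B(r₁, v) = B(r₂, v), the null plane {x : B(x − r₁, v) = 0} is a supporting plane of D(S) containing both rays, the segment joining r₁ to r₂ is contained in X, and the vector r₂ − r₁ is spacelike. (The geometric core of Proposition 14 on parallel null rays in the boundary of a domain of dependence.) -/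
namespace PNR
noncomputable section

def P2 (x y : ℝ) : EuclideanSpace ℝ (Fin 2) := (WithLp.equiv 2 (Fin 2 → ℝ)).symm ![x, y]

@[simp] lemma P2_0 (x y : ℝ) : P2 x y 0 = x := by simp [P2]
@[simp] lemma P2_1 (x y : ℝ) : P2 x y 1 = y := by simp [P2]

lemma dist_P2 (x y x' y' : ℝ) :
    dist (P2 x y) (P2 x' y') = Real.sqrt ((x-x')^2+(y-y')^2) := by
  rw [EuclideanSpace.dist_eq]
  simp [P2, Fin.sum_univ_two, Real.dist_eq, sq_abs]

def Sg (h : EuclideanSpace ℝ (Fin 2) → ℝ) : Set (Fin 3 → ℝ) :=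
  Set.range fun p : EuclideanSpace ℝ (Fin 2) => ![p 0, p 1, h p]

def Fh (h : EuclideanSpace ℝ (Fin 2) → ℝ) (x : Fin 3 → ℝ) : ℝ :=
  x 2 - h (P2 (x 0) (x 1))

variable {h : EuclideanSpace ℝ (Fin 2) → ℝ}

lemma mem_Sg {x : Fin 3 → ℝ} : x ∈ Sg h ↔ Fh h x = 0 := by
  constructor
  · rintro ⟨p, rfl⟩
    have hp : P2 (p 0) (p 1) = p := by
      ext i; fin_cases i <;> simp [P2]
    simp [Fh, hp]
  · intro hx
    refine ⟨P2 (x 0) (x 1), ?_⟩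
    funext i
    fin_cases i <;> simp [Fh] at hx ⊢
    linarith

lemma sqrt_le_of_sq {A m : ℝ} (hm : 0 ≤ m) (hA : A ≤ m^2) : Real.sqrt A ≤ m := by
  calc Real.sqrt A ≤ Real.sqrt (m^2) := Real.sqrt_le_sqrt hA
  _ = m := Real.sqrt_sq hm

section lip
variable (hl : ∀ p q : EuclideanSpace ℝ (Fin 2), |h p - h q| ≤ dist p q)
include hl

lemma hco (x y x' y' : ℝ) :
    |h (P2 x y) - h (P2 x' y')| ≤ Real.sqrt ((x-x')^2+(y-y')^2) := by
  rw [← dist_P2]; exact hl _ _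

lemma hcont : Continuous h := by
  have : LipschitzWith 1 h := by
    apply LipschitzWith.of_dist_le_mul
    intro p q
    rw [Real.dist_eq]
    simpa using hl p q
  exact this.continuous

/-- Key transfer inequality. -/
lemma Fh_ge (x w : Fin 3 → ℝ) :
    Fh h x + w 2 - Real.sqrt ((w 0)^2 + (w 1)^2) ≤ Fh h (x + w) := by
  have h1 := hco hl (x 0 + w 0) (x 1 + w 1) (x 0) (x 1)
  rw [show x 0 + w 0 - x 0 = w 0 by ring, show x 1 + w 1 - x 1 = w 1 by ring] at h1
  have h2 : Fh h (x + w) = x 2 + w 2 - h (P2 (x 0 + w 0) (x 1 + w 1)) := by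
    simp [Fh]
  have := abs_le.1 h1
  simp only [Fh] at *
  linarith [this.2]

omit hl in
lemma L7 {x : Fin 3 → ℝ} (hx : 0 < Fh h x) : x ∈ IPlus (Sg h) := by
  refine ⟨![x 0, x 1, h (P2 (x 0) (x 1))], ?_, ?_, ?_⟩
  · rw [mem_Sg]; simp [Fh]
  · show mQ _ < 0
    simp only [mQ, mB, Pi.sub_apply]
    simp [Fh] at hx ⊢
    nlinarith
  · show 0 < _
    simp [Fh] at hx ⊢
    linarith

lemma L8 {x : Fin 3 → ℝ} (hx : x ∈ IPlus (Sg h)) : 0 < Fh h x := by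
  obtain ⟨s, hs, hQ, h2⟩ := hx
  rw [mem_Sg] at hs
  simp only [mQ, mB, Pi.sub_apply] at hQ
  simp only [Pi.sub_apply] at h2
  have hd := hco hl (s 0) (s 1) (x 0) (x 1)
  have hlt : Real.sqrt ((s 0 - x 0)^2 + (s 1 - x 1)^2) < x 2 - s 2 := by
    apply (Real.sqrt_lt' (by linarith)).2
    nlinarith
  have := abs_le.1 hd
  simp only [Fh] at hs ⊢
  linarith [this.1]

omit hl in
lemma causal_sqrt {u : Fin 3 → ℝ} (hu : FutureCausal u) :
    Real.sqrt ((u 0)^2 + (u 1)^2) ≤ u 2 := by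
  have h1 : mQ u ≤ 0 := hu.1
  simp only [mQ, mB] at h1
  exact sqrt_le_of_sq (le_of_lt hu.2) (by nlinarith)

lemma gcont (x u : Fin 3 → ℝ) : Continuous fun σ : ℝ => Fh h (x + σ • u) := by
  have heq : (fun σ : ℝ => Fh h (x + σ • u)) =
      fun σ : ℝ => (x 2 + σ * u 2) - h (P2 (x 0 + σ * u 0) (x 1 + σ * u 1)) := by
    funext σ; simp [Fh]
  rw [heq]
  apply Continuous.sub
  · fun_prop
  · apply (hcont hl).comp
    unfold P2
    apply Continuous.comp
    · exact PiLp.continuous_toLp 2 (fun _ : Fin 2 => ℝ)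
    · apply continuous_pi
      intro i
      fin_cases i <;> simp <;> fun_prop

lemma L10 {x u : Fin 3 → ℝ} (hx : Fh h x ≤ 0) {σ₀ : ℝ} (hσ₀ : 0 ≤ σ₀)
    (hF : 0 ≤ Fh h (x + σ₀ • u)) : ∃ σ : ℝ, 0 ≤ σ ∧ x + σ • u ∈ Sg h := by
  set g := fun σ : ℝ => Fh h (x + σ • u) with hg
  have h0 : g 0 = Fh h x := by simp [hg]
  have hmem : (0:ℝ) ∈ Set.Icc (g 0) (g σ₀) := ⟨by rw [h0]; exact hx, hF⟩
  have := intermediate_value_Icc hσ₀ ((gcont hl x u).continuousOn)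
  obtain ⟨σ, hσ, hgσ⟩ := this hmem
  exact ⟨σ, hσ.1, mem_Sg.2 hgσ⟩

lemma L11 {x : Fin 3 → ℝ}
    (hall : ∀ u, FutureCausal u → ∃ σ : ℝ, 0 ≤ σ ∧ 0 ≤ Fh h (x + σ • u)) :
    x ∈ DOD (Sg h) := by
  rcases le_or_gt (Fh h x) 0 with hx | hx
  · refine Or.inr ?_
    intro u hu
    obtain ⟨σ, hσ, hF⟩ := hall u hu
    obtain ⟨σ', hσ', hmem⟩ := L10 hl hx hσ hF
    exact ⟨σ', hσ', hmem⟩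
  · exact Or.inl (Or.inr (L7 hx))

lemma L9 {x u : Fin 3 → ℝ} (hx : x ∈ DOD (Sg h)) (hu : FutureCausal u) :
    ∃ t : ℝ, 0 ≤ t ∧ 0 ≤ Fh h (x + t • u) := by
  rcases hx with (hx | hx) | hx
  · exact ⟨0, le_refl _, by simp [mem_Sg.1 hx]⟩
  · exact ⟨0, le_refl _, by simpa using le_of_lt (L8 hl hx)⟩
  · obtain ⟨t, ht, hm⟩ := hx u hu
    exact ⟨t, ht, le_of_eq (mem_Sg.1 hm).symm⟩

lemma LA {x u : Fin 3 → ℝ} (hx : x ∈ DOD (Sg h)) (hu : FutureCausal u) :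
    x + u ∈ DOD (Sg h) := by
  apply L11 hl
  intro w hw
  obtain ⟨t, ht, hF⟩ := L9 hl hx hw
  refine ⟨t, ht, ?_⟩
  have hle := Fh_ge hl (x + t • w) u
  have hcs := causal_sqrt hu
  have hre : Fh h (x + u + t • w) = Fh h (x + t • w + u) := by
    congr 1; abel
  rw [hre]
  linarith

lemma LB {x u : Fin 3 → ℝ} (hx : x ∈ closure (DOD (Sg h))) (hu : FutureTimelike u) :
    x + u ∈ interior (DOD (Sg h)) := by
  have hopen : IsOpen {w : Fin 3 → ℝ | FutureTimelike w} := by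
    have h1 : IsOpen {w : Fin 3 → ℝ | mQ w < 0} := by
      apply isOpen_lt _ continuous_const
      show Continuous fun w : Fin 3 → ℝ => mQ w
      simp only [mQ, mB]
      fun_prop
    have h2 : IsOpen {w : Fin 3 → ℝ | 0 < w 2} := by
      apply isOpen_lt continuous_const (continuous_apply 2)
    exact h1.inter h2
  obtain ⟨ε, hε, hball⟩ := Metric.isOpen_iff.1 hopen u hu
  obtain ⟨x', hx'mem, hx'⟩ := Metric.mem_closure_iff.1 hx (ε/2) (by linarith)
  have hsub : Metric.ball (x + u) (ε/2) ⊆ DOD (Sg h) := by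
    intro y hy
    have hFT : FutureTimelike (y - x') := by
      apply hball
      rw [Metric.mem_ball, dist_eq_norm]
      have h3 : y - x' - u = (y - (x + u)) + (x - x') := by abel
      rw [h3]
      have h4 : ‖y - (x + u)‖ < ε/2 := by
        rw [← dist_eq_norm]; exact Metric.mem_ball.1 hy
      have h5 : ‖x - x'‖ < ε/2 := by
        rw [← dist_eq_norm]; exact hx'
      calc ‖(y - (x + u)) + (x - x')‖ ≤ ‖y - (x + u)‖ + ‖x - x'‖ := norm_add_le _ _
        _ < ε := by linarith
    have : x' + (y - x') = y := by abel
    rw [← this]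
    exact LA hl hx'mem ⟨le_of_lt hFT.1, hFT.2⟩
  exact mem_interior.2 ⟨Metric.ball (x + u) (ε/2), hsub, Metric.isOpen_ball,
    Metric.mem_ball_self (by linarith)⟩

lemma LC {p x : Fin 3 → ℝ} (hp : p ∈ frontier (DOD (Sg h)))
    (hx : x ∈ closure (DOD (Sg h))) :
    p 2 - x 2 ≤ Real.sqrt ((p 0 - x 0)^2 + (p 1 - x 1)^2) := by
  by_contra hcon
  push_neg at hcon
  have hs : (0:ℝ) ≤ Real.sqrt ((p 0 - x 0)^2 + (p 1 - x 1)^2) := Real.sqrt_nonneg _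
  have hsq := Real.sq_sqrt (show (0:ℝ) ≤ (p 0 - x 0)^2 + (p 1 - x 1)^2 by positivity)
  have hFT : FutureTimelike (p - x) := by
    constructor
    · show mQ _ < 0
      simp only [mQ, mB, Pi.sub_apply]
      nlinarith
    · show 0 < _
      simp only [Pi.sub_apply]
      linarith
  have : x + (p - x) = p := by abel
  have hint : p ∈ interior (DOD (Sg h)) := by
    rw [← this]; exact LB hl hx hFT
  exact hp.2 hint

set_option maxHeartbeats 1000000 in
lemma ray_step {r z u v : Fin 3 → ℝ} (hu : FutureCausal u)
    (hnull : (u 0)^2 + (u 1)^2 = (u 2)^2)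
    (hv2 : 0 < v 2)
    (hrf : r ∈ frontier (DOD (Sg h)))
    (hz2 : (z 2 - r 2) * v 2 = (z 0 - r 0) * v 0 + (z 1 - r 1) * v 1)
    (hge : ((z 0 - r 0) * u 0 + (z 1 - r 1) * u 1) * v 2 ≤
      ((z 0 - r 0) * v 0 + (z 1 - r 1) * v 1) * u 2)
    {η : ℝ} (hη : 0 < η) :
    ∃ σ : ℝ, 0 ≤ σ ∧ 0 ≤ Fh h (z + η • (![0,0,1] : Fin 3 → ℝ) + σ • u) := by
  have hu2 : 0 < u 2 := hu.2
  have hFT : FutureTimelike (![0,0,η/2] : Fin 3 → ℝ) := by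
    constructor
    · show mQ _ < 0
      simp only [mQ, mB]
      norm_num [Matrix.cons_val_two, Matrix.tail_cons, Matrix.head_cons]
      nlinarith
    · show (0:ℝ) < _
      norm_num [Matrix.cons_val_two, Matrix.tail_cons, Matrix.head_cons]
      linarith
  have hrup : r + (![0,0,η/2] : Fin 3 → ℝ) ∈ DOD (Sg h) :=
    interior_subset (LB hl (frontier_subset_closure hrf) hFT)
  obtain ⟨t', ht', hFt⟩ := L9 hl hrup hu
  have hgood : h (P2 (r 0 + t' * u 0) (r 1 + t' * u 1)) ≤ r 2 + η/2 + t' * u 2 := by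
    have hexp : Fh h (r + (![0,0,η/2] : Fin 3 → ℝ) + t' • u) =
        r 2 + η/2 + t' * u 2 - h (P2 (r 0 + t' * u 0) (r 1 + t' * u 1)) := by
      simp only [Fh, Pi.add_apply, Pi.smul_apply, smul_eq_mul, Matrix.cons_val_zero,
        Matrix.cons_val_one, Matrix.head_cons, Matrix.cons_val_two, Matrix.tail_cons,
        mul_zero, add_zero, mul_one, zero_mul, zero_add]
    rw [hexp] at hFt
    linarith
  obtain ⟨e0, he0⟩ : ∃ a : ℝ, a = z 0 - r 0 := ⟨_, rfl⟩
  obtain ⟨e1, he1⟩ : ∃ a : ℝ, a = z 1 - r 1 := ⟨_, rfl⟩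
  rw [← he0, ← he1] at hz2 hge
  obtain ⟨q, hqd⟩ : ∃ a : ℝ, a = (e0 * u 0 + e1 * u 1) / u 2 := ⟨_, rfl⟩
  have hq : q * u 2 = e0 * u 0 + e1 * u 1 := by
    rw [hqd]; exact div_mul_cancel₀ _ (ne_of_gt hu2)
  obtain ⟨s, hsd⟩ : ∃ a : ℝ,
      a = max ((e0^2+e1^2)/(u 2*η)) ((e0^2+e1^2+1)/(2*u 2)) := ⟨_, rfl⟩
  have hs1 : (e0^2+e1^2)/(u 2*η) ≤ s := hsd ▸ le_max_left _ _
  have hs2 : (e0^2+e1^2+1)/(2*u 2) ≤ s := hsd ▸ le_max_right _ _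
  have hs0 : 0 ≤ s := le_trans (by positivity) hs1
  have hkey1 : e0^2+e1^2 ≤ s * (u 2 * η) := by
    rw [div_le_iff₀ (by positivity)] at hs1; linarith
  have hkey2 : e0^2+e1^2+1 ≤ s * (2 * u 2) := by
    rw [div_le_iff₀ (by positivity)] at hs2; linarith
  have hRHS : 0 ≤ s * u 2 + q + η/2 := by
    rcases le_or_gt 0 (e0 * u 0 + e1 * u 1) with hXp | hXn
    · have hq0 : 0 ≤ q := by rw [hqd]; exact div_nonneg hXp (le_of_lt hu2)
      nlinarith [mul_nonneg hs0 (le_of_lt hu2)]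
    · have hC : (e0 * u 0 + e1 * u 1)^2 ≤ (e0^2+e1^2) * (u 2)^2 := by
        nlinarith [sq_nonneg (e0*u 1 - e1*u 0)]
      have hBpos : (0:ℝ) < (e0^2+e1^2+1) * u 2 / 2 := by positivity
      have hsq' : (e0 * u 0 + e1 * u 1)^2 ≤ ((e0^2+e1^2+1) * u 2 / 2)^2 := by
        nlinarith [hC, mul_nonneg (mul_nonneg (sq_nonneg (e0^2+e1^2-1)) (le_of_lt hu2)) (le_of_lt hu2)]
      have habs : -(e0 * u 0 + e1 * u 1) ≤ (e0^2+e1^2+1) * u 2 / 2 := by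
        calc -(e0 * u 0 + e1 * u 1) ≤ |e0 * u 0 + e1 * u 1| := neg_le_abs _
          _ = Real.sqrt ((e0 * u 0 + e1 * u 1)^2) := (Real.sqrt_sq_eq_abs _).symm
          _ ≤ Real.sqrt (((e0^2+e1^2+1) * u 2 / 2)^2) := Real.sqrt_le_sqrt hsq'
          _ = (e0^2+e1^2+1) * u 2 / 2 := Real.sqrt_sq hBpos.le
      have hXb : -(e0 * u 0 + e1 * u 1) ≤ s * (u 2)^2 := by
        nlinarith [habs, mul_le_mul_of_nonneg_right hkey2 (le_of_lt hu2), hu2]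
      nlinarith [hq, hXb, hu2, hη, mul_pos hu2 hη]
  have hsqrt : Real.sqrt ((e0 + s*u 0)^2 + (e1 + s*u 1)^2) ≤ s * u 2 + q + η/2 := by
    apply sqrt_le_of_sq hRHS
    have h1 : s*(q*u 2) = s*(e0*u 0 + e1*u 1) := by rw [hq]
    have h2 : s^2*((u 0)^2+(u 1)^2) = s^2*(u 2)^2 := by rw [hnull]
    nlinarith [h1, h2, hkey1, sq_nonneg (q + η/2), mul_pos hu2 hη]
  refine ⟨t' + s, by linarith, ?_⟩
  have hlipco := hco hl (z 0 + (t'+s) * u 0) (z 1 + (t'+s) * u 1)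
    (r 0 + t' * u 0) (r 1 + t' * u 1)
  rw [show z 0 + (t'+s) * u 0 - (r 0 + t' * u 0) = e0 + s*u 0 by rw [he0]; ring,
      show z 1 + (t'+s) * u 1 - (r 1 + t' * u 1) = e1 + s*u 1 by rw [he1]; ring] at hlipco
  have habs2 := (abs_le.1 hlipco).2
  have hexp2 : Fh h (z + η • (![0,0,1] : Fin 3 → ℝ) + (t'+s) • u) =
      z 2 + η + (t'+s) * u 2 - h (P2 (z 0 + (t'+s) * u 0) (z 1 + (t'+s) * u 1)) := by
    simp only [Fh, Pi.add_apply, Pi.smul_apply, smul_eq_mul, Matrix.cons_val_zero,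
      Matrix.cons_val_one, Matrix.head_cons, Matrix.cons_val_two, Matrix.tail_cons,
      mul_zero, add_zero, mul_one, zero_mul, zero_add]
  rw [hexp2]
  have hzq : q ≤ z 2 - r 2 := by
    have h8 : q * (u 2 * v 2) ≤ (z 2 - r 2) * (u 2 * v 2) := by nlinarith [hge, hz2, hq]
    exact le_of_mul_le_mul_right h8 (by positivity)
  nlinarith [habs2, hsqrt, hgood, hzq, hu2]

end lip
end
end PNR


set_option maxHeartbeats 3000000 in
open PNR in
/-- The geometric core of **Proposition 14**: if the frontier `X` of the domain of dependence
contains two null rays with the same future-directed null direction `v` whose basepoints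
`r₁ ≠ r₂` do not lie on a common line of direction `v`, then `B(r₁,v) = B(r₂,v)`, the null
plane through `r₁` with normal `v` is a supporting plane containing both rays, the segment
from `r₁` to `r₂` lies in `X`, and `r₂ − r₁` is spacelike. -/
theorem parallel_null_rays_in_boundary (S : Set (Fin 3 → ℝ))
    (hS : IsStrictlySpacelikeGraph S) (hne : DOD S ≠ Set.univ)
    (r₁ r₂ v : Fin 3 → ℝ) (hv : FutureNull v) (hr : r₁ ≠ r₂)
    (h₁ : ∀ t : ℝ, 0 ≤ t → r₁ + t • v ∈ frontier (DOD S))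
    (h₂ : ∀ t : ℝ, 0 ≤ t → r₂ + t • v ∈ frontier (DOD S))
    (hline : ¬ ∃ t : ℝ, r₂ = r₁ + t • v) :
    mB r₁ v = mB r₂ v ∧
      SupportingAt (DOD S) r₁ v ∧
      (∀ t : ℝ, 0 ≤ t →
        mB (r₁ + t • v - r₁) v = 0 ∧ mB (r₂ + t • v - r₁) v = 0) ∧
      segment ℝ r₁ r₂ ⊆ frontier (DOD S) ∧
      0 < mQ (r₂ - r₁) := by
  obtain ⟨h, hstrict, rfl⟩ := hS
  have hrw : (Set.range fun p : EuclideanSpace ℝ (Fin 2) => ![p 0, p 1, h p]) = Sg h := rfl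
  rw [hrw] at h₁ h₂ ⊢
  have hl : ∀ p q : EuclideanSpace ℝ (Fin 2), |h p - h q| ≤ dist p q := by
    intro p q
    rcases eq_or_ne p q with rfl | hne'
    · simp
    · exact le_of_lt (hstrict p q hne')
  have hc : 0 < v 2 := hv.2
  have hQv0 : v 0 * v 0 + v 1 * v 1 - v 2 * v 2 = 0 := hv.1
  have hQv : v 0 ^ 2 + v 1 ^ 2 = v 2 ^ 2 := by linear_combination hQv0
  -- squared Lipschitz-type inequality between the two rays
  have key : ∀ τ : ℝ, ((r₂ 2 - r₁ 2) + τ * v 2)^2 ≤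
      ((r₂ 0 - r₁ 0) + τ * v 0)^2 + ((r₂ 1 - r₁ 1) + τ * v 1)^2 := by
    intro τ
    have hs : (0:ℝ) ≤ max 0 (-τ) := le_max_left _ _
    have ht : (0:ℝ) ≤ τ + max 0 (-τ) := by linarith [le_max_right 0 (-τ)]
    obtain ⟨s, hsd⟩ : ∃ a : ℝ, a = max 0 (-τ) := ⟨_, rfl⟩
    rw [← hsd] at hs
    have ht' : (0:ℝ) ≤ τ + s := by rw [hsd]; exact ht
    have hA := LC hl (h₁ s hs) (frontier_subset_closure (h₂ (τ+s) ht'))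
    have hB := LC hl (h₂ (τ+s) ht') (frontier_subset_closure (h₁ s hs))
    simp only [Pi.add_apply, Pi.smul_apply, smul_eq_mul] at hA hB
    rw [show (r₁ 0 + s*v 0 - (r₂ 0 + (τ+s)*v 0))^2 = ((r₂ 0 - r₁ 0) + τ*v 0)^2 by ring,
        show (r₁ 1 + s*v 1 - (r₂ 1 + (τ+s)*v 1))^2 = ((r₂ 1 - r₁ 1) + τ*v 1)^2 by ring] at hA
    rw [show (r₂ 0 + (τ+s)*v 0 - (r₁ 0 + s*v 0))^2 = ((r₂ 0 - r₁ 0) + τ*v 0)^2 by ring,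
        show (r₂ 1 + (τ+s)*v 1 - (r₁ 1 + s*v 1))^2 = ((r₂ 1 - r₁ 1) + τ*v 1)^2 by ring] at hB
    have hE : (0:ℝ) ≤ ((r₂ 0 - r₁ 0) + τ*v 0)^2 + ((r₂ 1 - r₁ 1) + τ*v 1)^2 := by positivity
    have hsq := Real.sq_sqrt hE
    have hA' : -(((r₂ 2 - r₁ 2) + τ*v 2)) ≤
        Real.sqrt (((r₂ 0 - r₁ 0) + τ*v 0)^2 + ((r₂ 1 - r₁ 1) + τ*v 1)^2) := by linarith
    have hB' : ((r₂ 2 - r₁ 2) + τ*v 2) ≤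
        Real.sqrt (((r₂ 0 - r₁ 0) + τ*v 0)^2 + ((r₂ 1 - r₁ 1) + τ*v 1)^2) := by linarith
    nlinarith [mul_nonneg (by linarith : (0:ℝ) ≤
        Real.sqrt (((r₂ 0 - r₁ 0) + τ*v 0)^2 + ((r₂ 1 - r₁ 1) + τ*v 1)^2)
          - ((r₂ 2 - r₁ 2) + τ*v 2))
      (by linarith : (0:ℝ) ≤
        Real.sqrt (((r₂ 0 - r₁ 0) + τ*v 0)^2 + ((r₂ 1 - r₁ 1) + τ*v 1)^2)
          + ((r₂ 2 - r₁ 2) + τ*v 2)), hsq]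
  have hlin : ∀ τ : ℝ, 2*τ*(v 2*(r₂ 2 - r₁ 2) - v 0*(r₂ 0 - r₁ 0) - v 1*(r₂ 1 - r₁ 1)) ≤
      (r₂ 0 - r₁ 0)^2 + (r₂ 1 - r₁ 1)^2 - (r₂ 2 - r₁ 2)^2 := by
    intro τ
    have hQτ : τ^2*(v 0 ^ 2 + v 1 ^ 2) = τ^2*(v 2^2) := by rw [hQv]
    nlinarith [key τ, hQτ]
  have hM : (0:ℝ) ≤ (r₂ 0 - r₁ 0)^2 + (r₂ 1 - r₁ 1)^2 - (r₂ 2 - r₁ 2)^2 := by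
    have := hlin 0; linarith
  have hK : v 0*(r₂ 0 - r₁ 0) + v 1*(r₂ 1 - r₁ 1) - v 2*(r₂ 2 - r₁ 2) = 0 := by
    by_contra hK0
    have hτ := hlin (-((((r₂ 0 - r₁ 0)^2 + (r₂ 1 - r₁ 1)^2 - (r₂ 2 - r₁ 2)^2)+1)/
      (2*(v 0*(r₂ 0 - r₁ 0) + v 1*(r₂ 1 - r₁ 1) - v 2*(r₂ 2 - r₁ 2)))))
    have hcalc : 2*(-((((r₂ 0 - r₁ 0)^2 + (r₂ 1 - r₁ 1)^2 - (r₂ 2 - r₁ 2)^2)+1)/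
        (2*(v 0*(r₂ 0 - r₁ 0) + v 1*(r₂ 1 - r₁ 1) - v 2*(r₂ 2 - r₁ 2)))))*
        (v 2*(r₂ 2 - r₁ 2) - v 0*(r₂ 0 - r₁ 0) - v 1*(r₂ 1 - r₁ 1)) =
        (r₂ 0 - r₁ 0)^2 + (r₂ 1 - r₁ 1)^2 - (r₂ 2 - r₁ 2)^2 + 1 := by
      field_simp
      rw [neg_eq_iff_eq_neg, div_eq_iff (by intro h0; apply hK0; linarith)]
      ring
    rw [hcalc] at hτ
    linarith
  -- conclusion 1
  have con1 : mB r₁ v = mB r₂ v := by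
    simp only [mB]
    linear_combination -hK
  -- conclusion 2 : supporting plane (lower side)
  have hsupp : ∀ x ∈ DOD (Sg h), mB (x - r₁) v ≤ 0 := by
    intro x hx
    simp only [mB, Pi.sub_apply]
    by_contra hpos
    push_neg at hpos
    obtain ⟨T, hTd⟩ : ∃ a : ℝ, a = max ((x 2 - r₁ 2)/v 2) 0 +
      ((x 0 - r₁ 0)^2 + (x 1 - r₁ 1)^2 + 1)/
        (2*((x 0 - r₁ 0)*v 0 + (x 1 - r₁ 1)*v 1 - (x 2 - r₁ 2)*v 2)) := ⟨_, rfl⟩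
    have hsnd : (0:ℝ) ≤ ((x 0 - r₁ 0)^2 + (x 1 - r₁ 1)^2 + 1)/
        (2*((x 0 - r₁ 0)*v 0 + (x 1 - r₁ 1)*v 1 - (x 2 - r₁ 2)*v 2)) :=
      div_nonneg (by positivity) (by linarith)
    have hT0 : 0 ≤ T := by
      rw [hTd]
      have := le_max_right ((x 2 - r₁ 2)/v 2) (0:ℝ)
      linarith
    have hTc : x 2 - r₁ 2 ≤ T * v 2 := by
      have h5 : (x 2 - r₁ 2)/v 2 ≤ T := by
        rw [hTd]; linarith [le_max_left ((x 2 - r₁ 2)/v 2) (0:ℝ)]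
      rw [div_le_iff₀ hc] at h5
      linarith
    have hTK : (x 0 - r₁ 0)^2 + (x 1 - r₁ 1)^2 + 1 ≤
        T * (2*((x 0 - r₁ 0)*v 0 + (x 1 - r₁ 1)*v 1 - (x 2 - r₁ 2)*v 2)) := by
      have h5 : ((x 0 - r₁ 0)^2 + (x 1 - r₁ 1)^2 + 1)/
          (2*((x 0 - r₁ 0)*v 0 + (x 1 - r₁ 1)*v 1 - (x 2 - r₁ 2)*v 2)) ≤ T := by
        rw [hTd]; linarith [le_max_right ((x 2 - r₁ 2)/v 2) (0:ℝ)]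
      rw [div_le_iff₀ (by linarith)] at h5
      linarith
    have hC := LC hl (h₁ T hT0) (subset_closure hx)
    simp only [Pi.add_apply, Pi.smul_apply, smul_eq_mul] at hC
    rw [show (r₁ 0 + T*v 0 - x 0)^2 = (T*v 0 - (x 0 - r₁ 0))^2 by ring,
        show (r₁ 1 + T*v 1 - x 1)^2 = (T*v 1 - (x 1 - r₁ 1))^2 by ring] at hC
    have hE : (0:ℝ) ≤ (T*v 0 - (x 0 - r₁ 0))^2 + (T*v 1 - (x 1 - r₁ 1))^2 := by positivity
    have hsq := Real.sq_sqrt hE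
    have hC' : T*v 2 - (x 2 - r₁ 2) ≤
        Real.sqrt ((T*v 0 - (x 0 - r₁ 0))^2 + (T*v 1 - (x 1 - r₁ 1))^2) := by linarith
    have hL0 : 0 ≤ T*v 2 - (x 2 - r₁ 2) := by linarith
    have hsqrtnn : (0:ℝ) ≤
        Real.sqrt ((T*v 0 - (x 0 - r₁ 0))^2 + (T*v 1 - (x 1 - r₁ 1))^2) := Real.sqrt_nonneg _
    have hsqr : (T*v 2 - (x 2 - r₁ 2))^2 ≤
        (T*v 0 - (x 0 - r₁ 0))^2 + (T*v 1 - (x 1 - r₁ 1))^2 := by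
      nlinarith [mul_nonneg (by linarith : (0:ℝ) ≤
          Real.sqrt ((T*v 0 - (x 0 - r₁ 0))^2 + (T*v 1 - (x 1 - r₁ 1))^2)
            - (T*v 2 - (x 2 - r₁ 2)))
        (by linarith : (0:ℝ) ≤
          Real.sqrt ((T*v 0 - (x 0 - r₁ 0))^2 + (T*v 1 - (x 1 - r₁ 1))^2)
            + (T*v 2 - (x 2 - r₁ 2))), hsq]
    have hQT : T^2*(v 0 ^ 2 + v 1 ^ 2) = T^2*(v 2^2) := by rw [hQv]
    linarith [hsqr, hQT, hTK, sq_nonneg (x 2 - r₁ 2)]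
  have con2 : SupportingAt (DOD (Sg h)) r₁ v := Or.inl hsupp
  -- conclusion 3
  have con3 : ∀ t : ℝ, 0 ≤ t →
      mB (r₁ + t • v - r₁) v = 0 ∧ mB (r₂ + t • v - r₁) v = 0 := by
    intro t _
    constructor
    · simp only [mB, Pi.sub_apply, Pi.add_apply, Pi.smul_apply, smul_eq_mul]
      linear_combination t * hQv0
    · simp only [mB, Pi.sub_apply, Pi.add_apply, Pi.smul_apply, smul_eq_mul]
      linear_combination t * hQv0 + hK
  -- conclusion 5 (spacelike)
  have con5 : 0 < mQ (r₂ - r₁) := by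
    have hMne : (r₂ 0 - r₁ 0)^2 + (r₂ 1 - r₁ 1)^2 - (r₂ 2 - r₁ 2)^2 ≠ 0 := by
      intro hM0
      have hQE : v 0^2 + v 1^2 - v 2^2 = 0 := by linear_combination hQv
      have hlag : (v 0*(r₂ 1 - r₁ 1) - v 1*(r₂ 0 - r₁ 0))^2 = 0 := by
        linear_combination ((r₂ 0 - r₁ 0)^2 + (r₂ 1 - r₁ 1)^2)*hQE -
          (v 0*(r₂ 0 - r₁ 0) + v 1*(r₂ 1 - r₁ 1) + v 2*(r₂ 2 - r₁ 2))*hK + (v 2^2)*hM0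
      have hba : v 0*(r₂ 1 - r₁ 1) - v 1*(r₂ 0 - r₁ 0) = 0 :=
        (pow_eq_zero_iff (by norm_num : (2:ℕ) ≠ 0)).1 hlag
      have hc0 : v 2*(v 2*(r₂ 0 - r₁ 0) - v 0*(r₂ 2 - r₁ 2)) = 0 := by
        linear_combination v 0*hK - v 1*hba - (r₂ 0 - r₁ 0)*hQE
      have hc1 : v 2*(v 2*(r₂ 1 - r₁ 1) - v 1*(r₂ 2 - r₁ 2)) = 0 := by
        linear_combination v 1*hK + v 0*hba - (r₂ 1 - r₁ 1)*hQE
      have hw0e : v 2*(r₂ 0 - r₁ 0) = v 0*(r₂ 2 - r₁ 2) := by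
        rcases mul_eq_zero.1 hc0 with hbad | hgood
        · exact absurd hbad (ne_of_gt hc)
        · linarith
      have hw1e : v 2*(r₂ 1 - r₁ 1) = v 1*(r₂ 2 - r₁ 2) := by
        rcases mul_eq_zero.1 hc1 with hbad | hgood
        · exact absurd hbad (ne_of_gt hc)
        · linarith
      apply hline
      refine ⟨(r₂ 2 - r₁ 2)/v 2, funext fun i => ?_⟩
      have hvne : v 2 ≠ 0 := ne_of_gt hc
      fin_cases i
      · show r₂ 0 = r₁ 0 + (r₂ 2 - r₁ 2)/v 2 * v 0
        field_simp
        linarith [hw0e]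
      · show r₂ 1 = r₁ 1 + (r₂ 2 - r₁ 2)/v 2 * v 1
        field_simp
        linarith [hw1e]
      · show r₂ 2 = r₁ 2 + (r₂ 2 - r₁ 2)/v 2 * v 2
        field_simp
        ring
    have hMpos : 0 < (r₂ 0 - r₁ 0)^2 + (r₂ 1 - r₁ 1)^2 - (r₂ 2 - r₁ 2)^2 :=
      lt_of_le_of_ne hM (Ne.symm hMne)
    simp only [mQ, mB, Pi.sub_apply]
    nlinarith [hMpos]
  -- conclusion 4 : segment in frontier
  have con4 : segment ℝ r₁ r₂ ⊆ frontier (DOD (Sg h)) := by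
    rintro z ⟨α, β, hα, hβ, hαβ, rfl⟩
    have hzc0 : ∀ i : Fin 3, (α • r₁ + β • r₂) i - r₁ i = β * (r₂ i - r₁ i) := by
      intro i
      simp only [Pi.add_apply, Pi.smul_apply, smul_eq_mul]
      linear_combination r₁ i * hαβ
    have hzc2 : ∀ i : Fin 3, (α • r₁ + β • r₂) i - r₂ i = α * (r₁ i - r₂ i) := by
      intro i
      simp only [Pi.add_apply, Pi.smul_apply, smul_eq_mul]
      linear_combination r₂ i * hαβ
    have hr1f : r₁ ∈ frontier (DOD (Sg h)) := by
      have := h₁ 0 le_rfl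
      simpa using this
    have hr2f : r₂ ∈ frontier (DOD (Sg h)) := by
      have := h₂ 0 le_rfl
      simpa using this
    constructor
    · -- closure part
      rw [Metric.mem_closure_iff]
      intro ε hε
      refine ⟨α • r₁ + β • r₂ + (ε/2) • (![0,0,1] : Fin 3 → ℝ), ?_, ?_⟩
      · apply L11 hl
        intro u hu
        have hu2 : 0 < u 2 := hu.2
        have huq : u 0 * u 0 + u 1 * u 1 - u 2 * u 2 ≤ 0 := hu.1
        rcases lt_or_eq_of_le huq with hlt | hnul
        · rcases le_or_gt 0 (Fh h (α • r₁ + β • r₂ + (ε/2) • (![0,0,1] : Fin 3 → ℝ)))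
            with hG | hG
          · exact ⟨0, le_rfl, by simpa using hG⟩
          · have hΔ : Real.sqrt ((u 0)^2 + (u 1)^2) < u 2 :=
              (Real.sqrt_lt' hu2).2 (by nlinarith)
            obtain ⟨σ, hσd⟩ : ∃ a : ℝ, a =
              (-(Fh h (α • r₁ + β • r₂ + (ε/2) • (![0,0,1] : Fin 3 → ℝ))))/
                (u 2 - Real.sqrt ((u 0)^2 + (u 1)^2)) := ⟨_, rfl⟩
            have hσ0 : 0 ≤ σ := by
              rw [hσd]; exact div_nonneg (by linarith) (by linarith)
            refine ⟨σ, hσ0, ?_⟩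
            have hstep := Fh_ge hl
              (α • r₁ + β • r₂ + (ε/2) • (![0,0,1] : Fin 3 → ℝ)) (σ • u)
            simp only [Pi.smul_apply, smul_eq_mul] at hstep
            rw [show (σ * u 0)^2 + (σ * u 1)^2 = σ^2 * ((u 0)^2 + (u 1)^2) by ring,
              Real.sqrt_mul (sq_nonneg σ), Real.sqrt_sq hσ0] at hstep
            have hmul : σ * (u 2 - Real.sqrt ((u 0)^2 + (u 1)^2)) =
                -(Fh h (α • r₁ + β • r₂ + (ε/2) • (![0,0,1] : Fin 3 → ℝ))) := by
              rw [hσd]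
              exact div_mul_cancel₀ _ (ne_of_gt (by linarith))
            linarith [hstep, hmul]
        · have hnull2 : (u 0)^2 + (u 1)^2 = (u 2)^2 := by linear_combination hnul
          rcases le_total (((r₂ 0 - r₁ 0) * u 0 + (r₂ 1 - r₁ 1) * u 1) * v 2)
              (((r₂ 0 - r₁ 0) * v 0 + (r₂ 1 - r₁ 1) * v 1) * u 2) with hD | hD
          · apply ray_step hl hu hnull2 hc hr1f
            · rw [hzc0 2, hzc0 0, hzc0 1]
              linear_combination (-β) * hK
            · rw [hzc0 0, hzc0 1]
              nlinarith [mul_le_mul_of_nonneg_left hD hβ]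
            · linarith
          · apply ray_step hl hu hnull2 hc hr2f
            · rw [hzc2 2, hzc2 0, hzc2 1]
              linear_combination α * hK
            · rw [hzc2 0, hzc2 1]
              nlinarith [mul_le_mul_of_nonneg_left hD hα]
            · linarith
      · apply (dist_pi_lt_iff hε).2
        intro i
        fin_cases i
        · show dist ((α • r₁ + β • r₂) 0)
            ((α • r₁ + β • r₂) 0 + (ε/2) * (![0,0,1] : Fin 3 → ℝ) 0) < ε
          simp only [Matrix.cons_val_zero, mul_zero, add_zero, dist_self]
          linarith
        · show dist ((α • r₁ + β • r₂) 1)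
            ((α • r₁ + β • r₂) 1 + (ε/2) * (![0,0,1] : Fin 3 → ℝ) 1) < ε
          simp only [Matrix.cons_val_one, Matrix.head_cons, Matrix.cons_val_zero, mul_zero, add_zero, dist_self]
          linarith
        · show dist ((α • r₁ + β • r₂) 2)
            ((α • r₁ + β • r₂) 2 + (ε/2) * (![0,0,1] : Fin 3 → ℝ) 2) < ε
          rw [Real.dist_eq,
            show (α • r₁ + β • r₂) 2 -
              ((α • r₁ + β • r₂) 2 + (ε/2) * (![0,0,1] : Fin 3 → ℝ) 2) = -(ε/2) by
                simp only [Matrix.cons_val_two, Matrix.tail_cons, Matrix.head_cons, mul_one]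
                ring,
            abs_neg, abs_of_pos (by linarith)]
          linarith
    · -- not in interior
      intro hint
      obtain ⟨ε, hε, hball⟩ := Metric.mem_nhds_iff.1 (mem_interior_iff_mem_nhds.1 hint)
      obtain ⟨δ, hδd⟩ : ∃ a : ℝ, a = ε/(2*(|v 0|+|v 1|+|v 2|+1)) := ⟨_, rfl⟩
      have hδpos : 0 < δ := by rw [hδd]; positivity
      have h6 : δ*(|v 0|+|v 1|+|v 2|+1) = ε/2 := by
        rw [hδd]; field_simp
      have hmem : α • r₁ + β • r₂ + δ • (![v 0, v 1, -(v 2)] : Fin 3 → ℝ)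
          ∈ Metric.ball (α • r₁ + β • r₂) ε := by
        rw [Metric.mem_ball]
        apply (dist_pi_lt_iff hε).2
        intro i
        have habs0 := abs_nonneg (v 0)
        have habs1 := abs_nonneg (v 1)
        have habs2 := abs_nonneg (v 2)
        fin_cases i
        · show dist ((α • r₁ + β • r₂) 0 + δ * (![v 0, v 1, -(v 2)] : Fin 3 → ℝ) 0)
            ((α • r₁ + β • r₂) 0) < ε
          simp only [Matrix.cons_val_zero]
          rw [Real.dist_eq, show (α • r₁ + β • r₂) 0 + δ * v 0 - (α • r₁ + β • r₂) 0
              = δ * v 0 by ring, abs_mul, abs_of_pos hδpos]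
          nlinarith [mul_le_mul_of_nonneg_left
            (show |v 0| ≤ |v 0|+|v 1|+|v 2|+1 by linarith) (le_of_lt hδpos)]
        · show dist ((α • r₁ + β • r₂) 1 + δ * (![v 0, v 1, -(v 2)] : Fin 3 → ℝ) 1)
            ((α • r₁ + β • r₂) 1) < ε
          simp only [Matrix.cons_val_one, Matrix.head_cons, Matrix.cons_val_zero]
          rw [Real.dist_eq, show (α • r₁ + β • r₂) 1 + δ * v 1 - (α • r₁ + β • r₂) 1
              = δ * v 1 by ring, abs_mul, abs_of_pos hδpos]
          nlinarith [mul_le_mul_of_nonneg_left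
            (show |v 1| ≤ |v 0|+|v 1|+|v 2|+1 by linarith) (le_of_lt hδpos)]
        · show dist ((α • r₁ + β • r₂) 2 + δ * (![v 0, v 1, -(v 2)] : Fin 3 → ℝ) 2)
            ((α • r₁ + β • r₂) 2) < ε
          simp only [Matrix.cons_val_two, Matrix.tail_cons, Matrix.head_cons]
          rw [Real.dist_eq, show (α • r₁ + β • r₂) 2 + δ * (-(v 2)) - (α • r₁ + β • r₂) 2
              = δ * (-(v 2)) by ring, abs_mul, abs_of_pos hδpos, abs_neg]
          nlinarith [mul_le_mul_of_nonneg_left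
            (show |v 2| ≤ |v 0|+|v 1|+|v 2|+1 by linarith) (le_of_lt hδpos)]
      have hDODmem := hball hmem
      have hcomp : mB ((α • r₁ + β • r₂ + δ • (![v 0, v 1, -(v 2)] : Fin 3 → ℝ)) - r₁) v
          = δ*(2*(v 2^2)) := by
        simp only [mB, Pi.sub_apply, Pi.add_apply, Pi.smul_apply, smul_eq_mul,
          Matrix.cons_val_zero, Matrix.cons_val_one, Matrix.head_cons,
          Matrix.cons_val_two, Matrix.tail_cons]
        linear_combination β*hK + (r₁ 0*v 0 + r₁ 1*v 1 - r₁ 2*v 2)*hαβ + δ*hQv0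
      have hcontr := hsupp _ hDODmem
      rw [hcomp] at hcontr
      nlinarith [mul_pos hδpos (mul_pos hc hc)]
  exact ⟨con1, con2, con3, con4, con5⟩
end

section
/- Let S be a strictly spacelike entire graph in 3-dimensional Minkowski space with D(S) ≠ ℝ³ and let X be the frontier of D(S). For r ∈ X let N(r) be the union of {r} with all future-directed null rays based at r that are contained in X, and let F(r) be the convex hull of N(r). If r, s ∈ X are distinct and F(r) ∩ F(s) ≠ ∅, then r and s lie on a single null ray contained in X. (The Claim in the proof of Proposition 13: the faces F(r) of the boundary are pairwise disjoint except along common null rays.) -/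
lemma mB_expand (v w : Fin 3 → ℝ) : mB v w = v 0 * w 0 + v 1 * w 1 - v 2 * w 2 := rfl
lemma mQ_expand (v : Fin 3 → ℝ) : mQ v = v 0 * v 0 + v 1 * v 1 - v 2 * v 2 := rfl

/-- sum of two future timelike vectors is future timelike -/
lemma FutureTimelike.add {u v : Fin 3 → ℝ} (hu : FutureTimelike u) (hv : FutureTimelike v) :
    FutureTimelike (u + v) := by
  obtain ⟨hu1, hu2⟩ := hu; obtain ⟨hv1, hv2⟩ := hv
  rw [mQ_expand] at hu1 hv1
  constructor
  · show mQ (u + v) < 0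
    rw [mQ_expand]
    show (u 0 + v 0) * (u 0 + v 0) + (u 1 + v 1) * (u 1 + v 1) - (u 2 + v 2) * (u 2 + v 2) < 0
    nlinarith [sq_nonneg (u 0 * v 1 - u 1 * v 0), sq_nonneg (u 0 * v 0 + u 1 * v 1),
      mul_pos hu2 hv2, sq_nonneg (u 0 * v 0 + u 1 * v 1 - u 2 * v 2)]
  · show 0 < u 2 + v 2; linarith

lemma FutureTimelike.smul {v : Fin 3 → ℝ} (c : ℝ) (hc : 0 < c) (hv : FutureTimelike v) :
    FutureTimelike (c • v) := by
  obtain ⟨hv1, hv2⟩ := hv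
  rw [mQ_expand] at hv1
  constructor
  · show mQ (c • v) < 0
    rw [mQ_expand]
    show c * v 0 * (c * v 0) + c * v 1 * (c * v 1) - c * v 2 * (c * v 2) < 0
    have := mul_neg_of_pos_of_neg (mul_pos hc hc) hv1
    nlinarith
  · show 0 < c * v 2; positivity

/-- two future null vectors that are mB-orthogonal are positively parallel -/
lemma null_orth_parallel {u v : Fin 3 → ℝ} (hu : FutureNull u) (hv : FutureNull v)
    (hB : mB u v = 0) : ∃ κ : ℝ, 0 < κ ∧ v = κ • u := by
  obtain ⟨hu1, hu2⟩ := hu; obtain ⟨hv1, hv2⟩ := hv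
  rw [mQ_expand] at hu1 hv1
  rw [mB_expand] at hB
  have hcross : (u 0 * v 1 - u 1 * v 0) ^ 2 = 0 := by
    linear_combination (v 0 * v 0 + v 1 * v 1) * hu1 + (u 2 * u 2) * hv1
      - (u 0 * v 0 + u 1 * v 1 + u 2 * v 2) * hB
  have hcross' : u 0 * v 1 - u 1 * v 0 = 0 := by
    have := sq_eq_zero_iff.mp hcross; linarith
  have hu2' : u 2 ≠ 0 := ne_of_gt hu2
  have h0 : u 2 * (v 0 * u 2 - v 2 * u 0) = 0 := by
    linear_combination -(v 0 * hu1) + u 0 * hB - u 1 * hcross'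
  have h1 : u 2 * (v 1 * u 2 - v 2 * u 1) = 0 := by
    linear_combination -(v 1 * hu1) + u 1 * hB + u 0 * hcross'
  have e0 : v 0 * u 2 - v 2 * u 0 = 0 := by
    rcases mul_eq_zero.mp h0 with h | h
    exacts [absurd h hu2', h]
  have e1 : v 1 * u 2 - v 2 * u 1 = 0 := by
    rcases mul_eq_zero.mp h1 with h | h
    exacts [absurd h hu2', h]
  refine ⟨v 2 / u 2, by positivity, ?_⟩
  funext i
  fin_cases i
  · show v 0 = v 2 / u 2 * u 0
    field_simp; linarith
  · show v 1 = v 2 / u 2 * u 1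
    field_simp; linarith
  · show v 2 = v 2 / u 2 * u 2
    field_simp

/-- projection to the horizontal plane -/
def prj (y : Fin 3 → ℝ) : EuclideanSpace ℝ (Fin 2) := WithLp.toLp 2 (fun i => y (Fin.castSucc i))

lemma prj_add_smul (a b : Fin 3 → ℝ) (c : ℝ) : prj (a + c • b) = prj a + c • prj b := by
  ext i; simp [prj]

lemma prj_apply0 (y : Fin 3 → ℝ) : prj y 0 = y 0 := rfl
lemma prj_apply1 (y : Fin 3 → ℝ) : prj y 1 = y 1 := rfl

lemma dist2 (p q : EuclideanSpace ℝ (Fin 2)) :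
    dist p q = Real.sqrt ((p 0 - q 0)^2 + (p 1 - q 1)^2) := by
  rw [EuclideanSpace.dist_eq, Fin.sum_univ_two]
  simp [Real.dist_eq, sq_abs]

lemma sqrt_bound {a b m : ℝ} (hm : 0 ≤ m) (hab : a^2 + b^2 ≤ m^2) :
    Real.sqrt (a^2 + b^2) ≤ m := by
  calc Real.sqrt (a^2 + b^2) ≤ Real.sqrt (m^2) := Real.sqrt_le_sqrt hab
  _ = m := Real.sqrt_sq hm

section graph
variable {S : Set (Fin 3 → ℝ)} {h : EuclideanSpace ℝ (Fin 2) → ℝ}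
  (hlip : ∀ p q : EuclideanSpace ℝ (Fin 2), p ≠ q → |h p - h q| < dist p q)
  (hSg : S = Set.range fun p : EuclideanSpace ℝ (Fin 2) => ![p 0, p 1, h p])

include hlip in
lemma lip' (p q : EuclideanSpace ℝ (Fin 2)) : |h p - h q| ≤ dist p q := by
  rcases eq_or_ne p q with rfl | hne
  · simp
  · exact le_of_lt (hlip p q hne)

include hlip in
lemma hcont_s17 : Continuous h := by
  have : LipschitzWith 1 h := by
    refine LipschitzWith.of_dist_le_mul fun p q => ?_
    rw [Real.dist_eq]
    simpa using lip' hlip p q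
  exact this.continuous

include hSg in
lemma mem_S_iff_s17 (y : Fin 3 → ℝ) : y ∈ S ↔ h (prj y) = y 2 := by
  rw [hSg]
  constructor
  · rintro ⟨p, rfl⟩
    have hp : prj ![p 0, p 1, h p] = p := by
      ext i
      fin_cases i <;> rfl
    rw [hp]
    rfl
  · intro hy
    refine ⟨prj y, ?_⟩
    funext i
    fin_cases i
    · rfl
    · rfl
    · exact hy
end graph

section mono
variable {S : Set (Fin 3 → ℝ)} {h : EuclideanSpace ℝ (Fin 2) → ℝ}
  (hlip : ∀ p q : EuclideanSpace ℝ (Fin 2), p ≠ q → |h p - h q| < dist p q)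
  (hSg : S = Set.range fun p : EuclideanSpace ℝ (Fin 2) => ![p 0, p 1, h p])

include hlip hSg in
lemma DOD_add_timelike {x w : Fin 3 → ℝ} (hx : x ∈ DOD S) (hw : FutureTimelike w) :
    x + w ∈ DOD S := by
  obtain ⟨hw1, hw2⟩ := hw
  have hwq : w 0 * w 0 + w 1 * w 1 - w 2 * w 2 < 0 := hw1
  rcases hx with (hxS | hxI) | hx3
  · -- x ∈ S
    left; right
    exact ⟨x, hxS, by rw [add_sub_cancel_left]; exact ⟨hw1, hw2⟩⟩
  · -- x ∈ IPlus S
    obtain ⟨s0, hs0, hft⟩ := hxI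
    left; right
    refine ⟨s0, hs0, ?_⟩
    have : x + w - s0 = (x - s0) + w := by abel
    rw [this]
    exact FutureTimelike.add hft ⟨hw1, hw2⟩
  · -- x in the third set
    obtain ⟨τ, hτ0, hτS⟩ := hx3 w ⟨le_of_lt hw1, hw2⟩
    by_cases hτ1 : τ < 1
    · -- x + w is in I⁺ of the point x + τ • w ∈ S
      left; right
      refine ⟨x + τ • w, hτS, ?_⟩
      have he : x + w - (x + τ • w) = (1 - τ) • w := by
        funext i
        simp [Pi.smul_apply, smul_eq_mul]
        ring
      rw [he]
      exact FutureTimelike.smul _ (by linarith) ⟨hw1, hw2⟩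
    · -- τ ≥ 1 : show every causal ray from x + w meets S
      push_neg at hτ1
      right
      intro v hv
      obtain ⟨σ, hσ0, hσS⟩ := hx3 v hv
      rw [mem_S_iff_s17 hSg] at hτS hσS
      rw [prj_add_smul] at hτS hσS
      have hτ2 : (x + τ • w) 2 = x 2 + τ * w 2 := rfl
      have hσ2 : (x + σ • v) 2 = x 2 + σ * v 2 := rfl
      rw [hτ2] at hτS
      rw [hσ2] at hσS
      -- horizontal norm of w is < w 2
      have hwn : Real.sqrt ((w 0)^2 + (w 1)^2) ≤ w 2 :=
        sqrt_bound (le_of_lt hw2) (by nlinarith)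
      -- height bound : h (prj (x+w)) ≥ (x+w) 2
      have h0 : x 2 + w 2 ≤ h (prj x + (1:ℝ) • prj w) := by
        have hd : dist (prj x + (1:ℝ) • prj w) (prj x + τ • prj w) ≤ (τ - 1) * w 2 := by
          rw [dist2]
          have e0 : (prj x + (1:ℝ) • prj w) 0 - (prj x + τ • prj w) 0 = (1 - τ) * w 0 := by
            simp [prj_apply0]; try ring
          have e1 : (prj x + (1:ℝ) • prj w) 1 - (prj x + τ • prj w) 1 = (1 - τ) * w 1 := by
            simp [prj_apply1]; try ring
          rw [e0, e1]
          exact sqrt_bound (by nlinarith) (by nlinarith)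
        have hl := lip' hlip (prj x + (1:ℝ) • prj w) (prj x + τ • prj w)
        rw [hτS] at hl
        have habs := abs_le.mp hl
        have := habs.1
        nlinarith
      -- the function along the ray from x + w in direction v
      set P : EuclideanSpace ℝ (Fin 2) := prj x + (1:ℝ) • prj w with hP
      have hcg : Continuous fun t : ℝ => h (P + t • prj v) - ((x 2 + w 2) + t * v 2) := by
        apply Continuous.sub
        · exact (hcont_s17 hlip).comp (continuous_const.add (continuous_id.smul continuous_const))
        · exact continuous_const.add (continuous_id.mul continuous_const)
      set g : ℝ → ℝ := fun t => h (P + t • prj v) - ((x 2 + w 2) + t * v 2) with hg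
      have hg0 : 0 ≤ g 0 := by
        have : P + (0:ℝ) • prj v = P := by simp
        simp only [hg, this]
        try simpa using h0
      have hgσ : g σ ≤ 0 := by
        have hvn : Real.sqrt ((w 0)^2 + (w 1)^2) ≤ w 2 := hwn
        have hd : dist (P + σ • prj v) (prj x + σ • prj v) ≤ w 2 := by
          rw [dist2]
          have e0 : (P + σ • prj v) 0 - (prj x + σ • prj v) 0 = w 0 := by
            simp [hP, prj_apply0]; try ring
          have e1 : (P + σ • prj v) 1 - (prj x + σ • prj v) 1 = w 1 := by
            simp [hP, prj_apply1]; try ring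
          rw [e0, e1]
          exact sqrt_bound (le_of_lt hw2) (by nlinarith)
        have hl := lip' hlip (P + σ • prj v) (prj x + σ • prj v)
        rw [hσS] at hl
        have habs := abs_le.mp hl
        have := habs.2
        simp only [hg]
        nlinarith
      -- IVT
      have hiv : (0:ℝ) ∈ g '' (Set.Icc 0 σ) := by
        apply intermediate_value_Icc' hσ0 hcg.continuousOn
        exact ⟨hgσ, hg0⟩
      obtain ⟨t, ht, hgt⟩ := hiv
      refine ⟨t, ht.1, ?_⟩
      rw [mem_S_iff_s17 hSg]
      have hpr : prj (x + w + t • v) = P + t • prj v := by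
        have : x + w = x + (1:ℝ) • w := by simp
        rw [this, prj_add_smul]
        rw [prj_add_smul]
      rw [hpr]
      have hh2 : (x + w + t • v) 2 = (x 2 + w 2) + t * v 2 := rfl
      rw [hh2]
      have : g t = 0 := hgt
      simp only [hg] at this
      linarith
end mono

lemma mQ_cont : Continuous mQ := by
  have : Continuous fun v : Fin 3 → ℝ => v 0 * v 0 + v 1 * v 1 - v 2 * v 2 := by
    refine Continuous.sub (Continuous.add ?_ ?_) ?_ <;>
      exact Continuous.mul (continuous_apply _) (continuous_apply _)
  exact this

lemma FT_open : IsOpen {v : Fin 3 → ℝ | FutureTimelike v} := by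
  have : {v : Fin 3 → ℝ | FutureTimelike v} =
      {v : Fin 3 → ℝ | mQ v < 0} ∩ {v : Fin 3 → ℝ | 0 < v 2} := rfl
  rw [this]
  exact (isOpen_lt mQ_cont continuous_const).inter
    (isOpen_lt continuous_const (continuous_apply 2))

section achro
variable {S : Set (Fin 3 → ℝ)} {h : EuclideanSpace ℝ (Fin 2) → ℝ}
  (hlip : ∀ p q : EuclideanSpace ℝ (Fin 2), p ≠ q → |h p - h q| < dist p q)
  (hSg : S = Set.range fun p : EuclideanSpace ℝ (Fin 2) => ![p 0, p 1, h p])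

include hlip hSg in
lemma closure_add_timelike {y w : Fin 3 → ℝ} (hy : y ∈ closure (DOD S))
    (hw : FutureTimelike w) : y + w ∈ interior (DOD S) := by
  have hO : IsOpen {q : (Fin 3 → ℝ) × (Fin 3 → ℝ) | FutureTimelike (q.1 - q.2)} :=
    FT_open.preimage (continuous_fst.sub continuous_snd)
  have hmem : (y + w, y) ∈ {q : (Fin 3 → ℝ) × (Fin 3 → ℝ) | FutureTimelike (q.1 - q.2)} := by
    simpa [add_sub_cancel_left] using hw
  have hnh := hO.mem_nhds hmem
  rw [mem_nhds_prod_iff] at hnh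
  obtain ⟨U, hU, Z, hZ, hUZ⟩ := hnh
  obtain ⟨zz, hzZ, hzD⟩ := mem_closure_iff_nhds.mp hy Z hZ
  rw [mem_interior_iff_mem_nhds]
  refine Filter.mem_of_superset hU ?_
  intro u hu
  have : (u, zz) ∈ {q : (Fin 3 → ℝ) × (Fin 3 → ℝ) | FutureTimelike (q.1 - q.2)} :=
    hUZ ⟨hu, hzZ⟩
  have := DOD_add_timelike hlip hSg hzD this
  simpa [add_sub_cancel] using this

include hlip hSg in
lemma frontier_achronal {p q : Fin 3 → ℝ} (hp : p ∈ frontier (DOD S))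
    (hq : q ∈ frontier (DOD S)) : 0 ≤ mQ (p - q) := by
  by_contra hlt
  push_neg at hlt
  have hpq : (p - q) 0 * (p - q) 0 + (p - q) 1 * (p - q) 1 - (p - q) 2 * (p - q) 2 < 0 := hlt
  have hpc : p ∈ closure (DOD S) := frontier_subset_closure hp
  have hqc : q ∈ closure (DOD S) := frontier_subset_closure hq
  have hpi : p ∉ interior (DOD S) := fun hmem => hp.2 hmem
  have hqi : q ∉ interior (DOD S) := fun hmem => hq.2 hmem
  rcases lt_trichotomy ((p - q) 2) 0 with h2 | h2 | h2
  · -- q - p is future timelike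
    have hft : FutureTimelike (q - p) := by
      constructor
      · show mQ (q - p) < 0
        have : mQ (q - p) = mQ (p - q) := by
          rw [mQ_expand, mQ_expand]; simp only [Pi.sub_apply]; ring
        rw [this]; exact hlt
      · show 0 < (q - p) 2
        have : (q - p) 2 = -((p - q) 2) := by simp [Pi.sub_apply]
        rw [this]; linarith
    have := closure_add_timelike hlip hSg hpc hft
    rw [show p + (q - p) = q by abel] at this
    exact hqi this
  · nlinarith [sq_nonneg ((p - q) 0), sq_nonneg ((p - q) 1)]
  · have hft : FutureTimelike (p - q) := ⟨hlt, h2⟩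
    have := closure_add_timelike hlip hSg hqc hft
    rw [show q + (p - q) = p by abel] at this
    exact hpi this
end achro

def mBL (d : Fin 3 → ℝ) : (Fin 3 → ℝ) →ₗ[ℝ] ℝ where
  toFun w := mB d w
  map_add' a b := by simp only [mB_expand, Pi.add_apply]; ring
  map_smul' c a := by simp only [mB_expand, Pi.smul_apply, smul_eq_mul, RingHom.id_apply]; ring

lemma mB_smul_right (d v : Fin 3 → ℝ) (c : ℝ) : mB d (c • v) = c * mB d v := by
  simp only [mB_expand, Pi.smul_apply, smul_eq_mul]; ring

lemma mQ_add_smul (d v : Fin 3 → ℝ) (u : ℝ) :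
    mQ (d + u • v) = mQ d + 2*u*(mB d v) + u^2 * mQ v := by
  simp only [mQ_expand, mB_expand, Pi.add_apply, Pi.smul_apply, smul_eq_mul]; ring

lemma mQ_sub_smul (d v : Fin 3 → ℝ) (u : ℝ) :
    mQ (d - u • v) = mQ d - 2*u*(mB d v) + u^2 * mQ v := by
  simp only [mQ_expand, mB_expand, Pi.sub_apply, Pi.smul_apply, smul_eq_mul]; ring


/-- `N r`: the union of `{r}` with all future-directed null rays based at `r` contained in the
set `X`. -/
def NullStar (X : Set (Fin 3 → ℝ)) (r : Fin 3 → ℝ) : Set (Fin 3 → ℝ) :=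
  {r} ∪ {x | ∃ v : Fin 3 → ℝ, FutureNull v ∧ (∀ s : ℝ, 0 ≤ s → r + s • v ∈ X) ∧
      ∃ t : ℝ, 0 ≤ t ∧ x = r + t • v}

/-- The Claim in the proof of **Proposition 13**: the faces `F(r) = conv N(r)` of the frontier
`X` of a domain of dependence are pairwise disjoint, except that `F(r) ∩ F(s) ≠ ∅` forces `r`
and `s` to lie on a single null ray contained in `X`. -/
theorem faces_disjoint_unless_common_null_ray (S : Set (Fin 3 → ℝ))
    (hS : IsStrictlySpacelikeGraph S) (hne : DOD S ≠ Set.univ)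
    (r s : Fin 3 → ℝ)
    (hr : r ∈ frontier (DOD S)) (hs : s ∈ frontier (DOD S)) (hrs : r ≠ s)
    (hmeet : (convexHull ℝ (NullStar (frontier (DOD S)) r) ∩
        convexHull ℝ (NullStar (frontier (DOD S)) s)).Nonempty) :
    ∃ v : Fin 3 → ℝ, FutureNull v ∧
      ((∃ t : ℝ, 0 ≤ t ∧ s = r + t • v ∧ ∀ u : ℝ, 0 ≤ u → r + u • v ∈ frontier (DOD S)) ∨
       (∃ t : ℝ, 0 ≤ t ∧ r = s + t • v ∧ ∀ u : ℝ, 0 ≤ u → s + u • v ∈ frontier (DOD S))) := by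
  classical
  obtain ⟨h, hlip, hSg⟩ := hS
  have achro : ∀ p ∈ frontier (DOD S), ∀ q ∈ frontier (DOD S), 0 ≤ mQ (p - q) :=
    fun p hp q hq => frontier_achronal hlip hSg hp hq
  obtain ⟨x, hxr, hxs⟩ := hmeet
  set d : Fin 3 → ℝ := r - s with hd
  have hQd : 0 ≤ mQ d := achro r hr s hs
  -- pointwise bounds on NullStar r
  have key_r : ∀ p ∈ NullStar (frontier (DOD S)) r, 0 ≤ mB d (p - r) ∧ 0 ≤ (p - r) 2 := by
    rintro p (rfl | ⟨v, hvn, hray, t, ht0, rfl⟩)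
    · constructor <;> simp [mB_expand]
    · have hBv : 0 ≤ mB d v := by
        by_contra hneg
        push_neg at hneg
        set u : ℝ := (mQ d + 1) / (-(2 * mB d v)) with hu
        have hupos : 0 ≤ u := div_nonneg (by linarith) (by linarith)
        have hach := achro (r + u • v) (hray u hupos) s hs
        have heq : r + u • v - s = d + u • v := by
          funext i; simp [hd, Pi.add_apply, Pi.sub_apply]; ring
        rw [heq, mQ_add_smul, hvn.1] at hach
        have hBne : mB d v ≠ 0 := ne_of_lt hneg
        have hval : 2 * u * mB d v = -(mQ d + 1) := by
          rw [hu]; field_simp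
        nlinarith
      have hsub : r + t • v - r = t • v := add_sub_cancel_left r (t • v)
      constructor
      · rw [hsub, mB_smul_right]; exact mul_nonneg ht0 hBv
      · rw [hsub]
        show 0 ≤ t * v 2
        exact mul_nonneg ht0 (le_of_lt hvn.2)
  -- pointwise bounds on NullStar s
  have key_s : ∀ p ∈ NullStar (frontier (DOD S)) s, mB d (p - s) ≤ 0 ∧ 0 ≤ (p - s) 2 := by
    rintro p (rfl | ⟨w, hwn, hray, t, ht0, rfl⟩)
    · constructor <;> simp [mB_expand]
    · have hBw : mB d w ≤ 0 := by
        by_contra hneg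
        push_neg at hneg
        set u : ℝ := (mQ d + 1) / (2 * mB d w) with hu
        have hupos : 0 ≤ u := div_nonneg (by linarith) (by linarith)
        have hach := achro r hr (s + u • w) (hray u hupos)
        have heq : r - (s + u • w) = d - u • w := by
          funext i; simp [hd, Pi.add_apply, Pi.sub_apply]; ring
        rw [heq, mQ_sub_smul, hwn.1] at hach
        have hBne : mB d w ≠ 0 := ne_of_gt hneg
        have hval : 2 * u * mB d w = mQ d + 1 := by
          rw [hu]; field_simp
        nlinarith
      have hsub : s + t • w - s = t • w := add_sub_cancel_left s (t • w)
      constructor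
      · rw [hsub, mB_smul_right]
        exact mul_nonpos_iff.mpr (Or.inl ⟨ht0, hBw⟩)
      · rw [hsub]
        show 0 ≤ t * w 2
        exact mul_nonneg ht0 (le_of_lt hwn.2)
  -- convex-hull representations
  rw [convexHull_eq] at hxr hxs
  obtain ⟨ι, T, wt, zf, hw0, hw1, hzm, hcm⟩ := hxr
  obtain ⟨ι', T', wt', zf', hw0', hw1', hzm', hcm'⟩ := hxs
  have hxrep : ∑ i ∈ T, wt i • zf i = x := by
    rw [← Finset.centerMass_eq_of_sum_1 T zf hw1]; exact hcm
  have hxrep' : ∑ i ∈ T', wt' i • zf' i = x := by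
    rw [← Finset.centerMass_eq_of_sum_1 T' zf' hw1']; exact hcm'
  have ha : x - r = ∑ i ∈ T, wt i • (zf i - r) := by
    have hcg : ∀ i ∈ T, wt i • (zf i - r) = wt i • zf i - wt i • r :=
      fun i _ => smul_sub _ _ _
    rw [Finset.sum_congr rfl hcg, Finset.sum_sub_distrib, hxrep, ← Finset.sum_smul, hw1,
      one_smul]
  have hb : x - s = ∑ i ∈ T', wt' i • (zf' i - s) := by
    have hcg : ∀ i ∈ T', wt' i • (zf' i - s) = wt' i • zf' i - wt' i • s :=
      fun i _ => smul_sub _ _ _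
    rw [Finset.sum_congr rfl hcg, Finset.sum_sub_distrib, hxrep', ← Finset.sum_smul, hw1',
      one_smul]
  have hBa_eq : mB d (x - r) = ∑ i ∈ T, wt i * mB d (zf i - r) := by
    rw [ha]
    calc mBL d (∑ i ∈ T, wt i • (zf i - r)) = ∑ i ∈ T, mBL d (wt i • (zf i - r)) :=
          map_sum (mBL d) _ T
    _ = ∑ i ∈ T, wt i * mB d (zf i - r) := by
          refine Finset.sum_congr rfl fun i _ => ?_
          rw [map_smul]; rfl
  have hBb_eq : mB d (x - s) = ∑ i ∈ T', wt' i * mB d (zf' i - s) := by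
    rw [hb]
    calc mBL d (∑ i ∈ T', wt' i • (zf' i - s)) = ∑ i ∈ T', mBL d (wt' i • (zf' i - s)) :=
          map_sum (mBL d) _ T'
    _ = ∑ i ∈ T', wt' i * mB d (zf' i - s) := by
          refine Finset.sum_congr rfl fun i _ => ?_
          rw [map_smul]; rfl
  have h2a_eq : (x - r) 2 = ∑ i ∈ T, wt i * (zf i - r) 2 := by
    rw [ha, Finset.sum_apply]
    exact Finset.sum_congr rfl fun i _ => rfl
  have h2b_eq : (x - s) 2 = ∑ i ∈ T', wt' i * (zf' i - s) 2 := by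
    rw [hb, Finset.sum_apply]
    exact Finset.sum_congr rfl fun i _ => rfl
  have hBa : 0 ≤ mB d (x - r) := by
    rw [hBa_eq]
    exact Finset.sum_nonneg fun i hi => mul_nonneg (hw0 i hi) (key_r _ (hzm i hi)).1
  have hBb : mB d (x - s) ≤ 0 := by
    rw [hBb_eq]
    exact Finset.sum_nonpos fun i hi =>
      mul_nonpos_iff.mpr (Or.inl ⟨hw0' i hi, (key_s _ (hzm' i hi)).1⟩)
  have ha2 : 0 ≤ (x - r) 2 := by
    rw [h2a_eq]
    exact Finset.sum_nonneg fun i hi => mul_nonneg (hw0 i hi) (key_r _ (hzm i hi)).2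
  have hb2 : 0 ≤ (x - s) 2 := by
    rw [h2b_eq]
    exact Finset.sum_nonneg fun i hi => mul_nonneg (hw0' i hi) (key_s _ (hzm' i hi)).2
  have hdiff : mB d (x - s) - mB d (x - r) = mQ d := by
    have hsub : (x - s) - (x - r) = d := by
      funext i; simp [hd, Pi.sub_apply]
    calc mB d (x - s) - mB d (x - r) = mBL d (x - s) - mBL d (x - r) := rfl
    _ = mBL d ((x - s) - (x - r)) := (map_sub _ _ _).symm
    _ = mB d d := by rw [hsub]; rfl
    _ = mQ d := rfl
  have hQd0 : mQ d = 0 := le_antisymm (by linarith) hQd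
  have hBa0 : mB d (x - r) = 0 := by linarith
  have hBb0 : mB d (x - s) = 0 := by linarith
  have hd2ne : d 2 ≠ 0 := by
    intro h2
    apply hrs
    have hdq : d 0 * d 0 + d 1 * d 1 - d 2 * d 2 = 0 := hQd0
    have h00 : d 0 = 0 := by nlinarith
    have h11 : d 1 = 0 := by nlinarith
    have hdz : d = 0 := by funext i; fin_cases i; exacts [h00, h11, h2]
    have : r - s = 0 := by rw [← hd]; exact hdz
    exact sub_eq_zero.mp this
  rcases lt_or_gt_of_ne hd2ne with hneg2 | hpos2
  · -- d 2 < 0 : work on the r side, s - r is future null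
    have henull : FutureNull (s - r) := by
      constructor
      · have : mQ (s - r) = mQ d := by
          rw [mQ_expand, mQ_expand]; simp only [hd, Pi.sub_apply]; ring
        rw [this]; exact hQd0
      · show 0 < (s - r) 2
        have : (s - r) 2 = -(d 2) := by
          rw [hd]; show s 2 - r 2 = -(r 2 - s 2); ring
        rw [this]; linarith
    have hxa2 : (x - r) 2 = (x - s) 2 - d 2 := by
      rw [hd]; show x 2 - r 2 = x 2 - s 2 - (r 2 - s 2); ring
    have ha2pos : 0 < (x - r) 2 := by rw [hxa2]; linarith
    have hterms : ∀ i ∈ T, wt i * mB d (zf i - r) = 0 := by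
      have hsum0 : ∑ i ∈ T, wt i * mB d (zf i - r) = 0 := by rw [← hBa_eq]; exact hBa0
      exact fun i hi => (Finset.sum_eq_zero_iff_of_nonneg fun j hj =>
        mul_nonneg (hw0 j hj) (key_r _ (hzm j hj)).1).mp hsum0 i hi
    have hex : ∃ i ∈ T, 0 < wt i * (zf i - r) 2 := by
      by_contra hcon
      push_neg at hcon
      have hle : ∑ i ∈ T, wt i * (zf i - r) 2 ≤ 0 := Finset.sum_nonpos hcon
      rw [← h2a_eq] at hle; linarith
    obtain ⟨i, hiT, hipos⟩ := hex
    rcases hzm i hiT with hzi | ⟨v, hvn, hray, t, ht0, hzi⟩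
    · exfalso
      rw [hzi] at hipos
      simp at hipos
    · have hzv : zf i - r = t • v := by rw [hzi, add_sub_cancel_left]
      obtain ⟨hwti, hz2⟩ : 0 < wt i ∧ 0 < (zf i - r) 2 := by
        rcases mul_pos_iff.mp hipos with hgood | ⟨hbad, _⟩
        · exact hgood
        · exact absurd (hw0 i hiT) (not_le.mpr hbad)
      have htv : (zf i - r) 2 = t * v 2 := by rw [hzv]; rfl
      have htpos : 0 < t := by
        rw [htv] at hz2
        rcases mul_pos_iff.mp hz2 with ⟨hgood, _⟩ | ⟨_, hbad⟩
        · exact hgood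
        · exact absurd hvn.2 (not_lt.mpr (le_of_lt hbad))
      have hBv0 : mB d v = 0 := by
        have h1 := hterms i hiT
        rw [hzv, mB_smul_right] at h1
        have h2 : t * mB d v = 0 := by
          rcases mul_eq_zero.mp h1 with hc | hc
          · exact absurd hc (ne_of_gt hwti)
          · exact hc
        rcases mul_eq_zero.mp h2 with hc | hc
        · exact absurd hc (ne_of_gt htpos)
        · exact hc
      have hBev : mB (s - r) v = 0 := by
        have : mB (s - r) v = -(mB d v) := by
          rw [mB_expand, mB_expand]; simp only [hd, Pi.sub_apply]; ring
        rw [this, hBv0, neg_zero]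
      obtain ⟨κ, hκ, hvκ⟩ := null_orth_parallel henull hvn hBev
      refine ⟨v, hvn, Or.inl ⟨1/κ, by positivity, ?_, hray⟩⟩
      have hsm : (1/κ) • v = s - r := by
        rw [hvκ, smul_smul, one_div, inv_mul_cancel₀ (ne_of_gt hκ), one_smul]
      rw [hsm]; abel
  · -- 0 < d 2 : work on the s side, d is future null
    have hdnull : FutureNull d := ⟨hQd0, hpos2⟩
    have hxb2 : (x - s) 2 = (x - r) 2 + d 2 := by
      rw [hd]; show x 2 - s 2 = x 2 - r 2 + (r 2 - s 2); ring
    have hb2pos : 0 < (x - s) 2 := by rw [hxb2]; linarith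
    have hterms : ∀ i ∈ T', wt' i * mB d (zf' i - s) = 0 := by
      have hsum0 : ∑ i ∈ T', wt' i * mB d (zf' i - s) = 0 := by rw [← hBb_eq]; exact hBb0
      have hnn : ∀ j ∈ T', 0 ≤ wt' j * (-(mB d (zf' j - s))) :=
        fun j hj => mul_nonneg (hw0' j hj) (by linarith [(key_s _ (hzm' j hj)).1])
      intro i hi
      have hsum0' : ∑ i ∈ T', wt' i * (-(mB d (zf' i - s))) = 0 := by
        have he : ∑ i ∈ T', wt' i * (-(mB d (zf' i - s)))
            = -∑ i ∈ T', wt' i * mB d (zf' i - s) := by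
          rw [← Finset.sum_neg_distrib]
          exact Finset.sum_congr rfl fun j _ => by ring
        rw [he, hsum0, neg_zero]
      have hz := (Finset.sum_eq_zero_iff_of_nonneg hnn).mp hsum0' i hi
      linarith [hz]
    have hex : ∃ i ∈ T', 0 < wt' i * (zf' i - s) 2 := by
      by_contra hcon
      push_neg at hcon
      have hle : ∑ i ∈ T', wt' i * (zf' i - s) 2 ≤ 0 := Finset.sum_nonpos hcon
      rw [← h2b_eq] at hle; linarith
    obtain ⟨i, hiT, hipos⟩ := hex
    rcases hzm' i hiT with hzi | ⟨w, hwn, hray, t, ht0, hzi⟩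
    · exfalso
      rw [hzi] at hipos
      simp at hipos
    · have hzv : zf' i - s = t • w := by rw [hzi, add_sub_cancel_left]
      obtain ⟨hwti, hz2⟩ : 0 < wt' i ∧ 0 < (zf' i - s) 2 := by
        rcases mul_pos_iff.mp hipos with hgood | ⟨hbad, _⟩
        · exact hgood
        · exact absurd (hw0' i hiT) (not_le.mpr hbad)
      have htv : (zf' i - s) 2 = t * w 2 := by rw [hzv]; rfl
      have htpos : 0 < t := by
        rw [htv] at hz2
        rcases mul_pos_iff.mp hz2 with ⟨hgood, _⟩ | ⟨_, hbad⟩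
        · exact hgood
        · exact absurd hwn.2 (not_lt.mpr (le_of_lt hbad))
      have hBw0 : mB d w = 0 := by
        have h1 := hterms i hiT
        rw [hzv, mB_smul_right] at h1
        have h2 : t * mB d w = 0 := by
          rcases mul_eq_zero.mp h1 with hc | hc
          · exact absurd hc (ne_of_gt hwti)
          · exact hc
        rcases mul_eq_zero.mp h2 with hc | hc
        · exact absurd hc (ne_of_gt htpos)
        · exact hc
      obtain ⟨κ, hκ, hvκ⟩ := null_orth_parallel hdnull hwn hBw0
      refine ⟨w, hwn, Or.inr ⟨1/κ, by positivity, ?_, hray⟩⟩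
      have hsm : (1/κ) • w = d := by
        rw [hvκ, smul_smul, one_div, inv_mul_cancel₀ (ne_of_gt hκ), one_smul]
      rw [hsm, hd]; abel
end
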